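/- arXiv:2007.00640 — 9 statements merged into one kernel-verified Lean document; each statement's English description precedes it below -/
import Mathlib

section
/- Let W ∈ ℂ^{N×N} be Hermitian positive definite, let b ∈ ℂ^N be a unit vector, let x = W⁻¹b, let μ be the spectral measure of the pair (W,b), and let 1 ≤ k ≤ N. Then the infimum over y in the Krylov subspace K_k of ‖x − y‖_W² equals the infimum over all polynomials q with complex coefficients of degree at most k satisfying q(0) = 1 of ∫ |q(λ)|²/λ dμ(λ), and both infima are attained. -/
open MeasureTheory Matrix Polynomial
open scoped ComplexOrder

noncomputable def qa {k : ℕ} (a : Fin k → ℂ) : Polynomial ℂ :=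
  1 - ∑ i : Fin k, C (a i) * X ^ ((i : ℕ) + 1)

lemma qa_eval {k : ℕ} (a : Fin k → ℂ) (t : ℂ) :
    (qa a).eval t = 1 - ∑ i : Fin k, a i * t ^ ((i : ℕ) + 1) := by
  simp [qa, eval_finset_sum]

lemma qa_natDegree_le {k : ℕ} (a : Fin k → ℂ) : (qa a).natDegree ≤ k := by
  refine le_trans (natDegree_sub_le _ _) (max_le (by simp) ?_)
  refine natDegree_sum_le_of_forall_le _ _ fun i _ => ?_
  exact le_trans (natDegree_C_mul_X_pow_le _ _) i.2

lemma qa_eval_zero {k : ℕ} (a : Fin k → ℂ) : (qa a).eval 0 = 1 := by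
  simp [qa_eval]

lemma qa_repr {k : ℕ} (q : Polynomial ℂ) (hdeg : q.natDegree ≤ k) (h0 : q.eval 0 = 1) :
    q = qa (fun i : Fin k => -q.coeff ((i : ℕ) + 1)) := by
  ext m
  rw [qa]
  simp only [coeff_sub, coeff_one, Polynomial.finset_sum_coeff, coeff_C_mul, coeff_X_pow,
    mul_ite, mul_one, mul_zero]
  rw [Fin.sum_univ_eq_sum_range (fun i => if m = (i + 1 : ℕ) then -q.coeff (i+1) else 0)]
  rcases m with _ | n
  · rw [← coeff_zero_eq_eval_zero] at h0
    simp [h0]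
  · simp only [add_left_inj]
    rw [Finset.sum_ite_eq (Finset.range k) n (fun i => -q.coeff (i+1))]
    by_cases hn : n ∈ Finset.range k
    · simp [hn]
    · simp only [hn, if_false, if_neg (Nat.succ_ne_zero n), zero_sub, neg_zero]
      exact coeff_eq_zero_of_natDegree_lt (by
        simp only [Finset.mem_range, not_lt] at hn
        omega)

/-- For Hermitian positive definite `W`, a unit vector `b` with spectral
measure `μ` of the pair `(W, b)`, and `1 ≤ k ≤ N`, the infimum of `‖x - y‖_W²` over the
Krylov subspace `K_k` equals the infimum of `∫ |q(λ)|²/λ dμ` over polynomials `q` of degree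
at most `k` with `q 0 = 1`, and both infima are attained. -/
theorem stmt_0 (N : ℕ) (hN : 0 < N)
    (W : Matrix (Fin N) (Fin N) ℂ) (hW : W.PosDef)
    (b : Fin N → ℂ) (hb : ∑ j, ‖b j‖ ^ 2 = 1)
    (U : Matrix (Fin N) (Fin N) ℂ) (hU : U ∈ Matrix.unitaryGroup (Fin N) ℂ)
    (lam : Fin N → ℝ)
    (hdec : W = U * Matrix.diagonal (fun j => (lam j : ℂ)) * Uᴴ)
    (μ : Measure ℝ)
    (hμ : μ = ∑ j, ENNReal.ofReal (‖(Uᴴ.mulVec b) j‖ ^ 2) • Measure.dirac (lam j))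
    (x : Fin N → ℂ) (hx : W.mulVec x = b)
    (k : ℕ) (hk : 1 ≤ k) (hkN : k ≤ N) :
    ∃ m : ℝ,
      IsLeast {r : ℝ | ∃ y ∈ Submodule.span ℂ
          (Set.range fun i : Fin k => (W ^ (i : ℕ)).mulVec b),
          r = (star (x - y) ⬝ᵥ W.mulVec (x - y)).re} m ∧
      IsLeast {r : ℝ | ∃ q : Polynomial ℂ, q.natDegree ≤ k ∧ q.eval 0 = 1 ∧
          r = ∫ t, ‖q.eval (t : ℂ)‖ ^ 2 / t ∂μ} m := by
  classical
  have hstar : ∀ z : ℂ, star z * z = ((‖z‖ ^ 2 : ℝ) : ℂ) := by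
    intro z
    rw [Complex.star_def, mul_comm, Complex.mul_conj, Complex.normSq_eq_norm_sq]
  set c : Fin N → ℂ := Uᴴ.mulVec b with hc
  have hU1 : Uᴴ * U = 1 := by
    have := hU.1
    rwa [Matrix.star_eq_conjTranspose] at this
  have hUW : Uᴴ * W = Matrix.diagonal (fun j => (lam j : ℂ)) * Uᴴ := by
    rw [hdec, ← Matrix.mul_assoc, ← Matrix.mul_assoc, hU1, Matrix.one_mul]
  -- positivity of eigenvalues
  have hlam : ∀ j, 0 < lam j := by
    intro j
    set e : Fin N → ℂ := Pi.single j 1 with he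
    set u : Fin N → ℂ := U.mulVec e with hu
    have hune : u ≠ 0 := by
      intro h
      have h2 : Uᴴ.mulVec u = Uᴴ.mulVec 0 := by rw [h]
      rw [hu, Matrix.mulVec_mulVec, hU1, Matrix.one_mulVec, Matrix.mulVec_zero] at h2
      have := congrFun h2 j
      simp [he] at this
    have hDe : (Matrix.diagonal fun j => (lam j : ℂ)).mulVec e = (lam j : ℂ) • e := by
      funext i
      rw [Matrix.mulVec_diagonal]
      rcases eq_or_ne i j with rfl | hij
      · simp [he]
      · simp [he, Pi.single_apply, hij]
    have hWu : W.mulVec u = (lam j : ℂ) • u := by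
      rw [hu, Matrix.mulVec_mulVec, hdec, Matrix.mul_assoc, Matrix.mul_assoc, hU1,
        Matrix.mul_one, ← Matrix.mulVec_mulVec, hDe, Matrix.mulVec_smul]
    have hpos := hW.dotProduct_mulVec_pos hune
    rw [hWu] at hpos
    have hdot : star u ⬝ᵥ ((lam j : ℂ) • u) = ((lam j * ∑ i, ‖u i‖ ^ 2 : ℝ) : ℂ) := by
      rw [dotProduct_smul, dotProduct, smul_eq_mul, Finset.mul_sum]
      push_cast
      rw [Finset.mul_sum]
      refine Finset.sum_congr rfl fun i _ => ?_
      rw [Pi.star_apply, hstar]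
      push_cast
      ring
    rw [hdot] at hpos
    rw [Complex.zero_lt_real] at hpos
    have hsum : 0 ≤ ∑ i, ‖u i‖ ^ 2 := Finset.sum_nonneg fun i _ => sq_nonneg _
    nlinarith
  -- pushforward of powers
  have hWm : ∀ (m : ℕ), Uᴴ * W ^ m = (Matrix.diagonal (fun j => (lam j : ℂ))) ^ m * Uᴴ := by
    intro m
    induction m with
    | zero => simp
    | succ n ih =>
        rw [pow_succ', pow_succ', ← Matrix.mul_assoc, hUW, Matrix.mul_assoc, ih,
          ← Matrix.mul_assoc]
  have hWmb : ∀ (m : ℕ) (j : Fin N),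
      (Uᴴ.mulVec ((W ^ m).mulVec b)) j = (lam j : ℂ) ^ m * c j := by
    intro m j
    rw [Matrix.mulVec_mulVec, hWm m, ← Matrix.mulVec_mulVec, Matrix.diagonal_pow,
      Matrix.mulVec_diagonal, Pi.pow_apply]
  -- the value function
  set RHS : (Fin k → ℂ) → ℝ :=
    fun a => ∑ j, ‖c j‖ ^ 2 * (‖(qa a).eval ((lam j : ℝ) : ℂ)‖ ^ 2 / lam j) with hRHS
  -- L2 : matrix side
  have L2 : ∀ a : Fin k → ℂ,
      (star (x - ∑ i, a i • (W ^ (i : ℕ)).mulVec b) ⬝ᵥ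
        W.mulVec (x - ∑ i, a i • (W ^ (i : ℕ)).mulVec b)).re = RHS a := by
    intro a
    rw [hRHS]
    set y : Fin N → ℂ := ∑ i, a i • (W ^ (i : ℕ)).mulVec b with hy
    set u : Fin N → ℂ := Uᴴ.mulVec (x - y) with hu
    have hyc : ∀ j, (Uᴴ.mulVec y) j = (∑ i : Fin k, a i * (lam j : ℂ) ^ (i : ℕ)) * c j := by
      intro j
      rw [hy]
      have : Uᴴ.mulVec (∑ i, a i • (W ^ (i : ℕ)).mulVec b)
          = ∑ i, a i • Uᴴ.mulVec ((W ^ (i : ℕ)).mulVec b) := by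
        rw [← Matrix.mulVecLin_apply, map_sum]
        simp [Matrix.mulVecLin_apply]
      rw [this]
      rw [Finset.sum_apply, Finset.sum_mul]
      refine Finset.sum_congr rfl fun i _ => ?_
      rw [Pi.smul_apply, hWmb, smul_eq_mul]
      ring
    have hxc : ∀ j, (lam j : ℂ) * (Uᴴ.mulVec x) j = c j := by
      intro j
      have h1 : (Matrix.diagonal (fun j => (lam j : ℂ))).mulVec (Uᴴ.mulVec x) = c := by
        rw [Matrix.mulVec_mulVec, ← hUW, ← Matrix.mulVec_mulVec, hx]
      have := congrFun h1 j
      rwa [Matrix.mulVec_diagonal] at this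
    have huj : ∀ j, (lam j : ℂ) * u j = (qa a).eval ((lam j : ℝ) : ℂ) * c j := by
      intro j
      rw [hu, Matrix.mulVec_sub, Pi.sub_apply, mul_sub, hxc, hyc, qa_eval, sub_mul, one_mul,
        Finset.sum_mul, Finset.mul_sum, Finset.sum_mul]
      congr 1
      refine Finset.sum_congr rfl fun i _ => ?_
      ring
    have hform : star (x - y) ⬝ᵥ W.mulVec (x - y) =
        star u ⬝ᵥ (Matrix.diagonal (fun j => (lam j : ℂ))).mulVec u := by
      conv_lhs => rw [hdec]
      rw [Matrix.mul_assoc, ← Matrix.mulVec_mulVec, ← Matrix.mulVec_mulVec, ← hu,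
        Matrix.dotProduct_mulVec]
      congr 1
      rw [hu, Matrix.star_mulVec, Matrix.conjTranspose_conjTranspose]
    rw [hform]
    rw [dotProduct]
    rw [Complex.re_sum]
    refine Finset.sum_congr rfl fun j _ => ?_
    rw [Matrix.mulVec_diagonal]
    have h1 : (star u j * ((lam j : ℂ) * u j)).re = lam j * ‖u j‖ ^ 2 := by
      rw [show star u j * ((lam j : ℂ) * u j) = (lam j : ℂ) * (star (u j) * u j) by
        rw [Pi.star_apply]; ring]
      rw [hstar]
      norm_cast
    rw [h1]
    have h2 : lam j ^ 2 * ‖u j‖ ^ 2 = ‖(qa a).eval ((lam j : ℝ) : ℂ)‖ ^ 2 * ‖c j‖ ^ 2 := by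
      have := congrArg (fun z : ℂ => ‖z‖ ^ 2) (huj j)
      simpa [norm_mul, mul_pow, Complex.norm_real, abs_of_pos (hlam j)] using this
    rw [eq_comm, ← mul_div_assoc, div_eq_iff (hlam j).ne']
    linear_combination -h2
  -- L3 : integral side
  have L3 : ∀ q : Polynomial ℂ,
      (∫ t, ‖q.eval ((t : ℝ) : ℂ)‖ ^ 2 / t ∂μ) =
        ∑ j, ‖c j‖ ^ 2 * (‖q.eval ((lam j : ℝ) : ℂ)‖ ^ 2 / lam j) := by
    intro q
    set f : ℝ → ℝ := fun t => ‖q.eval ((t : ℝ) : ℂ)‖ ^ 2 / t with hf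
    have hint : ∀ j : Fin N,
        Integrable f (ENNReal.ofReal (‖c j‖ ^ 2) • Measure.dirac (lam j)) := by
      intro j
      refine Integrable.smul_measure ?_ ENNReal.ofReal_ne_top
      exact (integrable_const (f (lam j))).congr (ae_eq_dirac f).symm
    rw [hμ, integral_finset_sum_measure fun j _ => hint j]
    refine Finset.sum_congr rfl fun j _ => ?_
    rw [integral_smul_measure, integral_dirac, ENNReal.toReal_ofReal (by positivity)]
    simp [hf]
  -- Euclidean model and attainment of the minimum
  obtain ⟨m, hm⟩ : ∃ m : ℝ, IsLeast (Set.range RHS) m := by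
    set z : EuclideanSpace ℂ (Fin N) := WithLp.toLp 2 (fun j => c j / ((Real.sqrt (lam j) : ℝ) : ℂ)) with hz
    set v : Fin k → EuclideanSpace ℂ (Fin N) :=
      (fun i => WithLp.toLp 2 fun j => z j * ((lam j : ℝ) : ℂ) ^ ((i : ℕ) + 1)) with hv
    have L1 : ∀ a : Fin k → ℂ, ‖z - ∑ i, a i • v i‖ ^ 2 = RHS a := by
      intro a
      rw [hRHS]
      rw [EuclideanSpace.norm_eq, Real.sq_sqrt (Finset.sum_nonneg fun j _ => sq_nonneg _)]
      refine Finset.sum_congr rfl fun j _ => ?_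
      have hcomp : (z - ∑ i, a i • v i) j = z j * (qa a).eval ((lam j : ℝ) : ℂ) := by
        have h1 : (∑ i, a i • v i) j = ∑ i : Fin k, a i * v i j := by
          rw [WithLp.ofLp_sum, Finset.sum_apply]
          simp
        rw [PiLp.sub_apply, h1, qa_eval, hv]
        simp only [PiLp.toLp_apply]
        rw [mul_sub, mul_one, Finset.mul_sum]
        congr 1
        refine Finset.sum_congr rfl fun i _ => ?_
        ring
      rw [hcomp, norm_mul, mul_pow]
      have hzj : ‖z j‖ ^ 2 = ‖c j‖ ^ 2 / lam j := by
        rw [hz]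
        simp only [PiLp.toLp_apply]
        rw [norm_div, div_pow, Complex.norm_real, Real.norm_eq_abs,
          abs_of_nonneg (Real.sqrt_nonneg _), Real.sq_sqrt (hlam j).le]
      rw [hzj]
      ring
    set K : Submodule ℂ (EuclideanSpace ℂ (Fin N)) := Submodule.span ℂ (Set.range v) with hK
    have hcomplete : IsComplete (K : Set (EuclideanSpace ℂ (Fin N))) := by
      have : CompleteSpace K := FiniteDimensional.complete ℂ K
      exact completeSpace_coe_iff_isComplete.mp this
    obtain ⟨p, hpK, hp⟩ := K.exists_norm_eq_iInf_of_complete_subspace hcomplete z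
    refine ⟨‖z - p‖ ^ 2, ?_, ?_⟩
    · obtain ⟨a, ha⟩ := (Submodule.mem_span_range_iff_exists_fun ℂ).mp hpK
      exact ⟨a, by rw [← L1 a, ha]⟩
    · rintro r ⟨a, rfl⟩
      rw [← L1 a]
      have hyK : (∑ i, a i • v i) ∈ K := (Submodule.mem_span_range_iff_exists_fun ℂ).mpr ⟨a, rfl⟩
      have hle : ‖z - p‖ ≤ ‖z - ∑ i, a i • v i‖ := by
        rw [hp]
        exact ciInf_le ⟨0, by rintro s ⟨w, rfl⟩; exact norm_nonneg _⟩
          (⟨∑ i, a i • v i, hyK⟩ : K)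
      exact pow_le_pow_left₀ (norm_nonneg _) hle 2
  refine ⟨m, ?_, ?_⟩
  · have hset : {r : ℝ | ∃ y ∈ Submodule.span ℂ
          (Set.range fun i : Fin k => (W ^ (i : ℕ)).mulVec b),
          r = (star (x - y) ⬝ᵥ W.mulVec (x - y)).re} = Set.range RHS := by
      ext r
      constructor
      · rintro ⟨y, hy, rfl⟩
        obtain ⟨a, rfl⟩ := Submodule.mem_span_range_iff_exists_fun ℂ |>.mp hy
        exact ⟨a, (L2 a).symm⟩
      · rintro ⟨a, rfl⟩
        exact ⟨∑ i, a i • (W ^ (i : ℕ)).mulVec b,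
          Submodule.mem_span_range_iff_exists_fun ℂ |>.mpr ⟨a, rfl⟩, (L2 a).symm⟩
    rw [hset]; exact hm
  · have hset : {r : ℝ | ∃ q : Polynomial ℂ, q.natDegree ≤ k ∧ q.eval 0 = 1 ∧
          r = ∫ t, ‖q.eval (t : ℂ)‖ ^ 2 / t ∂μ} = Set.range RHS := by
      ext r
      constructor
      · rintro ⟨q, hdeg, h0, rfl⟩
        refine ⟨fun i : Fin k => -q.coeff ((i : ℕ) + 1), ?_⟩
        rw [L3 q, hRHS]
        conv_rhs => rw [qa_repr q hdeg h0]
      · rintro ⟨a, rfl⟩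
        exact ⟨qa a, qa_natDegree_le a, qa_eval_zero a, by rw [L3 (qa a)]⟩
    rw [hset]; exact hm
end

section
/- Let k ≥ 1 and let μ be a finitely supported probability measure on (0,∞) whose support contains at least k+1 points. Let π_k = π_k(·;μ) be the monic orthogonal polynomial of degree k with respect to μ and let c_k(z) = ∫ π_k(λ)/(λ−z) dμ(λ). Then π_k(0) ≠ 0, and among all real polynomials q of degree at most k with q(0) = 1, the quantity ∫ q(λ)²/λ dμ(λ) is minimized uniquely at q = π_k/π_k(0), with minimum value c_k(0)/π_k(0). -/
open MeasureTheory Polynomial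

lemma integrable_dirac_aux (f : ℝ → ℝ) (x : ℝ) : Integrable f (Measure.dirac x) := by
  have h : f =ᵐ[Measure.dirac x] fun _ => f x := by
    rw [MeasureTheory.ae_dirac_eq]
    exact Filter.eventually_pure.2 rfl
  exact (integrable_const (f x)).congr h.symm

lemma integral_finsum (s : Finset ℝ) (w : ℝ → ℝ) (hw : ∀ x ∈ s, 0 ≤ w x) (f : ℝ → ℝ) :
    ∫ t, f t ∂(∑ x ∈ s, ENNReal.ofReal (w x) • Measure.dirac x) = ∑ x ∈ s, w x * f x := by
  rw [MeasureTheory.integral_finset_sum_measure]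
  · refine Finset.sum_congr rfl fun x hx => ?_
    rw [integral_smul_measure, integral_dirac, ENNReal.toReal_ofReal (hw x hx), smul_eq_mul]
  · intro x hx
    exact (integrable_dirac_aux f x).smul_measure ENNReal.ofReal_ne_top

theorem stmt_2 (k : ℕ) (hk : 1 ≤ k)
    (s : Finset ℝ) (hcard : k + 1 ≤ s.card) (hspos : ∀ x ∈ s, 0 < x)
    (w : ℝ → ℝ) (hw : ∀ x ∈ s, 0 < w x) (hsum : ∑ x ∈ s, w x = 1)
    (μ : Measure ℝ) (hμ : μ = ∑ x ∈ s, ENNReal.ofReal (w x) • Measure.dirac x)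
    (π : Polynomial ℝ) (hmonic : π.Monic) (hdeg : π.natDegree = k)
    (horth : ∀ r : Polynomial ℝ, r.degree < (k : ℕ) →
      ∫ t, π.eval t * r.eval t ∂μ = 0) :
    π.eval 0 ≠ 0 ∧
    (∫ t, (π.eval t / π.eval 0) ^ 2 / t ∂μ = (∫ t, π.eval t / t ∂μ) / π.eval 0) ∧
    ∀ q : Polynomial ℝ, q.natDegree ≤ k → q.eval 0 = 1 →
      q ≠ Polynomial.C (π.eval 0)⁻¹ * π →
      (∫ t, π.eval t / t ∂μ) / π.eval 0 < ∫ t, (q.eval t) ^ 2 / t ∂μ := by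
  have hw' : ∀ x ∈ s, (0:ℝ) ≤ w x := fun x hx => (hw x hx).le
  have hint : ∀ f : ℝ → ℝ, ∫ t, f t ∂μ = ∑ x ∈ s, w x * f x := by
    intro f; rw [hμ]; exact integral_finsum s w hw' f
  -- sums version of orthogonality
  have horth' : ∀ r : Polynomial ℝ, r.degree < (k : ℕ) →
      ∑ x ∈ s, w x * (π.eval x * r.eval x) = 0 := by
    intro r hr
    rw [← hint (fun t => π.eval t * r.eval t)]
    exact horth r hr
  -- vanishing on s implies zero
  have hvan : ∀ p : Polynomial ℝ, p.natDegree ≤ k → (∀ x ∈ s, p.eval x = 0) → p = 0 := by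
    intro p hp hev
    exact Polynomial.eq_zero_of_natDegree_lt_card_of_eval_eq_zero' p s hev
      (lt_of_le_of_lt hp (by omega))
  -- degree bound helper: natDegree r ≤ k-1 implies degree r < k
  have hdegr : ∀ r : Polynomial ℝ, r.natDegree < k → r.degree < (k : ℕ) := by
    intro r hr
    rcases eq_or_ne r 0 with rfl | h0
    · simp only [Polynomial.degree_zero]
      exact_mod_cast WithBot.bot_lt_coe k
    · exact (Polynomial.natDegree_lt_iff_degree_lt h0).1 hr
  have hπ0 : π ≠ 0 := hmonic.ne_zero
  -- key fact: π.eval 0 ≠ 0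
  have ha : π.eval 0 ≠ 0 := by
    intro h0
    have hX : Polynomial.X ∣ π := Polynomial.X_dvd_iff.2 (by
      rwa [Polynomial.coeff_zero_eq_eval_zero])
    obtain ⟨r, hr⟩ := hX
    have hrne : r ≠ 0 := by rintro rfl; simp at hr; exact hπ0 hr
    have hrd : r.natDegree < k := by
      have := Polynomial.natDegree_mul (Polynomial.X_ne_zero (R := ℝ)) hrne
      rw [← hr, hdeg, Polynomial.natDegree_X] at this
      omega
    have h1 : ∑ x ∈ s, w x * (π.eval x * r.eval x) = 0 := horth' r (hdegr r hrd)
    have h2 : ∀ x ∈ s, w x * (π.eval x * r.eval x) = w x * (x * r.eval x ^ 2) := by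
      intro x hx; rw [hr]; simp only [Polynomial.eval_mul, Polynomial.eval_X]; ring
    rw [Finset.sum_congr rfl h2] at h1
    have hz : ∀ x ∈ s, r.eval x = 0 := by
      intro x hx
      have hnn : ∀ y ∈ s, 0 ≤ w y * (y * r.eval y ^ 2) := fun y hy =>
        mul_nonneg (hw' y hy) (mul_nonneg (hspos y hy).le (sq_nonneg _))
      have h3 := (Finset.sum_eq_zero_iff_of_nonneg hnn).1 h1 x hx
      have h4 : r.eval x ^ 2 = 0 := by
        rcases mul_eq_zero.1 h3 with h | h
        · exact absurd h (hw x hx).ne'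
        · rcases mul_eq_zero.1 h with h' | h'
          · exact absurd h' (hspos x hx).ne'
          · exact h'
      exact pow_eq_zero_iff (two_ne_zero) |>.1 h4
    exact hrne (hvan r (by omega) hz)
  -- cross term lemma: for d with natDegree ≤ k and d(0)=0, ∑ w x * (π x * d x / x) = 0
  have hcross : ∀ d : Polynomial ℝ, d.natDegree ≤ k → d.eval 0 = 0 →
      ∑ x ∈ s, w x * (π.eval x * d.eval x / x) = 0 := by
    intro d hdk hd0
    have hX : Polynomial.X ∣ d := Polynomial.X_dvd_iff.2 (by
      rwa [Polynomial.coeff_zero_eq_eval_zero])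
    obtain ⟨r, hr⟩ := hX
    have hrd : r.degree < (k : ℕ) := by
      rcases eq_or_ne r 0 with rfl | h0
      · simp only [Polynomial.degree_zero]
        exact_mod_cast WithBot.bot_lt_coe k
      · apply hdegr r
        have := Polynomial.natDegree_mul (Polynomial.X_ne_zero (R := ℝ)) h0
        rw [← hr, Polynomial.natDegree_X] at this
        omega
    have h1 := horth' r hrd
    rw [← h1]
    refine Finset.sum_congr rfl fun x hx => ?_
    have hxne : x ≠ 0 := (hspos x hx).ne'
    rw [hr]
    simp only [Polynomial.eval_mul, Polynomial.eval_X]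
    rw [mul_comm x (r.eval x), mul_div_assoc, mul_div_assoc, div_self hxne, mul_one]
  -- positivity: for q ≠ 0 with natDegree ≤ k, ∑ w x * (q x ^2 / x) > 0
  have hpos : ∀ q : Polynomial ℝ, q.natDegree ≤ k → q ≠ 0 →
      0 < ∑ x ∈ s, w x * (q.eval x ^ 2 / x) := by
    intro q hqk hq0
    apply Finset.sum_pos'
    · intro x hx
      exact mul_nonneg (hw' x hx) (div_nonneg (sq_nonneg _) (hspos x hx).le)
    · by_contra hc
      push_neg at hc
      apply hq0
      apply hvan q hqk
      intro x hx
      have h1 := hc x hx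
      have h2 : 0 ≤ w x * (q.eval x ^ 2 / x) :=
        mul_nonneg (hw' x hx) (div_nonneg (sq_nonneg _) (hspos x hx).le)
      have h3 : w x * (q.eval x ^ 2 / x) = 0 := le_antisymm h1 h2
      have hwx := hw x hx; have hxp := hspos x hx
      rcases mul_eq_zero.1 h3 with h | h
      · exact absurd h hwx.ne'
      · rcases div_eq_zero_iff.1 h with h' | h'
        · exact pow_eq_zero_iff (by norm_num) |>.1 h'
        · exact absurd h' hxp.ne'
  set a := π.eval 0 with ha'
  -- identity: ∑ w x * (π x ^2 / x) = a * ∑ w x * (π x / x)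
  have hid : ∑ x ∈ s, w x * (π.eval x ^ 2 / x) = a * ∑ x ∈ s, w x * (π.eval x / x) := by
    have hd : (π - Polynomial.C a).natDegree ≤ k := by
      apply le_trans (Polynomial.natDegree_sub_le _ _)
      simp [hdeg, Polynomial.natDegree_C]
    have hd0 : (π - Polynomial.C a).eval 0 = 0 := by simp [ha']
    have := hcross (π - Polynomial.C a) hd hd0
    rw [Finset.mul_sum]
    have heq : ∀ x ∈ s, w x * (π.eval x ^ 2 / x) - a * (w x * (π.eval x / x))
        = w x * (π.eval x * (π - Polynomial.C a).eval x / x) := by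
      intro x hx
      have hxne : x ≠ 0 := (hspos x hx).ne'
      simp only [Polynomial.eval_sub, Polynomial.eval_C]
      field_simp
    have : ∑ x ∈ s, (w x * (π.eval x ^ 2 / x) - a * (w x * (π.eval x / x))) = 0 := by
      rw [Finset.sum_congr rfl heq]; exact this
    rw [Finset.sum_sub_distrib] at this
    linarith
  -- minimum value expression
  have hmin : ∫ t, (π.eval t / a) ^ 2 / t ∂μ = (∫ t, π.eval t / t ∂μ) / a := by
    rw [hint (fun t => (π.eval t / a) ^ 2 / t), hint (fun t => π.eval t / t)]
    have hterm : ∀ x ∈ s, w x * ((π.eval x / a) ^ 2 / x)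
        = a⁻¹ * a⁻¹ * (w x * (π.eval x ^ 2 / x)) := fun x _ => by ring
    rw [Finset.sum_congr rfl hterm, ← Finset.mul_sum, hid]
    rw [div_eq_inv_mul]
    calc a⁻¹ * a⁻¹ * (a * ∑ x ∈ s, w x * (π.eval x / x))
        = (a⁻¹ * a) * (a⁻¹ * ∑ x ∈ s, w x * (π.eval x / x)) := by ring
      _ = a⁻¹ * ∑ x ∈ s, w x * (π.eval x / x) := by rw [inv_mul_cancel₀ ha, one_mul]
  refine ⟨ha, hmin, ?_⟩
  intro q hqk hq0 hqne
  rw [hint (fun t => q.eval t ^ 2 / t), ← hmin, hint (fun t => (π.eval t / a) ^ 2 / t)]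
  set d := q - Polynomial.C a⁻¹ * π with hd'
  have hdk : d.natDegree ≤ k := by
    apply le_trans (Polynomial.natDegree_sub_le _ _)
    simp only [max_le_iff]
    exact ⟨hqk, le_trans (Polynomial.natDegree_C_mul_le _ _) (le_of_eq hdeg)⟩
  have hd0 : d.eval 0 = 0 := by
    simp [hd', hq0, ← ha', inv_mul_cancel₀ ha]
  have hdne : d ≠ 0 := fun h => hqne (by rwa [sub_eq_zero] at h)
  have hcr : ∑ x ∈ s, w x * (π.eval x * d.eval x / x) = 0 := hcross d hdk hd0
  have hexp : ∀ x ∈ s, w x * (q.eval x ^ 2 / x)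
      = w x * ((π.eval x / a) ^ 2 / x) + 2 * a⁻¹ * (w x * (π.eval x * d.eval x / x))
        + w x * (d.eval x ^ 2 / x) := by
    intro x hx
    have hxne : x ≠ 0 := (hspos x hx).ne'
    have hq : q.eval x = a⁻¹ * π.eval x + d.eval x := by
      simp only [hd', Polynomial.eval_sub, Polynomial.eval_mul, Polynomial.eval_C]
      ring
    rw [hq]
    ring
  rw [Finset.sum_congr rfl hexp, Finset.sum_add_distrib, Finset.sum_add_distrib,
    ← Finset.mul_sum, hcr, mul_zero, add_zero]
  have := hpos d hdk hdne
  linarith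
end

section
/- Let X ∈ ℂ^{N×M} with N ≤ M and XX* positive definite, and fix a singular value decomposition X = UΣV* with U ∈ ℂ^{N×N}, V ∈ ℂ^{M×M} unitary and Σ = [Σ₀ 0] with Σ₀ = diag(σ_1,…,σ_N), σ_j > 0; set λ_j = σ_j², the eigenvalues of W = XX*. Let b ∈ ℂ^M with Xb ≠ 0, define the measure ν = Σ_{j=1}^N |(V*b)_j|² δ_{λ_j}, and suppose the support of ν contains at least k+2 points. Let x_k be the minimizer of ‖W⁻¹Xb − y‖_W over the Krylov subspace K_k = span{Xb, W(Xb), …, W^{k−1}(Xb)} (the k-th conjugate gradient iterate for the normal equations W x = Xb). Then the error e_k = W⁻¹Xb − x_k satisfies ‖e_k‖_W² = 1/Σ_{j=0}^k p_j(0;ν)², where p_j(·;ν) are the orthonormal polynomials with respect to ν. -/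
set_option maxHeartbeats 1000000


open MeasureTheory Matrix Polynomial
open scoped ComplexOrder

noncomputable section AuxCG



def sform {N : ℕ} (w lam : Fin N → ℝ) (f g : Polynomial ℝ) : ℝ :=
  ∑ n, w n * (f.eval (lam n) * g.eval (lam n))

lemma hite_aux {k : ℕ} (c : ℝ) (i j : Fin (k+1)) :
    c * (if (i:ℕ) = (j:ℕ) then (1:ℝ) else 0) = if i = j then c else 0 := by
  rw [mul_ite, mul_one, mul_zero]
  simp [Fin.val_eq_val]

lemma sform_sum_left {N k : ℕ} (w lam : Fin N → ℝ) (p : ℕ → Polynomial ℝ)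
    (a : Fin (k+1) → ℝ) (r : Polynomial ℝ) :
    sform w lam (∑ j, a j • p (j:ℕ)) r = ∑ j, a j * sform w lam (p (j:ℕ)) r := by
  unfold sform
  simp only [eval_finset_sum, eval_smul, smul_eq_mul]
  rw [show (∑ n, w n * ((∑ x : Fin (k+1), a x * (p (x:ℕ)).eval (lam n)) * r.eval (lam n)))
      = ∑ n, ∑ x : Fin (k+1), a x * (w n * ((p (x:ℕ)).eval (lam n) * r.eval (lam n))) from
    Finset.sum_congr rfl fun n _ => by
      rw [Finset.sum_mul, Finset.mul_sum]
      exact Finset.sum_congr rfl fun x _ => by ring]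
  rw [Finset.sum_comm]
  exact Finset.sum_congr rfl fun x _ => by rw [Finset.mul_sum]

lemma sform_comm {N : ℕ} (w lam : Fin N → ℝ) (f g : Polynomial ℝ) :
    sform w lam f g = sform w lam g f := by
  unfold sform; exact Finset.sum_congr rfl fun n _ => by ring

lemma sform_expand {N k : ℕ} (w lam : Fin N → ℝ) (p : ℕ → Polynomial ℝ)
    (horth : ∀ i ≤ k, ∀ j ≤ k,
      sform w lam (p i) (p j) = if i = j then (1:ℝ) else 0)
    (a : Fin (k+1) → ℝ) :
    sform w lam (∑ j, a j • p (j:ℕ)) (∑ j, a j • p (j:ℕ)) = ∑ j, (a j)^2 := by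
  rw [sform_sum_left]
  calc ∑ j, a j * sform w lam (p (j:ℕ)) (∑ i, a i • p (i:ℕ))
      = ∑ j, a j * ∑ i, a i * sform w lam (p (i:ℕ)) (p (j:ℕ)) := by
        refine Finset.sum_congr rfl fun j _ => ?_
        rw [sform_comm, sform_sum_left]
    _ = ∑ j : Fin (k+1), (a j)^2 := by
        refine Finset.sum_congr rfl fun j _ => ?_
        have h1 : ∀ i : Fin (k+1), a i * sform w lam (p (i:ℕ)) (p (j:ℕ))
            = if i = j then a i else 0 := fun i => by
          rw [horth i (Nat.lt_succ_iff.mp i.isLt) j (Nat.lt_succ_iff.mp j.isLt),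
            hite_aux]
        rw [Finset.sum_congr rfl fun i _ => h1 i, Finset.sum_ite_eq' _ j a]
        simp [pow_two]

lemma span_p {N k : ℕ} (w lam : Fin N → ℝ) (p : ℕ → Polynomial ℝ)
    (hdeg : ∀ j ≤ k, (p j).natDegree = j)
    (horth : ∀ i ≤ k, ∀ j ≤ k,
      sform w lam (p i) (p j) = if i = j then (1:ℝ) else 0)
    (q : Polynomial ℝ) (hq : q.natDegree ≤ k) :
    ∃ a : Fin (k+1) → ℝ, ∑ j, a j • p (j:ℕ) = q := by
  have hmem : ∀ j : Fin (k+1), p (j:ℕ) ∈ degreeLT ℝ (k+1) := by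
    intro j
    rw [mem_degreeLT]
    calc (p (j:ℕ)).degree ≤ ((p (j:ℕ)).natDegree : WithBot ℕ) := degree_le_natDegree
      _ < ((k+1 : ℕ) : WithBot ℕ) := by
          rw [hdeg _ (Nat.lt_succ_iff.mp j.isLt)]
          exact_mod_cast j.isLt
  set v : Fin (k+1) → degreeLT ℝ (k+1) := fun j => ⟨p (j:ℕ), hmem j⟩ with hv
  let T : (Fin (k+1) → ℝ) →ₗ[ℝ] degreeLT ℝ (k+1) :=
    { toFun := fun a => ∑ j, a j • v j
      map_add' := by intro a b; simp [add_smul, Finset.sum_add_distrib]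
      map_smul' := by intro c a; simp [mul_smul, Finset.smul_sum]
    }
  have hTcoe : ∀ a : Fin (k+1) → ℝ, (T a : Polynomial ℝ) = ∑ j, a j • p (j:ℕ) := by
    intro a
    show ((∑ j, a j • v j : degreeLT ℝ (k+1)) : Polynomial ℝ) = _
    rw [Submodule.coe_sum]
    rfl
  have hinj : Function.Injective T := by
    rw [← LinearMap.ker_eq_bot, LinearMap.ker_eq_bot']
    intro a ha
    have h0 : (∑ j, a j • p (j:ℕ)) = 0 := by
      rw [← hTcoe, ha]; rfl
    funext i
    have h2 := sform_sum_left w lam p a (p (i:ℕ))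
    rw [h0] at h2
    have hz : sform w lam 0 (p (i:ℕ)) = 0 := by unfold sform; simp
    rw [hz] at h2
    have h3 : ∑ j : Fin (k+1), a j * sform w lam (p (j:ℕ)) (p (i:ℕ))
        = ∑ j : Fin (k+1), if j = i then a j else 0 :=
      Finset.sum_congr rfl fun j _ => by
        rw [horth _ (Nat.lt_succ_iff.mp j.isLt) _ (Nat.lt_succ_iff.mp i.isLt), hite_aux]
    rw [h3, Finset.sum_ite_eq' _ i a] at h2
    simpa using h2.symm
  have hfd : FiniteDimensional ℝ (degreeLT ℝ (k+1)) :=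
    LinearEquiv.finiteDimensional (Polynomial.degreeLTEquiv ℝ (k+1)).symm
  have hfr : Module.finrank ℝ (Fin (k+1) → ℝ) = Module.finrank ℝ (degreeLT ℝ (k+1)) := by
    rw [(Polynomial.degreeLTEquiv ℝ (k+1)).finrank_eq]
  have hsurj : Function.Surjective T :=
    (LinearMap.injective_iff_surjective_of_finrank_eq_finrank hfr).mp hinj
  have hqmem : q ∈ degreeLT ℝ (k+1) := by
    rw [mem_degreeLT]
    calc q.degree ≤ (q.natDegree : WithBot ℕ) := degree_le_natDegree
      _ < ((k+1:ℕ) : WithBot ℕ) := by exact_mod_cast Nat.lt_succ_of_le hq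
  obtain ⟨a, ha⟩ := hsurj ⟨q, hqmem⟩
  refine ⟨a, ?_⟩
  have := hTcoe a
  rw [ha] at this
  exact this.symm


section
variable {N k : ℕ} (w lam : Fin N → ℝ) (p : ℕ → Polynomial ℝ)
lemma S_pos
    (hdeg : ∀ j ≤ k, (p j).natDegree = j)
    (horth : ∀ i ≤ k, ∀ j ≤ k,
      sform w lam (p i) (p j) = if i = j then (1:ℝ) else 0) :
    0 < ∑ j ∈ Finset.range (k+1), (p j).eval 0 ^ 2 := by
  have h00 : sform w lam (p 0) (p 0) = 1 := by
    have := horth 0 (Nat.zero_le k) 0 (Nat.zero_le k); simpa using this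
  have hne : (p 0).eval 0 ≠ 0 := by
    intro h
    obtain ⟨c, hc⟩ := Polynomial.natDegree_eq_zero.mp (hdeg 0 (Nat.zero_le k))
    have hc0 : c = 0 := by rw [← hc] at h; simpa using h
    rw [hc0] at hc
    simp only [map_zero] at hc
    rw [← hc] at h00
    unfold sform at h00
    simp at h00
  have hpos : 0 < (p 0).eval 0 ^ 2 := by positivity
  calc (0:ℝ) < (p 0).eval 0 ^ 2 := hpos
    _ ≤ ∑ j ∈ Finset.range (k+1), (p j).eval 0 ^ 2 :=
      Finset.single_le_sum (f := fun j => (p j).eval 0 ^ 2)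
        (fun i _ => sq_nonneg _) (Finset.mem_range.mpr (Nat.succ_pos k))

lemma sform_lower
    (hdeg : ∀ j ≤ k, (p j).natDegree = j)
    (horth : ∀ i ≤ k, ∀ j ≤ k,
      sform w lam (p i) (p j) = if i = j then (1:ℝ) else 0)
    (q : Polynomial ℝ) (hqd : q.natDegree ≤ k) (hq0 : q.eval 0 = 1) :
    1 / (∑ j ∈ Finset.range (k+1), (p j).eval 0 ^ 2) ≤ sform w lam q q := by
  obtain ⟨a, ha⟩ := span_p w lam p hdeg horth q hqd
  set S := ∑ j ∈ Finset.range (k+1), (p j).eval 0 ^ 2 with hS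
  have hSpos := S_pos w lam p hdeg horth
  have hSfin : S = ∑ j : Fin (k+1), (p (j:ℕ)).eval 0 ^ 2 := by
    rw [hS, Finset.sum_range fun j => (p j).eval 0 ^ 2]
  have hqq : sform w lam q q = ∑ j : Fin (k+1), (a j)^2 := by
    rw [← ha]; exact sform_expand w lam p horth a
  have heval : (1:ℝ) = ∑ j : Fin (k+1), a j * (p (j:ℕ)).eval 0 := by
    rw [← hq0, ← ha]
    simp [eval_finset_sum]
  have cs := Finset.sum_mul_sq_le_sq_mul_sq Finset.univ a (fun j : Fin (k+1) => (p (j:ℕ)).eval 0)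
  rw [← heval] at cs
  rw [div_le_iff₀ hSpos, hqq]
  calc (1:ℝ) = 1^2 := (one_pow 2).symm
    _ ≤ (∑ j : Fin (k+1), (a j)^2) * ∑ j : Fin (k+1), (p (j:ℕ)).eval 0 ^ 2 := cs
    _ = (∑ j : Fin (k+1), (a j)^2) * S := by rw [hSfin]

lemma sform_opt
    (hdeg : ∀ j ≤ k, (p j).natDegree = j)
    (horth : ∀ i ≤ k, ∀ j ≤ k,
      sform w lam (p i) (p j) = if i = j then (1:ℝ) else 0) :
    ∃ q : Polynomial ℝ, q.natDegree ≤ k ∧ q.eval 0 = 1 ∧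
      sform w lam q q = 1 / (∑ j ∈ Finset.range (k+1), (p j).eval 0 ^ 2) := by
  set S := ∑ j ∈ Finset.range (k+1), (p j).eval 0 ^ 2 with hS
  have hSpos := S_pos w lam p hdeg horth
  have hSfin : S = ∑ j : Fin (k+1), (p (j:ℕ)).eval 0 ^ 2 := by
    rw [hS, Finset.sum_range fun j => (p j).eval 0 ^ 2]
  set a : Fin (k+1) → ℝ := fun j => (p (j:ℕ)).eval 0 / S with haa
  refine ⟨∑ j, a j • p (j:ℕ), ?_, ?_, ?_⟩
  · refine Polynomial.natDegree_sum_le_of_forall_le _ _ fun j _ => ?_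
    calc (a j • p (j:ℕ)).natDegree ≤ (p (j:ℕ)).natDegree := natDegree_smul_le _ _
      _ ≤ k := by rw [hdeg _ (Nat.lt_succ_iff.mp j.isLt)]; exact Nat.lt_succ_iff.mp j.isLt
  · simp only [eval_finset_sum, eval_smul, smul_eq_mul, haa]
    rw [show ∑ j : Fin (k+1), (p (j:ℕ)).eval 0 / S * (p (j:ℕ)).eval 0
        = (∑ j : Fin (k+1), (p (j:ℕ)).eval 0 ^ 2) / S from by
      rw [Finset.sum_div]; exact Finset.sum_congr rfl fun j _ => by ring]
    rw [← hSfin, div_self (ne_of_gt hSpos)]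
  · rw [sform_expand w lam p horth a]
    rw [show ∑ j : Fin (k+1), (a j)^2 = (∑ j : Fin (k+1), (p (j:ℕ)).eval 0 ^ 2) / S^2 from by
      rw [Finset.sum_div]; exact Finset.sum_congr rfl fun j _ => by rw [haa]; ring]
    rw [← hSfin]
    field_simp


end
lemma matrix_main {N M k : ℕ} (hNM : N ≤ M)
    (X : Matrix (Fin N) (Fin M) ℂ)
    (U : Matrix (Fin N) (Fin N) ℂ) (hU : U ∈ Matrix.unitaryGroup (Fin N) ℂ)
    (V : Matrix (Fin M) (Fin M) ℂ) (hV : V ∈ Matrix.unitaryGroup (Fin M) ℂ)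
    (σ : Fin N → ℝ) (hσ : ∀ j, 0 < σ j)
    (Sig : Matrix (Fin N) (Fin M) ℂ)
    (hSig : ∀ (i : Fin N) (j : Fin M),
      Sig i j = if (j : ℕ) = (i : ℕ) then (σ i : ℂ) else 0)
    (hsvd : X = U * Sig * Vᴴ)
    (b : Fin M → ℂ)
    (x : Fin N → ℂ)
    (hx : (X * Xᴴ).mulVec x = X.mulVec b)
    (c : Fin k → ℂ) :
    (star (x - ∑ i, c i • ((X * Xᴴ) ^ (i : ℕ)).mulVec (X.mulVec b)) ⬝ᵥ
      (X * Xᴴ).mulVec (x - ∑ i, c i • ((X * Xᴴ) ^ (i : ℕ)).mulVec (X.mulVec b))).re =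
    ∑ j : Fin N, ‖(Vᴴ.mulVec b) (Fin.castLE hNM j)‖ ^ 2 *
      ‖1 - ((σ j : ℂ))^2 * ∑ i : Fin k, c i * (((σ j : ℂ))^2)^(i:ℕ)‖ ^ 2 := by
  classical
  set β : Fin N → ℂ := fun j => (Vᴴ.mulVec b) (Fin.castLE hNM j) with hβ
  set D : Matrix (Fin N) (Fin N) ℂ := Matrix.diagonal (fun j => ((σ j : ℂ))^2) with hD
  have hσne : ∀ j, ((σ j : ℂ)) ≠ 0 := fun j => by
    exact_mod_cast Complex.ofReal_ne_zero.mpr (ne_of_gt (hσ j))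
  have hUU : Uᴴ * U = 1 := by
    have := hU.1; rwa [Matrix.star_eq_conjTranspose] at this
  have hUU' : U * Uᴴ = 1 := by
    have := hU.2; rwa [Matrix.star_eq_conjTranspose] at this
  have hVV : Vᴴ * V = 1 := by
    have := hV.1; rwa [Matrix.star_eq_conjTranspose] at this
  -- Sig entries
  have hSig' : ∀ (i : Fin N) (j : Fin M),
      Sig i j = if j = Fin.castLE hNM i then (σ i : ℂ) else 0 := by
    intro i j
    rw [hSig]
    refine if_congr ?_ rfl rfl
    constructor
    · intro h; exact Fin.ext (by simpa using h)
    · intro h; rw [h]; simp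
  -- Sig * Sigᴴ = D
  have hSS : Sig * Sigᴴ = D := by
    ext i i'
    rw [Matrix.mul_apply]
    by_cases h : i = i'
    · subst h
      have : ∀ j, Sig i j * (Sigᴴ) j i
          = if j = Fin.castLE hNM i then ((σ i : ℂ))^2 else 0 := by
        intro j
        rw [Matrix.conjTranspose_apply, hSig' i j]
        by_cases hj : j = Fin.castLE hNM i
        · simp [hj, pow_two, Complex.conj_ofReal]
        · simp [hj]
      rw [Finset.sum_congr rfl fun j _ => this j, Finset.sum_ite_eq' _ (Fin.castLE hNM i)]
      simp [hD]
    · have : ∀ j, Sig i j * (Sigᴴ) j i' = 0 := by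
        intro j
        rw [Matrix.conjTranspose_apply, hSig' i j, hSig' i' j]
        by_cases hj : j = Fin.castLE hNM i
        · rw [if_pos hj, if_neg (show j ≠ Fin.castLE hNM i' from fun hh =>
            h (Fin.castLE_injective hNM (hj ▸ hh))), star_zero, mul_zero]
        · simp [hj]
      rw [Finset.sum_congr rfl fun j _ => this j]
      simp [hD, Matrix.diagonal_apply_ne _ h]
  -- W = U D Uᴴ
  have hXH : Xᴴ = V * (Sigᴴ * Uᴴ) := by
    rw [hsvd]
    simp only [Matrix.conjTranspose_mul, Matrix.conjTranspose_conjTranspose, Matrix.mul_assoc]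
  have hW : X * Xᴴ = U * D * Uᴴ := by
    rw [hXH, hsvd]
    calc U * Sig * Vᴴ * (V * (Sigᴴ * Uᴴ))
        = U * (Sig * ((Vᴴ * V) * (Sigᴴ * Uᴴ))) := by simp only [Matrix.mul_assoc]
      _ = U * D * Uᴴ := by rw [hVV, Matrix.one_mul, ← hSS]; simp only [Matrix.mul_assoc]
  have hWpow : ∀ n : ℕ, (X * Xᴴ) ^ n = U * D ^ n * Uᴴ := by
    intro n
    induction n with
    | zero => simp [hUU']
    | succ n ih =>
        rw [pow_succ, ih, hW, pow_succ]
        calc U * D ^ n * Uᴴ * (U * D * Uᴴ)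
            = U * D ^ n * ((Uᴴ * U) * (D * Uᴴ)) := by simp only [Matrix.mul_assoc]
          _ = U * (D ^ n * D) * Uᴴ := by rw [hUU, Matrix.one_mul]; simp only [Matrix.mul_assoc]
  -- X b = U *ᵥ g, g j = σ j * β j
  set g : Fin N → ℂ := fun j => (σ j : ℂ) * β j with hg
  have hSigV : Sig.mulVec (Vᴴ.mulVec b) = g := by
    funext i
    show Sig i ⬝ᵥ (Vᴴ.mulVec b) = g i
    rw [dotProduct]
    have h5 : ∀ j, Sig i j * (Vᴴ.mulVec b) j
        = if j = Fin.castLE hNM i then (σ i : ℂ) * (Vᴴ.mulVec b) j else 0 := by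
      intro j; rw [hSig' i j]; by_cases hj : j = Fin.castLE hNM i <;> simp [hj]
    rw [Finset.sum_congr rfl fun j _ => h5 j, Finset.sum_ite_eq' _ (Fin.castLE hNM i)]
    simp [hg, hβ]
  have hXb : X.mulVec b = U.mulVec g := by
    rw [hsvd, ← Matrix.mulVec_mulVec, ← Matrix.mulVec_mulVec, hSigV]
  -- Uᴴ x
  have hDx : D.mulVec (Uᴴ.mulVec x) = g := by
    have h1 : Uᴴ.mulVec ((X * Xᴴ).mulVec x) = Uᴴ.mulVec (X.mulVec b) := by rw [hx]
    rw [hXb, Matrix.mulVec_mulVec, Matrix.mulVec_mulVec, hW] at h1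
    calc D.mulVec (Uᴴ.mulVec x) = (D * Uᴴ).mulVec x := by rw [← Matrix.mulVec_mulVec]
      _ = (Uᴴ * (U * D * Uᴴ)).mulVec x := by
          rw [show Uᴴ * (U * D * Uᴴ) = (Uᴴ * U) * (D * Uᴴ) by simp only [Matrix.mul_assoc],
            hUU, Matrix.one_mul]
      _ = g := by rw [h1, hUU, Matrix.one_mulVec]
  have hUx : ∀ j, (Uᴴ.mulVec x) j = β j / (σ j : ℂ) := by
    intro j
    have h1 : ((σ j : ℂ))^2 * (Uᴴ.mulVec x) j = (σ j : ℂ) * β j := by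
      have := congrFun hDx j
      rwa [hD, Matrix.mulVec_diagonal] at this
    field_simp at h1 ⊢
    rw [eq_div_iff (hσne j)]
    have h2 : (σ j : ℂ) * ((σ j : ℂ) * (Uᴴ.mulVec x) j) = (σ j : ℂ) * β j := by
      rw [← h1]; ring
    have := mul_left_cancel₀ (hσne j) h2
    linear_combination this
  -- Uᴴ y
  set y : Fin N → ℂ := ∑ i, c i • ((X * Xᴴ) ^ (i : ℕ)).mulVec (X.mulVec b) with hy
  have hUy : ∀ j, (Uᴴ.mulVec y) j
      = (σ j : ℂ) * β j * ∑ i : Fin k, c i * (((σ j : ℂ))^2)^(i:ℕ) := by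
    intro j
    have hterm : ∀ i : Fin k, Uᴴ.mulVec (((X * Xᴴ) ^ (i:ℕ)).mulVec (X.mulVec b))
        = (D ^ (i:ℕ)).mulVec g := by
      intro i
      rw [hXb, hWpow, Matrix.mulVec_mulVec, Matrix.mulVec_mulVec]
      have h6 : Uᴴ * (U * D ^ (i:ℕ) * Uᴴ) * U = D ^ (i:ℕ) := by
        calc Uᴴ * (U * D ^ (i:ℕ) * Uᴴ) * U
            = (Uᴴ * U) * (D ^ (i:ℕ) * (Uᴴ * U)) := by simp only [Matrix.mul_assoc]
          _ = D ^ (i:ℕ) := by rw [hUU, Matrix.one_mul, Matrix.mul_one]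
      rw [h6]
    have hlin : Uᴴ.mulVec y = ∑ i : Fin k, c i • (D ^ (i:ℕ)).mulVec g := by
      rw [hy]
      rw [show Uᴴ.mulVec (∑ i : Fin k, c i • ((X * Xᴴ) ^ (i:ℕ)).mulVec (X.mulVec b))
          = Uᴴ.mulVecLin (∑ i : Fin k, c i • ((X * Xᴴ) ^ (i:ℕ)).mulVec (X.mulVec b)) from rfl]
      rw [map_sum]
      refine Finset.sum_congr rfl fun i _ => ?_
      rw [_root_.map_smul, Matrix.mulVecLin_apply, hterm]
    rw [hlin]
    rw [Finset.sum_apply]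
    rw [Finset.mul_sum]
    refine Finset.sum_congr rfl fun i _ => ?_
    rw [Pi.smul_apply, hD, Matrix.diagonal_pow, Matrix.mulVec_diagonal]
    simp [hg]
    ring
  -- z
  have hz : ∀ j, (Uᴴ.mulVec (x - y)) j
      = β j / (σ j : ℂ) * (1 - ((σ j : ℂ))^2 * ∑ i : Fin k, c i * (((σ j : ℂ))^2)^(i:ℕ)) := by
    intro j
    have : Uᴴ.mulVec (x - y) = Uᴴ.mulVec x - Uᴴ.mulVec y := Matrix.mulVec_sub _ _ _
    rw [this, Pi.sub_apply, hUx, hUy]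
    field_simp [hσne j]
  -- quadratic form identity
  have hform : star (x - y) ⬝ᵥ (X * Xᴴ).mulVec (x - y)
      = star (Uᴴ.mulVec (x - y)) ⬝ᵥ D.mulVec (Uᴴ.mulVec (x - y)) := by
    rw [hW]
    rw [Matrix.star_mulVec, Matrix.conjTranspose_conjTranspose]
    rw [Matrix.dotProduct_mulVec, Matrix.dotProduct_mulVec, Matrix.dotProduct_mulVec,
      Matrix.vecMul_vecMul, Matrix.vecMul_vecMul, Matrix.mul_assoc]
  rw [hform]
  -- compute
  rw [dotProduct]
  rw [Complex.re_sum]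
  refine Finset.sum_congr rfl fun j _ => ?_
  rw [hD, Matrix.mulVec_diagonal, Pi.star_apply, hz j]
  set E : ℂ := 1 - ((σ j : ℂ))^2 * ∑ i : Fin k, c i * (((σ j : ℂ))^2)^(i:ℕ) with hE
  rw [show (star (β j / (σ j:ℂ) * E)) * (((σ j:ℂ))^2 * (β j / (σ j:ℂ) * E))
      = ((σ j:ℂ))^2 * ((star (β j / (σ j:ℂ) * E)) * (β j / (σ j:ℂ) * E)) from by ring]
  rw [show (star (β j / (σ j:ℂ) * E)) * (β j / (σ j:ℂ) * E)
      = ((Complex.normSq (β j / (σ j:ℂ) * E) : ℝ) : ℂ) from by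
    rw [Complex.normSq_eq_conj_mul_self]; rfl]
  rw [show (((σ j:ℂ))^2 : ℂ) = (((σ j ^ 2 : ℝ)) : ℂ) from by push_cast; ring]
  rw [← Complex.ofReal_mul, Complex.ofReal_re]
  rw [Complex.normSq_eq_norm_sq]
  rw [norm_mul, norm_div, Complex.norm_real]
  rw [mul_pow, div_pow]
  have hσj : ‖σ j‖ = σ j := Real.norm_of_nonneg (le_of_lt (hσ j))
  rw [hσj]
  have hne : σ j ≠ 0 := ne_of_gt (hσ j)
  field_simp
  try ring

lemma integral_eq_sum {N : ℕ} (w lam : Fin N → ℝ) (hw : ∀ j, 0 ≤ w j)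
    (ν : Measure ℝ)
    (hν : ν = ∑ j : Fin N, ENNReal.ofReal (w j) • Measure.dirac (lam j))
    (f g : Polynomial ℝ) :
    ∫ t, f.eval t * g.eval t ∂ν = ∑ j, w j * (f.eval (lam j) * g.eval (lam j)) := by
  have hcont : Continuous fun t : ℝ => f.eval t * g.eval t :=
    f.continuous.mul g.continuous
  rw [hν]
  rw [MeasureTheory.integral_finset_sum_measure (by
    intro j _
    refine Integrable.smul_measure ⟨hcont.aestronglyMeasurable, ?_⟩ ENNReal.ofReal_ne_top
    show (∫⁻ t, ‖f.eval t * g.eval t‖₊ ∂(Measure.dirac (lam j))) < ⊤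
    rw [MeasureTheory.lintegral_dirac]
    exact ENNReal.coe_lt_top)]
  refine Finset.sum_congr rfl fun j _ => ?_
  rw [MeasureTheory.integral_smul_measure, MeasureTheory.integral_dirac,
    ENNReal.toReal_ofReal (hw j), smul_eq_mul]

lemma eval_bridge {k : ℕ} (q : Polynomial ℝ) (hqd : q.natDegree ≤ k)
    (hq0 : q.coeff 0 = 1) (t : ℝ) :
    ((q.eval t : ℝ) : ℂ)
      = 1 - (t:ℂ) * ∑ i : Fin k, ((-(q.coeff ((i:ℕ)+1)) : ℝ) : ℂ) * ((t:ℂ))^(i:ℕ) := by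
  have he : q.eval t = ∑ i ∈ Finset.range (k+1), q.coeff i * t^i :=
    eval_eq_sum_range' (Nat.lt_succ_of_le hqd) t
  rw [he, Finset.sum_range_succ', hq0]
  rw [Fin.sum_univ_eq_sum_range (fun i => ((-(q.coeff (i+1)) : ℝ) : ℂ) * ((t:ℂ))^i) k]
  rw [Finset.mul_sum]
  rw [show ∑ i ∈ Finset.range k, (t:ℂ) * (((-(q.coeff (i+1)) : ℝ) : ℂ) * ((t:ℂ))^i)
      = ∑ i ∈ Finset.range k, -(((q.coeff (i+1) * t^(i+1) : ℝ)) : ℂ) from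
    Finset.sum_congr rfl fun i _ => by push_cast; ring]
  rw [Finset.sum_neg_distrib]
  push_cast
  ring

lemma qc_re_bound {k : ℕ} (c : Fin k → ℂ) (t : ℝ) :
    ((C 1 - ∑ i : Fin k, C ((c i).re) * X^((i:ℕ)+1) : Polynomial ℝ).eval t)^2
      ≤ ‖1 - (t:ℂ) * ∑ i : Fin k, c i * ((t:ℂ))^(i:ℕ)‖^2 := by
  set z : ℂ := 1 - (t:ℂ) * ∑ i : Fin k, c i * ((t:ℂ))^(i:ℕ) with hzdef
  have hre : z.re = (C 1 - ∑ i : Fin k, C ((c i).re) * X^((i:ℕ)+1) : Polynomial ℝ).eval t := by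
    rw [hzdef]
    rw [Complex.sub_re, Complex.one_re, Complex.re_ofReal_mul, Complex.re_sum]
    have : ∀ i : Fin k, (c i * ((t:ℂ))^(i:ℕ)).re = (c i).re * t^(i:ℕ) := by
      intro i
      rw [show ((t:ℂ))^(i:ℕ) = ((t^(i:ℕ) : ℝ) : ℂ) from by push_cast; ring]
      rw [mul_comm, Complex.re_ofReal_mul]
      ring
    rw [Finset.sum_congr rfl fun i _ => this i]
    simp only [eval_sub, eval_finset_sum, eval_mul, eval_C, eval_pow, eval_X,
      Polynomial.eval_one]
    rw [Finset.mul_sum]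
    congr 1
    refine Finset.sum_congr rfl fun i _ => ?_
    ring
  rw [← hre]
  calc z.re^2 ≤ z.re^2 + z.im^2 := by nlinarith [sq_nonneg z.im]
    _ = ‖z‖^2 := by
        rw [Complex.sq_norm, Complex.normSq_apply]; ring

lemma qc_props {k : ℕ} (c : Fin k → ℂ) :
    (C 1 - ∑ i : Fin k, C ((c i).re) * X^((i:ℕ)+1) : Polynomial ℝ).natDegree ≤ k ∧
    (C 1 - ∑ i : Fin k, C ((c i).re) * X^((i:ℕ)+1) : Polynomial ℝ).eval 0 = 1 := by
  constructor
  · refine (natDegree_sub_le _ _).trans ?_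
    rw [Nat.max_le]
    constructor
    · simp
    · refine natDegree_sum_le_of_forall_le _ _ fun i _ => ?_
      refine (natDegree_C_mul_le _ _).trans ?_
      rw [natDegree_X_pow]
      exact i.isLt
  · rw [eval_sub, eval_C, eval_finset_sum]
    rw [show ∑ i : Fin k, eval 0 (C ((c i).re) * X^((i:ℕ)+1)) = 0 from
      Finset.sum_eq_zero fun i _ => by simp]
    ring


end AuxCG

/-- For `X ∈ ℂ^{N×M}` with `N ≤ M`, `W = X Xᴴ` positive definite, a fixed SVD
`X = U Σ Vᴴ` with singular values `σ j > 0` and eigenvalues `λ j = σ j ^ 2`, a vector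
`b ∈ ℂ^M` with `X b ≠ 0`, and the measure `ν = ∑_j |(Vᴴ b)_j|² δ_{σ_j²}` whose support has
at least `k+2` points, the `k`-th CG iterate `xk` for the normal equations `W x = X b`
has error `e_k = W⁻¹ X b − xk` with `‖e_k‖_W² = 1 / ∑_{j=0}^k p_j(0; ν)²`. -/
theorem stmt_5 (N M k : ℕ) (hNM : N ≤ M)
    (X : Matrix (Fin N) (Fin M) ℂ)
    (U : Matrix (Fin N) (Fin N) ℂ) (hU : U ∈ Matrix.unitaryGroup (Fin N) ℂ)
    (V : Matrix (Fin M) (Fin M) ℂ) (hV : V ∈ Matrix.unitaryGroup (Fin M) ℂ)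
    (σ : Fin N → ℝ) (hσ : ∀ j, 0 < σ j)
    (Sig : Matrix (Fin N) (Fin M) ℂ)
    (hSig : ∀ (i : Fin N) (j : Fin M),
      Sig i j = if (j : ℕ) = (i : ℕ) then (σ i : ℂ) else 0)
    (hsvd : X = U * Sig * Vᴴ)
    (hpd : (X * Xᴴ).PosDef)
    (b : Fin M → ℂ) (hXb : X.mulVec b ≠ 0)
    (ν : Measure ℝ)
    (hν : ν = ∑ j : Fin N,
      ENNReal.ofReal (‖(Vᴴ.mulVec b) (Fin.castLE hNM j)‖ ^ 2) • Measure.dirac (σ j ^ 2))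
    (hsupp : ∃ s : Finset ℝ, k + 2 ≤ s.card ∧ ∀ x ∈ s, ν {x} ≠ 0)
    (p : ℕ → Polynomial ℝ)
    (hdeg : ∀ j ≤ k, (p j).natDegree = j)
    (hlead : ∀ j ≤ k, 0 < (p j).leadingCoeff)
    (horth : ∀ i ≤ k, ∀ j ≤ k,
      ∫ t, (p i).eval t * (p j).eval t ∂ν = if i = j then 1 else 0)
    (x xk : Fin N → ℂ)
    (hx : (X * Xᴴ).mulVec x = X.mulVec b)
    (hxk : xk ∈ Submodule.span ℂ
      (Set.range fun i : Fin k => ((X * Xᴴ) ^ (i : ℕ)).mulVec (X.mulVec b)))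
    (hmin : ∀ y ∈ Submodule.span ℂ
        (Set.range fun i : Fin k => ((X * Xᴴ) ^ (i : ℕ)).mulVec (X.mulVec b)),
      (star (x - xk) ⬝ᵥ (X * Xᴴ).mulVec (x - xk)).re ≤
        (star (x - y) ⬝ᵥ (X * Xᴴ).mulVec (x - y)).re) :
    (star (x - xk) ⬝ᵥ (X * Xᴴ).mulVec (x - xk)).re =
      1 / ∑ j ∈ Finset.range (k + 1), (p j).eval 0 ^ 2 := by
  classical
  set w : Fin N → ℝ := fun j => ‖(Vᴴ.mulVec b) (Fin.castLE hNM j)‖ ^ 2 with hwdef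
  set lam : Fin N → ℝ := fun j => σ j ^ 2 with hlamdef
  have hw : ∀ j, 0 ≤ w j := fun j => by rw [hwdef]; positivity
  have horth' : ∀ i ≤ k, ∀ j ≤ k,
      sform w lam (p i) (p j) = if i = j then (1:ℝ) else 0 := by
    intro i hi j hj
    rw [← horth i hi j hj]
    exact (integral_eq_sum w lam hw ν hν (p i) (p j)).symm
  have hbase : ∀ j : Fin N, ((σ j : ℂ))^2 = ((lam j : ℝ) : ℂ) := by
    intro j; rw [hlamdef]; push_cast; ring
  -- express xk via coefficients
  obtain ⟨c, hc⟩ := (Submodule.mem_span_range_iff_exists_fun ℂ).mp hxk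
  rw [← hc]
  rw [matrix_main hNM X U hU V hV σ hσ Sig hSig hsvd b x hx c]
  refine le_antisymm ?_ ?_
  · -- upper bound via optimal polynomial
    obtain ⟨qs, hqsd, hqs0, hqsval⟩ := sform_opt w lam p hdeg horth'
    set cs : Fin k → ℂ := fun i => ((-(qs.coeff ((i:ℕ)+1)) : ℝ) : ℂ) with hcs
    have hysmem : (∑ i, cs i • ((X * Xᴴ) ^ (i:ℕ)).mulVec (X.mulVec b)) ∈
        Submodule.span ℂ
          (Set.range fun i : Fin k => ((X * Xᴴ) ^ (i : ℕ)).mulVec (X.mulVec b)) :=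
      Submodule.sum_mem _ fun i _ =>
        Submodule.smul_mem _ _ (Submodule.subset_span ⟨i, rfl⟩)
    have h1 := hmin _ hysmem
    rw [← hc] at h1
    rw [matrix_main hNM X U hU V hV σ hσ Sig hSig hsvd b x hx c,
      matrix_main hNM X U hU V hV σ hσ Sig hSig hsvd b x hx cs] at h1
    have hcoeff0 : qs.coeff 0 = 1 := by rw [coeff_zero_eq_eval_zero, hqs0]
    have h2 : ∑ j : Fin N, ‖(Vᴴ.mulVec b) (Fin.castLE hNM j)‖ ^ 2 *
        ‖1 - ((σ j : ℂ))^2 * ∑ i : Fin k, cs i * (((σ j : ℂ))^2)^(i:ℕ)‖ ^ 2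
        = 1 / ∑ j ∈ Finset.range (k + 1), (p j).eval 0 ^ 2 := by
      rw [← hqsval]
      rw [show sform w lam qs qs = ∑ j : Fin N, w j * (qs.eval (lam j) * qs.eval (lam j))
        from rfl]
      refine Finset.sum_congr rfl fun j _ => ?_
      rw [hbase j]
      rw [← eval_bridge qs hqsd hcoeff0 (lam j)]
      rw [Complex.norm_real, Real.norm_eq_abs, sq_abs]
      simp only [hwdef]
      ring
    rw [h2] at h1
    exact h1
  · -- lower bound
    have hq := qc_props (k := k) c
    refine le_trans (sform_lower w lam p hdeg horth' _ hq.1 hq.2) ?_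
    rw [show sform w lam (C 1 - ∑ i : Fin k, C ((c i).re) * Polynomial.X^((i:ℕ)+1))
          (C 1 - ∑ i : Fin k, C ((c i).re) * Polynomial.X^((i:ℕ)+1))
        = ∑ j : Fin N, w j *
          ((C 1 - ∑ i : Fin k, C ((c i).re) * Polynomial.X^((i:ℕ)+1) : Polynomial ℝ).eval (lam j) *
           (C 1 - ∑ i : Fin k, C ((c i).re) * Polynomial.X^((i:ℕ)+1) : Polynomial ℝ).eval (lam j))
      from rfl]
    refine Finset.sum_le_sum fun j _ => ?_
    refine mul_le_mul_of_nonneg_left ?_ (hw j)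
    rw [hbase j]
    rw [← sq]
    exact qc_re_bound c (lam j)
end

section
/- Let (α_j)_{j≥0} and (β_j)_{j≥0} be sequences of positive real numbers, and set a_0 = α_0², a_n = α_n² + β_{n−1}² for n ≥ 1, and b_n = α_n β_n for n ≥ 0. Define the complementary polynomials by σ_0 = 0, σ_1 = 1, and σ_{n+1}(x) = (x − a_n)σ_n(x) − b_{n−1}² σ_{n−1}(x) for n ≥ 1. Then for every k ≥ 1, σ_k(0) = (−1)^{k+1} Σ_{ℓ=0}^{k−1} (∏_{j=1}^{ℓ} β_{j−1}²)(∏_{j=ℓ+1}^{k−1} α_j²), where empty products equal 1. -/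
open Polynomial

noncomputable def Ssum (α β : ℕ → ℝ) (k : ℕ) : ℝ :=
  ∑ ℓ ∈ Finset.range k,
    (∏ j ∈ Finset.range ℓ, β j ^ 2) * ∏ j ∈ Finset.Icc (ℓ + 1) (k - 1), α j ^ 2

lemma Ssum_zero (α β : ℕ → ℝ) : Ssum α β 0 = 0 := by simp [Ssum]

lemma Ssum_peel (α β : ℕ → ℝ) (m : ℕ) :
    Ssum α β (m + 1) = α m ^ 2 * Ssum α β m + ∏ j ∈ Finset.range m, β j ^ 2 := by
  cases m with
  | zero => simp [Ssum]
  | succ t =>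
    unfold Ssum
    rw [Finset.sum_range_succ]
    have h1 : Finset.Icc (t + 1 + 1) (t + 1 + 1 - 1) = (∅ : Finset ℕ) := by
      simp [Finset.Icc_eq_empty_of_lt]
    rw [h1]
    have h2 : ∀ ℓ ∈ Finset.range (t + 1),
        (∏ j ∈ Finset.range ℓ, β j ^ 2) * ∏ j ∈ Finset.Icc (ℓ + 1) (t + 1 + 1 - 1), α j ^ 2
        = α (t + 1) ^ 2 * ((∏ j ∈ Finset.range ℓ, β j ^ 2) *
            ∏ j ∈ Finset.Icc (ℓ + 1) (t + 1 - 1), α j ^ 2) := by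
      intro ℓ hℓ
      have hle : ℓ + 1 ≤ t + 1 := Finset.mem_range.mp hℓ
      have : ∏ j ∈ Finset.Icc (ℓ + 1) (t + 1), α j ^ 2
          = (∏ j ∈ Finset.Icc (ℓ + 1) t, α j ^ 2) * α (t + 1) ^ 2 :=
        Finset.prod_Icc_succ_top hle _
      simp only [Nat.add_sub_cancel]
      rw [this]; ring
    rw [Finset.sum_congr rfl h2, ← Finset.mul_sum]
    ring

lemma Ssum_rec (α β : ℕ → ℝ) (m : ℕ) :
    Ssum α β (m + 2) = (α (m + 1) ^ 2 + β m ^ 2) * Ssum α β (m + 1)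
      - (α m * β m) ^ 2 * Ssum α β m := by
  have h1 := Ssum_peel α β (m + 1)
  have h2 := Ssum_peel α β m
  rw [Finset.prod_range_succ] at h1
  have h3 : ∏ j ∈ Finset.range m, β j ^ 2 = Ssum α β (m + 1) - α m ^ 2 * Ssum α β m := by
    linarith
  rw [h1, h3]; ring

/-- For positive sequences `α`, `β` and Jacobi data `a 0 = α 0 ^ 2`,
`a n = α n ^ 2 + β (n-1) ^ 2` (`n ≥ 1`), `b n = α n * β n`, the complementary polynomials
defined by `σp 0 = 0`, `σp 1 = 1`, `σp (n+1) = (X - C (a n)) σp n - C (b (n-1) ^ 2) σp (n-1)`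
satisfy, for all `k ≥ 1`,
`(σp k).eval 0 = (-1)^{k+1} ∑_{ℓ=0}^{k-1} (∏_{j=1}^{ℓ} β_{j-1}²)(∏_{j=ℓ+1}^{k-1} α_j²)`. -/
theorem stmt_7 (α β : ℕ → ℝ) (hα : ∀ j, 0 < α j) (hβ : ∀ j, 0 < β j)
    (a b : ℕ → ℝ) (ha0 : a 0 = α 0 ^ 2)
    (ha : ∀ n, 1 ≤ n → a n = α n ^ 2 + β (n - 1) ^ 2)
    (hb : ∀ n, b n = α n * β n)
    (σp : ℕ → Polynomial ℝ)
    (hσ0 : σp 0 = 0) (hσ1 : σp 1 = 1)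
    (hrec : ∀ n, 1 ≤ n →
      σp (n + 1) = (Polynomial.X - Polynomial.C (a n)) * σp n
        - Polynomial.C (b (n - 1) ^ 2) * σp (n - 1)) :
    ∀ k : ℕ, 1 ≤ k →
      (σp k).eval 0 = (-1 : ℝ) ^ (k + 1) *
        ∑ ℓ ∈ Finset.range k,
          (∏ j ∈ Finset.range ℓ, β j ^ 2) *
            ∏ j ∈ Finset.Icc (ℓ + 1) (k - 1), α j ^ 2 := by
  have key : ∀ m : ℕ, (σp m).eval 0 = (-1 : ℝ) ^ (m + 1) * Ssum α β m ∧
      (σp (m + 1)).eval 0 = (-1 : ℝ) ^ (m + 2) * Ssum α β (m + 1) := by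
    intro m
    induction m with
    | zero =>
      constructor
      · simp [hσ0, Ssum_zero]
      · simp [hσ1, Ssum]
    | succ t ih =>
      refine ⟨ih.2, ?_⟩
      have hr := hrec (t + 1) (Nat.le_add_left 1 t)
      have han : a (t + 1) = α (t + 1) ^ 2 + β t ^ 2 := by
        simpa using ha (t + 1) (Nat.le_add_left 1 t)
      have hbn : b t = α t * β t := hb t
      rw [hr]
      simp only [Nat.add_sub_cancel, eval_sub, eval_mul, eval_X, eval_C]
      rw [ih.1, ih.2, han, hbn, Ssum_rec α β t]
      ring_nf
  intro k hk
  exact (key k).1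
end

section
/- Let N ≥ 2 and let H be an N×N real lower bidiagonal matrix with nonzero diagonal entries α_0,…,α_{N−1} and subdiagonal entries β_0,…,β_{N−2}; set T = HHᵀ. Let H̃ be the (N−1)×(N−1) matrix obtained by deleting the first row and first column of H, and set T̃ = H̃H̃ᵀ. Then T and T̃ are invertible and (T⁻¹)_{11} = α_0⁻²(1 + β_0² (T̃⁻¹)_{11}). -/
open Matrix Finset

lemma aux_col {m : ℕ} (a b : ℕ → ℝ) (ha : ∀ i, i < m + 1 → a i ≠ 0)
    (M : Matrix (Fin (m + 1)) (Fin (m + 1)) ℝ)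
    (hM : ∀ i j : Fin (m + 1), M i j =
      if (i : ℕ) = (j : ℕ) then a i
      else if (i : ℕ) = (j : ℕ) + 1 then b j else 0) :
    IsUnit M.det ∧ ∀ k : Fin (m + 1),
      M⁻¹ k 0 = (-1) ^ (k : ℕ) * (∏ i ∈ range k, b i) / ∏ i ∈ range (k + 1), a i := by
  have hQ : ∀ k : ℕ, k < m + 1 → (∏ i ∈ range (k + 1), a i) ≠ 0 := by
    intro k hk
    refine Finset.prod_ne_zero_iff.mpr fun i hi => ha i ?_
    simp only [mem_range] at hi; omega
  have hlow : M.BlockTriangular (OrderDual.toDual) := by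
    intro i j hij
    rw [hM]
    have h1 : (i : ℕ) < (j : ℕ) := hij
    rw [if_neg (by omega), if_neg (by omega)]
  have hdet : M.det = ∏ i, M i i := Matrix.det_of_lowerTriangular M hlow
  have hdetne : M.det ≠ 0 := by
    rw [hdet]
    refine Finset.prod_ne_zero_iff.mpr fun i _ => ?_
    rw [hM, if_pos rfl]
    exact ha i i.isLt
  have hu : IsUnit M.det := isUnit_iff_ne_zero.mpr hdetne
  refine ⟨hu, ?_⟩
  set x : Fin (m + 1) → ℝ :=
    fun k => (-1) ^ (k : ℕ) * (∏ i ∈ range k, b i) / ∏ i ∈ range ((k : ℕ) + 1), a i with hx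
  have hmul : M *ᵥ x = Pi.single 0 1 := by
    funext i
    induction i using Fin.cases with
    | zero =>
      rw [Matrix.mulVec, dotProduct]
      rw [Finset.sum_eq_single (0 : Fin (m + 1))]
      · simp only [hx, hM, Fin.val_zero, if_pos rfl, pow_zero, range_zero, prod_empty,
          zero_add, range_one, prod_singleton, Pi.single_eq_same]
        have h0 := ha 0 (by omega)
        rw [if_pos trivial]
        field_simp
      · intro j _ hj
        have : (j : ℕ) ≠ 0 := fun h => hj (Fin.ext h)
        rw [hM, Fin.val_zero, if_neg (by omega), if_neg (by omega), zero_mul]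
      · intro h; exact absurd (Finset.mem_univ _) h
    | succ i' =>
      rw [Matrix.mulVec, dotProduct]
      rw [Finset.sum_eq_add i'.castSucc i'.succ]
      · have hc : (i'.castSucc : ℕ) = (i' : ℕ) := rfl
        have hs : (i'.succ : ℕ) = (i' : ℕ) + 1 := rfl
        have e1 : M i'.succ i'.castSucc = b i' := by
          rw [hM, hc, hs, if_neg (by omega), if_pos rfl]
        have e2 : M i'.succ i'.succ = a ((i' : ℕ) + 1) := by
          rw [hM, if_pos rfl, hs]
        rw [e1, e2]
        rw [Pi.single_eq_of_ne (Fin.succ_ne_zero i')]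
        simp only [hx, hc, hs]
        rw [prod_range_succ (fun i => b i) (i' : ℕ), prod_range_succ (fun i => a i) ((i' : ℕ) + 1)]
        have h1 := hQ i' (by omega)
        have h2 := ha ((i' : ℕ) + 1) (by omega)
        field_simp
        ring
      · exact (Fin.castSucc_lt_succ : i'.castSucc < i'.succ).ne
      · intro c _ hc
        have h1 : (c : ℕ) ≠ (i' : ℕ) := fun h => hc.1 (Fin.ext h)
        have h2 : (c : ℕ) ≠ (i' : ℕ) + 1 := fun h => hc.2 (Fin.ext h)
        rw [hM, Fin.val_succ, if_neg (by omega), if_neg (by omega), zero_mul]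
      · intro h; exact absurd (Finset.mem_univ _) h
      · intro h; exact absurd (Finset.mem_univ _) h
  intro k
  have : M⁻¹ *ᵥ (M *ᵥ x) = M⁻¹ *ᵥ Pi.single 0 1 := by rw [hmul]
  rw [Matrix.mulVec_mulVec, Matrix.nonsing_inv_mul M hu, Matrix.one_mulVec,
    Matrix.mulVec_single] at this
  have hk := congrFun this k
  simpa [hx] using hk.symm

/-- For `N = n + 2 ≥ 2` and a real lower bidiagonal `N × N` matrix `H` with
nonzero diagonal entries `α i` and subdiagonal entries `β j`, with `T = H * Hᵀ`, and `Ht`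
the matrix obtained by deleting the first row and column of `H`, `Tt = Ht * Htᵀ`, both
`T` and `Tt` are invertible, and
`(T⁻¹) 0 0 = (α 0 ^ 2)⁻¹ * (1 + β 0 ^ 2 * (Tt⁻¹) 0 0)`. -/
theorem stmt_8 (n : ℕ) (α β : ℕ → ℝ)
    (hα : ∀ i, i < n + 2 → α i ≠ 0)
    (H : Matrix (Fin (n + 2)) (Fin (n + 2)) ℝ)
    (hH : ∀ i j : Fin (n + 2), H i j =
      if (i : ℕ) = (j : ℕ) then α i
      else if (i : ℕ) = (j : ℕ) + 1 then β j else 0)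
    (T : Matrix (Fin (n + 2)) (Fin (n + 2)) ℝ) (hT : T = H * Hᵀ)
    (Ht : Matrix (Fin (n + 1)) (Fin (n + 1)) ℝ)
    (hHt : Ht = H.submatrix Fin.succ Fin.succ)
    (Tt : Matrix (Fin (n + 1)) (Fin (n + 1)) ℝ) (hTt : Tt = Ht * Htᵀ) :
    IsUnit T.det ∧ IsUnit Tt.det ∧
    T⁻¹ 0 0 = (α 0 ^ 2)⁻¹ * (1 + β 0 ^ 2 * Tt⁻¹ 0 0) := by
  obtain ⟨hHdet, hHcol⟩ := aux_col (m := n + 1) α β hα H hH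
  have hHt' : ∀ i j : Fin (n + 1), Ht i j =
      if (i : ℕ) = (j : ℕ) then α ((i : ℕ) + 1)
      else if (i : ℕ) = (j : ℕ) + 1 then β ((j : ℕ) + 1) else 0 := by
    intro i j
    rw [hHt, Matrix.submatrix_apply, hH]
    simp only [Fin.val_succ]
    split_ifs with h1 h2 h3 h4 h5 <;> first | rfl | omega
  obtain ⟨hHtdet, hHtcol⟩ := aux_col (m := n) (fun i => α (i + 1)) (fun j => β (j + 1))
    (fun i hi => hα (i + 1) (by omega)) Ht hHt'
  have hTu : IsUnit T.det := by
    rw [hT, Matrix.det_mul, Matrix.det_transpose]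
    exact hHdet.mul hHdet
  have hTtu : IsUnit Tt.det := by
    rw [hTt, Matrix.det_mul, Matrix.det_transpose]
    exact hHtdet.mul hHtdet
  refine ⟨hTu, hTtu, ?_⟩
  have hTinv : T⁻¹ 0 0 = ∑ k, H⁻¹ k 0 * H⁻¹ k 0 := by
    rw [hT, Matrix.mul_inv_rev, ← Matrix.transpose_nonsing_inv, Matrix.mul_apply]
    simp [Matrix.transpose_apply]
  have hTtinv : Tt⁻¹ 0 0 = ∑ k, Ht⁻¹ k 0 * Ht⁻¹ k 0 := by
    rw [hTt, Matrix.mul_inv_rev, ← Matrix.transpose_nonsing_inv, Matrix.mul_apply]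
    simp [Matrix.transpose_apply]
  rw [hTinv, hTtinv]
  rw [Fin.sum_univ_succ]
  rw [mul_add, mul_one, Finset.mul_sum, Finset.mul_sum]
  have hA : ∀ k : ℕ, k < n + 1 → (∏ i ∈ range (k + 1), α (i + 1)) ≠ 0 := by
    intro k hk
    refine Finset.prod_ne_zero_iff.mpr fun i hi => hα (i + 1) ?_
    simp only [mem_range] at hi; omega
  have hα0 := hα 0 (by omega)
  congr 1
  · rw [hHcol 0]
    simp only [Fin.val_zero, range_zero, prod_empty, pow_zero, zero_add, range_one,
      prod_singleton, mul_one]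
    rw [div_mul_div_comm, one_mul]
    rw [sq, one_div]
  · refine Finset.sum_congr rfl fun k _ => ?_
    rw [hHcol k.succ, hHtcol k]
    simp only [Fin.val_succ]
    rw [prod_range_succ' (fun i => β i) (k : ℕ),
      prod_range_succ' (fun i => α i) ((k : ℕ) + 1)]
    have h1 := hA k k.isLt
    field_simp
    ring
end

section
/- Let N ≥ 1 and let H be an N×N real lower bidiagonal matrix with nonzero diagonal entries α_0,…,α_{N−1} and subdiagonal entries β_0,…,β_{N−2}; set T = HHᵀ. Then T is invertible and (T⁻¹)_{11} = α_0⁻²(1 + Σ_{j=1}^{N−1} ∏_{k=1}^{j} β_{k−1}²/α_k²). -/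
open Matrix

/-- For `N = n + 1 ≥ 1` and a real lower bidiagonal `N × N` matrix `H` with
nonzero diagonal entries `α i` and subdiagonal entries `β j`, with `T = H * Hᵀ`, the matrix
`T` is invertible and
`(T⁻¹) 0 0 = (α 0 ^ 2)⁻¹ * (1 + ∑_{j=1}^{N-1} ∏_{i=1}^{j} β_{i-1}² / α_i²)`. -/
theorem stmt_9 (n : ℕ) (α β : ℕ → ℝ)
    (hα : ∀ i, i < n + 1 → α i ≠ 0)
    (H : Matrix (Fin (n + 1)) (Fin (n + 1)) ℝ)
    (hH : ∀ i j : Fin (n + 1), H i j =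
      if (i : ℕ) = (j : ℕ) then α i
      else if (i : ℕ) = (j : ℕ) + 1 then β j else 0)
    (T : Matrix (Fin (n + 1)) (Fin (n + 1)) ℝ) (hT : T = H * Hᵀ) :
    IsUnit T.det ∧
    T⁻¹ 0 0 = (α 0 ^ 2)⁻¹ *
      (1 + ∑ j ∈ Finset.Icc 1 n, ∏ i ∈ Finset.Icc 1 j, β (i - 1) ^ 2 / α i ^ 2) := by
  -- H is lower triangular
  have hlow : H.BlockTriangular OrderDual.toDual := by
    intro i j hij
    rw [hH]
    have h1 : (i : ℕ) ≠ (j : ℕ) := by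
      simp only [OrderDual.toDual_lt_toDual] at hij
      omega
    have h2 : (i : ℕ) ≠ (j : ℕ) + 1 := by
      simp only [OrderDual.toDual_lt_toDual] at hij
      have : (i : ℕ) < (j : ℕ) := hij
      omega
    simp [h1, h2]
  have hdetH : H.det = ∏ i : Fin (n + 1), α i := by
    rw [Matrix.det_of_lowerTriangular H hlow]
    congr 1
    ext i
    rw [hH]; simp
  have hdetH0 : IsUnit H.det := by
    rw [hdetH]
    have hne : ∀ i : Fin (n + 1), α (i : ℕ) ≠ 0 := fun i => hα i i.isLt
    exact (Finset.prod_ne_zero_iff.mpr fun i _ => hne i).isUnit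
  have hdetT : IsUnit T.det := by
    rw [hT, Matrix.det_mul, Matrix.det_transpose]
    exact hdetH0.mul hdetH0
  refine ⟨hdetT, ?_⟩
  -- the solution vector
  set x : Fin (n + 1) → ℝ :=
    fun k => (α 0)⁻¹ * ∏ i ∈ Finset.Icc 1 (k : ℕ), (-β (i - 1) / α i) with hxdef
  have hα0 : α 0 ≠ 0 := hα 0 (by omega)
  have hHx : H *ᵥ x = Pi.single (0 : Fin (n + 1)) 1 := by
    funext k
    simp only [Matrix.mulVec, dotProduct]
    induction k using Fin.cases with
    | zero =>
        rw [Finset.sum_eq_single (0 : Fin (n + 1))]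
        · rw [hH]
          simp [hxdef, hα0]
        · intro j _ hj
          rw [hH]
          have h1 : (0 : ℕ) ≠ (j : ℕ) := fun h => hj (Fin.ext (by simpa using h.symm))
          have h2 : (0 : ℕ) ≠ (j : ℕ) + 1 := by omega
          simp [h1, h2]
        · simp
    | succ i =>
        have hne : (i.castSucc : Fin (n + 1)) ≠ i.succ := by
          simp [Fin.ext_iff]
        rw [Finset.sum_eq_add (i.castSucc) (i.succ) hne]
        · have hc : ((i.succ : Fin (n+1)) : ℕ) = ((i.castSucc : Fin (n+1)) : ℕ) + 1 := by simp
          have hcv : ((i.castSucc : Fin (n+1)) : ℕ) = (i : ℕ) := by simp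
          have hsv : ((i.succ : Fin (n+1)) : ℕ) = (i : ℕ) + 1 := by simp
          rw [hH, hH]
          have hαi : α ((i : ℕ) + 1) ≠ 0 := hα _ (by omega)
          have hprod : ∏ j ∈ Finset.Icc 1 ((i : ℕ) + 1), (-β (j - 1) / α j)
              = (∏ j ∈ Finset.Icc 1 (i : ℕ), (-β (j - 1) / α j)) * (-β (i : ℕ) / α ((i : ℕ) + 1)) := by
            rw [Finset.prod_Icc_succ_top (by omega)]
            simp only [Nat.add_sub_cancel]
          simp only [hcv, hsv, if_neg (by omega : ¬ (i : ℕ) + 1 = (i : ℕ)), if_pos rfl,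
            if_pos rfl, hxdef, hprod, Nat.add_sub_cancel, if_true]
          rw [Pi.single_eq_of_ne (by simp [Fin.ext_iff] : i.succ ≠ 0)]
          have hdm : -β (i : ℕ) / α ((i : ℕ) + 1) * α ((i : ℕ) + 1) = -β (i : ℕ) :=
            div_mul_cancel₀ _ hαi
          linear_combination
            ((α 0)⁻¹ * ∏ j ∈ Finset.Icc 1 (i : ℕ), (-β (j - 1) / α j)) * hdm
        · intro c _ hc
          rw [hH]
          have h1 : (i : ℕ) + 1 ≠ (c : ℕ) := fun h => hc.2 (Fin.ext (by simp [← h]))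
          have h2 : (i : ℕ) ≠ (c : ℕ) := fun h => hc.1 (Fin.ext (by simp [← h]))
          simp [h1, h2]
        · simp
        · simp
  -- column of H⁻¹
  have hinvcol : ∀ k : Fin (n + 1), H⁻¹ k 0 = x k := by
    have : H⁻¹ *ᵥ (H *ᵥ x) = x := by
      rw [Matrix.mulVec_mulVec, Matrix.nonsing_inv_mul H hdetH0, Matrix.one_mulVec]
    intro k
    rw [← this, hHx]
    simp [Matrix.mulVec_single]
  have hTinv : T⁻¹ 0 0 = ∑ k : Fin (n + 1), x k * x k := by
    rw [hT, Matrix.mul_inv_rev, ← Matrix.transpose_nonsing_inv, Matrix.mul_apply]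
    exact Finset.sum_congr rfl fun k _ => by
      rw [Matrix.transpose_apply, hinvcol k]
  rw [hTinv]
  have hterm : ∀ k : Fin (n + 1), x k * x k
      = (α 0 ^ 2)⁻¹ * ∏ i ∈ Finset.Icc 1 (k : ℕ), β (i - 1) ^ 2 / α i ^ 2 := by
    intro k
    simp only [hxdef]
    rw [mul_mul_mul_comm, ← Finset.prod_mul_distrib,
      Finset.prod_congr rfl (fun i _ =>
        (by ring : (-β (i - 1) / α i) * (-β (i - 1) / α i) = β (i - 1) ^ 2 / α i ^ 2)),
      sq, mul_inv]
  rw [Finset.sum_congr rfl fun k _ => hterm k, ← Finset.mul_sum]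
  congr 1
  rw [Fin.sum_univ_eq_sum_range (fun k => ∏ i ∈ Finset.Icc 1 k, β (i - 1) ^ 2 / α i ^ 2)]
  have hr : Finset.range (n + 1) = insert 0 (Finset.Icc 1 n) := by
    ext m
    simp [Finset.mem_range, Finset.mem_Icc]
    omega
  rw [hr, Finset.sum_insert (by simp)]
  simp
end

section
/- Let X ∈ ℂ^{N×M} and let z ∈ ℂ with Im z ≠ 0. Then the (M+N)×(M+N) block matrix B = [[−I_M, X*],[X, −zI_N]] is invertible, its inverse is given in block form by B⁻¹ = [[(z⁻¹X*X − I_M)⁻¹, (X*X − zI_M)⁻¹X*],[X(X*X − zI_M)⁻¹, (XX* − zI_N)⁻¹]], and its operator norm satisfies ‖B⁻¹‖ ≤ (|z| + 1)|Im z|⁻¹ + 2√(|Im z|⁻¹ + |z| |Im z|⁻²). -/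
open Matrix
open scoped Matrix.Norms.L2Operator InnerProductSpace

variable {n : Type*} [Fintype n] [DecidableEq n]

lemma aux_lower (H : Matrix n n ℂ) (hH : H.IsHermitian) (z : ℂ)
    (v : EuclideanSpace ℂ n) :
    |z.im| * ‖v‖ * ‖v‖ ≤ ‖toEuclideanCLM (𝕜 := ℂ) (H - z • 1) v‖ * ‖v‖ := by
  set T := toEuclideanCLM (𝕜 := ℂ) H with hT
  set S := toEuclideanCLM (𝕜 := ℂ) (H - z • 1) with hS
  have him : (⟪v, T v⟫_ℂ).im = 0 := by
    have hsymm := (Matrix.isHermitian_iff_isSymmetric.mp hH)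
    have h : (starRingEnd ℂ) ⟪v, T v⟫_ℂ = ⟪v, T v⟫_ℂ := by
      rw [inner_conj_symm]
      exact hsymm v v
    have h2 := congrArg Complex.im h
    simp only [Complex.conj_im] at h2
    linarith
  have happ : S v = T v - z • v := by
    have : S = T - z • 1 := by rw [hS, hT, map_sub, _root_.map_smul, _root_.map_one]
    simp [this]
  have hinner : ⟪v, S v⟫_ℂ = ⟪v, T v⟫_ℂ - z * ((‖v‖ ^ 2 : ℝ) : ℂ) := by
    rw [happ, inner_sub_right, inner_smul_right, inner_self_eq_norm_sq_to_K]
    norm_cast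
  have h1 : |z.im| * ‖v‖ * ‖v‖ = |(⟪v, S v⟫_ℂ).im| := by
    rw [hinner]
    simp only [Complex.sub_im, him, Complex.mul_im, Complex.ofReal_re, Complex.ofReal_im,
      mul_zero, add_zero, zero_sub, abs_neg, abs_mul]
    rw [zero_add, abs_mul, abs_of_nonneg (sq_nonneg ‖v‖)]
    ring
  calc |z.im| * ‖v‖ * ‖v‖ = |(⟪v, S v⟫_ℂ).im| := h1
    _ ≤ ‖⟪v, S v⟫_ℂ‖ := Complex.abs_im_le_norm _
    _ = ‖⟪v, S v⟫_ℂ‖ := rfl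
    _ ≤ ‖v‖ * ‖S v‖ := norm_inner_le_norm v (S v)
    _ = ‖S v‖ * ‖v‖ := mul_comm _ _

lemma aux_isUnit_det (H : Matrix n n ℂ) (hH : H.IsHermitian) (z : ℂ) (hz : z.im ≠ 0) :
    IsUnit (H - z • 1).det := by
  rw [isUnit_iff_ne_zero]
  intro hdet
  obtain ⟨w, hw0, hw⟩ := (Matrix.exists_mulVec_eq_zero_iff).mpr hdet
  set v : EuclideanSpace ℂ n := (WithLp.equiv 2 (n → ℂ)).symm w with hv
  have hSv : toEuclideanCLM (𝕜 := ℂ) (H - z • 1) v = 0 := by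
    rw [hv, WithLp.equiv_symm_apply, toEuclideanCLM_toLp, hw]
    rfl
  have := aux_lower H hH z v
  rw [hSv] at this
  simp only [norm_zero, zero_mul] at this
  have hvne : v ≠ 0 := by
    simpa [hv] using hw0
  have hvpos : 0 < ‖v‖ := norm_pos_iff.mpr hvne
  have hzpos : 0 < |z.im| := abs_pos.mpr hz
  nlinarith [mul_pos (mul_pos hzpos hvpos) hvpos]

lemma aux_inv_norm_le (H : Matrix n n ℂ) (hH : H.IsHermitian) (z : ℂ) (hz : z.im ≠ 0) :
    ‖(H - z • 1)⁻¹‖ ≤ |z.im|⁻¹ := by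
  have hdet := aux_isUnit_det H hH z hz
  have hmul : (H - z • 1) * (H - z • 1)⁻¹ = 1 := Matrix.mul_nonsing_inv _ hdet
  rw [Matrix.cstar_norm_def]
  refine ContinuousLinearMap.opNorm_le_bound _ (by positivity) fun v => ?_
  set w := toEuclideanCLM (𝕜 := ℂ) (H - z • 1)⁻¹ v with hwdef
  have hSw : toEuclideanCLM (𝕜 := ℂ) (H - z • 1) w = v := by
    rw [hwdef, ← ContinuousLinearMap.mul_apply, ← _root_.map_mul, hmul, _root_.map_one,
      ContinuousLinearMap.one_apply]
  have h := aux_lower H hH z w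
  rw [hSw] at h
  have hzpos : 0 < |z.im| := abs_pos.mpr hz
  rcases eq_or_lt_of_le (norm_nonneg w) with h0 | h0
  · rw [← h0]
    positivity
  · have h2 : |z.im| * ‖w‖ ≤ ‖v‖ := le_of_mul_le_mul_right (by linarith [h]) h0
    rw [← inv_mul_cancel_left₀ (ne_of_gt hzpos) ‖w‖]
    exact mul_le_mul_of_nonneg_left h2 (by positivity)

lemma aux_XR_norm_le {m : Type*} [Fintype m] [DecidableEq m]
    (X : Matrix m n ℂ) (z : ℂ) (hz : z.im ≠ 0) :
    ‖X * (Xᴴ * X - z • 1)⁻¹‖ ≤ Real.sqrt (|z.im|⁻¹ + ‖z‖ * |z.im|⁻¹ ^ 2) := by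
  classical
  set R := (Xᴴ * X - z • 1)⁻¹ with hR
  have hherm : (Xᴴ * X).IsHermitian := Matrix.isHermitian_conjTranspose_mul_self X
  have hdet : IsUnit (Xᴴ * X - z • 1).det := aux_isUnit_det _ hherm z hz
  have h1 : (Xᴴ * X - z • 1) * R = 1 := Matrix.mul_nonsing_inv _ hdet
  have key : (X * R)ᴴ * (X * R) = Rᴴ + z • (Rᴴ * R) := by
    have e : (Xᴴ * X - z • 1) * R = Xᴴ * X * R - z • R := by
      rw [Matrix.sub_mul, Matrix.smul_mul, Matrix.one_mul]
    calc (X * R)ᴴ * (X * R) = Rᴴ * (Xᴴ * X) * R := by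
          rw [Matrix.conjTranspose_mul]; simp only [Matrix.mul_assoc]
      _ = Rᴴ * ((Xᴴ * X - z • 1) * R) + z • (Rᴴ * R) := by
          rw [e, Matrix.mul_sub, Matrix.mul_smul]
          simp only [Matrix.mul_assoc]
          abel
      _ = Rᴴ + z • (Rᴴ * R) := by rw [h1, Matrix.mul_one]
  have hRle : ‖R‖ ≤ |z.im|⁻¹ := aux_inv_norm_le _ hherm z hz
  have hR0 : (0:ℝ) ≤ ‖R‖ := norm_nonneg _
  have hz0 : (0:ℝ) ≤ ‖z‖ := norm_nonneg _
  have hsq : ‖X * R‖ * ‖X * R‖ ≤ |z.im|⁻¹ + ‖z‖ * |z.im|⁻¹ ^ 2 := by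
    rw [← Matrix.l2_opNorm_conjTranspose_mul_self, key]
    calc ‖Rᴴ + z • (Rᴴ * R)‖ ≤ ‖Rᴴ‖ + ‖z • (Rᴴ * R)‖ := norm_add_le _ _
      _ = ‖R‖ + ‖z‖ * ‖Rᴴ * R‖ := by
          rw [Matrix.l2_opNorm_conjTranspose, norm_smul]
      _ ≤ ‖R‖ + ‖z‖ * (‖R‖ * ‖R‖) := by
          have := Matrix.l2_opNorm_mul Rᴴ R
          rw [Matrix.l2_opNorm_conjTranspose] at this
          nlinarith
      _ ≤ |z.im|⁻¹ + ‖z‖ * |z.im|⁻¹ ^ 2 := by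
          nlinarith [mul_le_mul hRle hRle hR0 (le_trans hR0 hRle)]
  have hnn : (0:ℝ) ≤ |z.im|⁻¹ + ‖z‖ * |z.im|⁻¹ ^ 2 := by positivity
  rw [show ‖X * R‖ * ‖X * R‖ = ‖X * R‖ ^ 2 by ring] at hsq
  exact Real.le_sqrt_of_sq_le hsq

set_option maxHeartbeats 1000000 in
lemma aux_fromBlocks_norm_le {m : Type*} [Fintype m] [DecidableEq m]
    (A : Matrix m m ℂ) (B : Matrix m n ℂ) (C : Matrix n m ℂ) (D : Matrix n n ℂ) :
    ‖Matrix.fromBlocks A B C D‖ ≤ ‖A‖ + ‖B‖ + ‖C‖ + ‖D‖ := by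
  classical
  have sq_split : ∀ x : EuclideanSpace ℂ (m ⊕ n),
      ‖x‖ ^ 2 = ‖(WithLp.equiv 2 (m → ℂ)).symm (fun i => x (Sum.inl i))‖ ^ 2
        + ‖(WithLp.equiv 2 (n → ℂ)).symm (fun i => x (Sum.inr i))‖ ^ 2 := by
    intro x
    simp only [EuclideanSpace.norm_eq, WithLp.equiv_symm_apply, PiLp.toLp_apply]
    rw [Real.sq_sqrt (by positivity), Real.sq_sqrt (by positivity),
      Real.sq_sqrt (by positivity)]
    exact Fintype.sum_sum_type _
  rw [Matrix.cstar_norm_def]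
  refine ContinuousLinearMap.opNorm_le_bound _ (by positivity) fun v => ?_
  set v₁ : EuclideanSpace ℂ m := (WithLp.equiv 2 (m → ℂ)).symm (fun i => v (Sum.inl i)) with hv1
  set v₂ : EuclideanSpace ℂ n := (WithLp.equiv 2 (n → ℂ)).symm (fun i => v (Sum.inr i)) with hv2
  set y := toEuclideanCLM (𝕜 := ℂ) (Matrix.fromBlocks A B C D) v with hy
  have happ : ∀ i, y i = (Matrix.fromBlocks A B C D *ᵥ (WithLp.equiv 2 ((m ⊕ n) → ℂ) v)) i :=
    fun i => rfl
  have hmv := Matrix.fromBlocks_mulVec A B C D (WithLp.equiv 2 ((m ⊕ n) → ℂ) v)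
  have hyl : (fun i => y (Sum.inl i)) = A *ᵥ (fun i => v (Sum.inl i)) + B *ᵥ (fun i => v (Sum.inr i)) := by
    funext i
    rw [happ, hmv]
    rfl
  have hyr : (fun i => y (Sum.inr i)) = C *ᵥ (fun i => v (Sum.inl i)) + D *ᵥ (fun i => v (Sum.inr i)) := by
    funext i
    rw [happ, hmv]
    rfl
  have hp : ‖(WithLp.equiv 2 (m → ℂ)).symm (fun i => y (Sum.inl i))‖ ≤ ‖A‖ * ‖v₁‖ + ‖B‖ * ‖v₂‖ := by
    rw [hyl, WithLp.equiv_symm_apply, WithLp.toLp_add]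
    refine (norm_add_le _ _).trans ?_
    exact add_le_add (Matrix.l2_opNorm_mulVec A v₁) (Matrix.l2_opNorm_mulVec B v₂)
  have hq : ‖(WithLp.equiv 2 (n → ℂ)).symm (fun i => y (Sum.inr i))‖ ≤ ‖C‖ * ‖v₁‖ + ‖D‖ * ‖v₂‖ := by
    rw [hyr, WithLp.equiv_symm_apply, WithLp.toLp_add]
    refine (norm_add_le _ _).trans ?_
    exact add_le_add (Matrix.l2_opNorm_mulVec C v₁) (Matrix.l2_opNorm_mulVec D v₂)
  have hsum := sq_split y
  have hvsum := sq_split v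
  rw [← hv1, ← hv2] at hvsum
  have hn1 : ‖v₁‖ ≤ ‖v‖ := by
    nlinarith [norm_nonneg v₁, norm_nonneg v₂, norm_nonneg v, sq_nonneg (‖v₁‖ - ‖v‖)]
  have hn2 : ‖v₂‖ ≤ ‖v‖ := by
    nlinarith [norm_nonneg v₁, norm_nonneg v₂, norm_nonneg v, sq_nonneg (‖v₂‖ - ‖v‖)]
  have ha := norm_nonneg A; have hb := norm_nonneg B
  have hc := norm_nonneg C; have hd := norm_nonneg D
  have hT : (0:ℝ) ≤ (‖A‖ + ‖B‖ + ‖C‖ + ‖D‖) * ‖v‖ := by positivity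
  refine le_of_pow_le_pow_left₀ two_ne_zero hT ?_
  rw [hsum]
  have h1 := norm_nonneg ((WithLp.equiv 2 (m → ℂ)).symm (fun i => y (Sum.inl i)))
  have h2 := norm_nonneg ((WithLp.equiv 2 (n → ℂ)).symm (fun i => y (Sum.inr i)))
  have hp' : ‖(WithLp.equiv 2 (m → ℂ)).symm (fun i => y (Sum.inl i))‖ ≤ (‖A‖ + ‖B‖) * ‖v‖ := by
    refine hp.trans ?_
    have e1 : ‖A‖ * ‖v₁‖ ≤ ‖A‖ * ‖v‖ := mul_le_mul_of_nonneg_left hn1 ha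
    have e2 : ‖B‖ * ‖v₂‖ ≤ ‖B‖ * ‖v‖ := mul_le_mul_of_nonneg_left hn2 hb
    linarith
  have hq' : ‖(WithLp.equiv 2 (n → ℂ)).symm (fun i => y (Sum.inr i))‖ ≤ (‖C‖ + ‖D‖) * ‖v‖ := by
    refine hq.trans ?_
    have e1 : ‖C‖ * ‖v₁‖ ≤ ‖C‖ * ‖v‖ := mul_le_mul_of_nonneg_left hn1 hc
    have e2 : ‖D‖ * ‖v₂‖ ≤ ‖D‖ * ‖v‖ := mul_le_mul_of_nonneg_left hn2 hd
    linarith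
  have hv0 := norm_nonneg v
  nlinarith [mul_nonneg (mul_nonneg (add_nonneg (add_nonneg ha hb) hc) hd) (mul_nonneg hv0 hv0),
    mul_nonneg (mul_nonneg (add_nonneg ha hb) (add_nonneg hc hd)) (mul_nonneg hv0 hv0),
    sq_nonneg (‖(WithLp.equiv 2 (m → ℂ)).symm (fun i => y (Sum.inl i))‖),
    sq_nonneg (‖(WithLp.equiv 2 (n → ℂ)).symm (fun i => y (Sum.inr i))‖)]

set_option maxHeartbeats 1000000 in
/-- For `X ∈ ℂ^{N×M}` and `z ∈ ℂ` with `Im z ≠ 0`, the block matrix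
`B = [[-I_M, Xᴴ], [X, -z I_N]]` is invertible, with inverse given in block form by
`[[(z⁻¹ XᴴX - I)⁻¹, (XᴴX - z I)⁻¹ Xᴴ], [X (XᴴX - z I)⁻¹, (XXᴴ - z I)⁻¹]]`, and its
`ℓ²`-operator norm is at most `(|z| + 1)|Im z|⁻¹ + 2 √(|Im z|⁻¹ + |z| |Im z|⁻²)`. -/
theorem stmt_10 (N M : ℕ) (X : Matrix (Fin N) (Fin M) ℂ) (z : ℂ) (hz : z.im ≠ 0)
    (B : Matrix (Fin M ⊕ Fin N) (Fin M ⊕ Fin N) ℂ)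
    (hB : B = Matrix.fromBlocks (-1) Xᴴ X (-(z • 1))) :
    IsUnit B.det ∧
    B⁻¹ = Matrix.fromBlocks
      ((z⁻¹ • (Xᴴ * X) - 1)⁻¹)
      ((Xᴴ * X - z • 1)⁻¹ * Xᴴ)
      (X * (Xᴴ * X - z • 1)⁻¹)
      ((X * Xᴴ - z • 1)⁻¹) ∧
    ‖Matrix.toEuclideanCLM (𝕜 := ℂ) B⁻¹‖ ≤
      (‖z‖ + 1) * |z.im|⁻¹ +
        2 * Real.sqrt (|z.im|⁻¹ + ‖z‖ * |z.im|⁻¹ ^ 2) := by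
  classical
  subst hB
  have hz0 : z ≠ 0 := fun h => hz (by rw [h]; rfl)
  have hhermM : (Xᴴ * X).IsHermitian := Matrix.isHermitian_conjTranspose_mul_self X
  have hhermN : (X * Xᴴ).IsHermitian := Matrix.isHermitian_mul_conjTranspose_self X
  have hdM : IsUnit (Xᴴ * X - z • 1).det := aux_isUnit_det _ hhermM z hz
  have hdN : IsUnit (X * Xᴴ - z • 1).det := aux_isUnit_det _ hhermN z hz
  set R := (Xᴴ * X - z • 1)⁻¹ with hRdef
  set S := (X * Xᴴ - z • 1)⁻¹ with hSdef
  have hR1 : (Xᴴ * X - z • 1) * R = 1 := Matrix.mul_nonsing_inv _ hdM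
  have hR2 : R * (Xᴴ * X - z • 1) = 1 := Matrix.nonsing_inv_mul _ hdM
  have hS1 : (X * Xᴴ - z • 1) * S = 1 := Matrix.mul_nonsing_inv _ hdN
  have hP : (z⁻¹ • (Xᴴ * X) - 1)⁻¹ = z • R := by
    apply Matrix.inv_eq_right_inv
    have hsplit : z⁻¹ • (Xᴴ * X) - 1 = z⁻¹ • (Xᴴ * X - z • 1) := by
      rw [smul_sub, smul_smul, inv_mul_cancel₀ hz0, one_smul]
    rw [hsplit, Matrix.smul_mul, Matrix.mul_smul, hR1, smul_smul, inv_mul_cancel₀ hz0, one_smul]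
  have hswap : (Xᴴ * X - z • 1) * Xᴴ = Xᴴ * (X * Xᴴ - z • 1) := by
    rw [Matrix.sub_mul, Matrix.mul_sub, Matrix.smul_mul, Matrix.mul_smul, Matrix.one_mul,
      Matrix.mul_one]
    simp only [Matrix.mul_assoc]
  have hcomm : Xᴴ * S = R * Xᴴ := by
    calc Xᴴ * S = (R * (Xᴴ * X - z • 1)) * (Xᴴ * S) := by rw [hR2, Matrix.one_mul]
      _ = R * (((Xᴴ * X - z • 1) * Xᴴ) * S) := by simp only [Matrix.mul_assoc]
      _ = R * (Xᴴ * ((X * Xᴴ - z • 1) * S)) := by rw [hswap]; simp only [Matrix.mul_assoc]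
      _ = R * Xᴴ := by rw [hS1, Matrix.mul_one]
  have eR : Xᴴ * X * R = 1 + z • R := by
    have h := hR1
    rw [Matrix.sub_mul, Matrix.smul_mul, Matrix.one_mul, sub_eq_iff_eq_add] at h
    rw [h]
  have eS : X * Xᴴ * S = 1 + z • S := by
    have h := hS1
    rw [Matrix.sub_mul, Matrix.smul_mul, Matrix.one_mul, sub_eq_iff_eq_add] at h
    rw [h]
  have hBM : Matrix.fromBlocks (-1) Xᴴ X (-(z • 1)) *
      Matrix.fromBlocks (z • R) (R * Xᴴ) (X * R) S = 1 := by
    have b11 : (-1 : Matrix (Fin M) (Fin M) ℂ) * (z • R) + Xᴴ * (X * R) = 1 := by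
      rw [Matrix.neg_mul, Matrix.one_mul, ← Matrix.mul_assoc, eR]; abel
    have b12 : (-1 : Matrix (Fin M) (Fin M) ℂ) * (R * Xᴴ) + Xᴴ * S = 0 := by
      rw [Matrix.neg_mul, Matrix.one_mul, hcomm]; abel
    have b21 : X * (z • R) + (-(z • (1 : Matrix (Fin N) (Fin N) ℂ))) * (X * R) = 0 := by
      rw [Matrix.mul_smul, Matrix.neg_mul, Matrix.smul_mul, Matrix.one_mul]; abel
    have b22 : X * (R * Xᴴ) + (-(z • (1 : Matrix (Fin N) (Fin N) ℂ))) * S = 1 := by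
      rw [← hcomm, ← Matrix.mul_assoc, eS, Matrix.neg_mul, Matrix.smul_mul, Matrix.one_mul]; abel
    rw [Matrix.fromBlocks_multiply, b11, b12, b21, b22, Matrix.fromBlocks_one]
  have hdet : IsUnit (Matrix.fromBlocks (-1 : Matrix (Fin M) (Fin M) ℂ) Xᴴ X (-(z • 1))).det := by
    have h := congrArg Matrix.det hBM
    rw [Matrix.det_mul, Matrix.det_one] at h
    exact IsUnit.of_mul_eq_one _ h
  have hinv : (Matrix.fromBlocks (-1 : Matrix (Fin M) (Fin M) ℂ) Xᴴ X (-(z • 1)))⁻¹ =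
      Matrix.fromBlocks (z • R) (R * Xᴴ) (X * R) S := Matrix.inv_eq_right_inv hBM
  refine ⟨hdet, ?_, ?_⟩
  · rw [hinv, hP]
  · rw [← Matrix.cstar_norm_def, hinv]
    have hbound := aux_fromBlocks_norm_le (z • R) (R * Xᴴ) (X * R) S
    have h1 : ‖z • R‖ ≤ ‖z‖ * |z.im|⁻¹ := by
      rw [norm_smul]
      exact mul_le_mul_of_nonneg_left (aux_inv_norm_le _ hhermM z hz) (norm_nonneg z)
    have h4 : ‖S‖ ≤ |z.im|⁻¹ := aux_inv_norm_le _ hhermN z hz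
    have h3 : ‖X * R‖ ≤ Real.sqrt (|z.im|⁻¹ + ‖z‖ * |z.im|⁻¹ ^ 2) :=
      aux_XR_norm_le X z hz
    have h2 : ‖R * Xᴴ‖ ≤ Real.sqrt (|z.im|⁻¹ + ‖z‖ * |z.im|⁻¹ ^ 2) := by
      have hconj : (R * Xᴴ)ᴴ = X * (Xᴴ * X - (starRingEnd ℂ z) • 1)⁻¹ := by
        rw [Matrix.conjTranspose_mul, Matrix.conjTranspose_conjTranspose, hRdef,
          Matrix.conjTranspose_nonsing_inv]
        congr 2
        rw [Matrix.conjTranspose_sub, hhermM.eq, Matrix.conjTranspose_smul,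
          Matrix.conjTranspose_one]
        rfl
      have hzc : (starRingEnd ℂ z).im ≠ 0 := by
        simp [Complex.conj_im, hz]
      have hb := aux_XR_norm_le X (starRingEnd ℂ z) hzc
      rw [← Matrix.l2_opNorm_conjTranspose (R * Xᴴ), hconj]
      convert hb using 3
      · rw [Complex.conj_im, abs_neg]
      · rw [Complex.norm_conj, Complex.conj_im, abs_neg]
    refine hbound.trans ?_
    linarith
end

section
/- Let W ∈ ℂ^{N×N} be Hermitian positive definite and b ∈ ℂ^N a unit vector, and let T be an n×n Jacobi matrix (n ≤ N) with (T^m)_{11} = b*W^m b for all integers m ≥ 0 (the Lanczos tridiagonalization of (W,b)). Let T = HHᵀ be its Cholesky factorization with H lower bidiagonal with positive diagonal entries α_0,…,α_{n−1} and subdiagonal entries β_0,…,β_{n−2}. For 1 ≤ k < n, let x_k be the minimizer of ‖W⁻¹b − y‖_W over the Krylov subspace K_k, with residual r_k = b − Wx_k and error e_k = W⁻¹b − x_k. Let L_k be the trailing (n−k)×(n−k) principal submatrix of H (rows and columns k+1 through n). Then ‖e_k‖_W = ‖r_k‖₂ · √(((L_k L_kᵀ)⁻¹)_{11}). -/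
open MeasureTheory Matrix
open scoped ComplexOrder
open Polynomial

namespace Stmt12
set_option linter.unusedSectionVars false

set_option linter.unusedSectionVars false


lemma star_single0 {m : ℕ} (i : Fin m) : star (Pi.single i 1 : Fin m → ℂ) = Pi.single i 1 := by
  funext j
  rcases eq_or_ne j i with h | h <;> simp [Pi.single_apply, h]

lemma dot_single_mulVec {m : ℕ} (A : Matrix (Fin m) (Fin m) ℂ) (i j : Fin m) :
    star (Pi.single i (1:ℂ)) ⬝ᵥ A.mulVec (Pi.single j (1:ℂ)) = A i j := by
  rw [star_single0]
  simp [Matrix.mulVec_single, single_dotProduct]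

lemma sum_mulVec' {m m' : ℕ} (s : Finset ℕ) (f : ℕ → Matrix (Fin m) (Fin m') ℂ) (v : Fin m' → ℂ) :
    (∑ i ∈ s, f i).mulVec v = ∑ i ∈ s, (f i).mulVec v := by
  funext j
  simp only [Matrix.mulVec, dotProduct, Finset.sum_apply, Matrix.sum_apply, Finset.sum_mul]
  rw [Finset.sum_comm]

lemma sum_dot' {m : ℕ} (s : Finset ℕ) (f : ℕ → Fin m → ℂ) (w : Fin m → ℂ) :
    (∑ i ∈ s, f i) ⬝ᵥ w = ∑ i ∈ s, f i ⬝ᵥ w := by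
  simp only [dotProduct, Finset.sum_apply, Finset.sum_mul]
  rw [Finset.sum_comm]

lemma dot_sum' {m : ℕ} (s : Finset ℕ) (w : Fin m → ℂ) (f : ℕ → Fin m → ℂ) :
    w ⬝ᵥ (∑ i ∈ s, f i) = ∑ i ∈ s, w ⬝ᵥ f i := by
  simp only [dotProduct, Finset.sum_apply, Finset.mul_sum]
  rw [Finset.sum_comm]

lemma mulVec_sum' {m m' : ℕ} (A : Matrix (Fin m) (Fin m') ℂ) (s : Finset ℕ) (f : ℕ → Fin m' → ℂ) :
    A.mulVec (∑ i ∈ s, f i) = ∑ i ∈ s, A.mulVec (f i) := by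
  funext j
  simp only [Matrix.mulVec, dotProduct, Finset.sum_apply, Finset.mul_sum]
  rw [Finset.sum_comm]


lemma lin_expand {m : ℕ} (A : Matrix (Fin m) (Fin m) ℂ) (w : Fin m → ℂ) (g : ℕ → Fin m → ℂ)
    (c : ℕ → ℂ) (M2 : ℕ) :
    star w ⬝ᵥ A.mulVec (∑ j ∈ Finset.range M2, c j • g j)
      = ∑ j ∈ Finset.range M2, c j * (star w ⬝ᵥ A.mulVec (g j)) := by
  rw [mulVec_sum', dot_sum']
  refine Finset.sum_congr rfl fun j _ => ?_
  rw [Matrix.mulVec_smul, dotProduct_smul, smul_eq_mul]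

lemma quad_form_pow {m : ℕ} (A : Matrix (Fin m) (Fin m) ℂ) (hA : Aᴴ = A) (v : Fin m → ℂ)
    (i s j : ℕ) :
    star ((A^i).mulVec v) ⬝ᵥ (A^s).mulVec ((A^j).mulVec v)
      = star v ⬝ᵥ (A^(i+s+j)).mulVec v := by
  rw [Matrix.star_mulVec, Matrix.conjTranspose_pow, hA, Matrix.mulVec_mulVec,
    ← Matrix.dotProduct_mulVec, Matrix.mulVec_mulVec, ← mul_assoc, ← pow_add, ← pow_add]

lemma quad_expand {m : ℕ} (A : Matrix (Fin m) (Fin m) ℂ) (f g : ℕ → Fin m → ℂ)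
    (c c' : ℕ → ℂ) (M1 M2 : ℕ) :
    star (∑ i ∈ Finset.range M1, c i • f i) ⬝ᵥ A.mulVec (∑ j ∈ Finset.range M2, c' j • g j)
      = ∑ i ∈ Finset.range M1, ∑ j ∈ Finset.range M2,
          star (c i) * c' j * (star (f i) ⬝ᵥ A.mulVec (g j)) := by
  rw [star_sum, sum_dot']
  refine Finset.sum_congr rfl fun i _ => ?_
  rw [mulVec_sum', dot_sum']
  refine Finset.sum_congr rfl fun j _ => ?_
  rw [star_smul, Matrix.mulVec_smul, smul_dotProduct, dotProduct_smul]
  simp only [smul_eq_mul]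
  ring




lemma mom_poly {N m : ℕ} (W : Matrix (Fin N) (Fin N) ℂ) (b : Fin N → ℂ)
    (T' : Matrix (Fin m) (Fin m) ℂ) (i0 : Fin m)
    (hmom' : ∀ s : ℕ, (T'^s) i0 i0 = star b ⬝ᵥ (W^s).mulVec b) (p : ℂ[X]) :
    star b ⬝ᵥ (aeval W p).mulVec b = (aeval T' p) i0 i0 := by
  rw [aeval_eq_sum_range' (n := p.natDegree + 1) (Nat.lt_succ_self _) W,
      aeval_eq_sum_range' (n := p.natDegree + 1) (Nat.lt_succ_self _) T']
  rw [sum_mulVec', dot_sum']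
  rw [Matrix.sum_apply]
  refine Finset.sum_congr rfl fun i _ => ?_
  rw [Matrix.smul_mulVec, dotProduct_smul, Matrix.smul_apply, hmom' i]

lemma herm_aeval {N : ℕ} (W : Matrix (Fin N) (Fin N) ℂ) (hW' : Wᴴ = W) (p : ℂ[X])
    (hpreal : ∀ i, star (p.coeff i) = p.coeff i) :
    (aeval W p)ᴴ = aeval W p := by
  rw [aeval_eq_sum_range' (n := p.natDegree + 1) (Nat.lt_succ_self _) W]
  rw [Matrix.conjTranspose_sum]
  refine Finset.sum_congr rfl fun i _ => ?_
  rw [Matrix.conjTranspose_smul, Matrix.conjTranspose_pow, hW', hpreal]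

lemma poly_kills_b {N m : ℕ} (W : Matrix (Fin N) (Fin N) ℂ) (hW' : Wᴴ = W) (b : Fin N → ℂ)
    (T' : Matrix (Fin m) (Fin m) ℂ) (i0 : Fin m)
    (hmom' : ∀ s : ℕ, (T'^s) i0 i0 = star b ⬝ᵥ (W^s).mulVec b) (p : ℂ[X])
    (hpreal : ∀ i, star (p.coeff i) = p.coeff i)
    (hCH : aeval T' p = 0) :
    (aeval W p).mulVec b = 0 := by
  have hherm := herm_aeval W hW' p hpreal
  have h0 : star ((aeval W p).mulVec b) ⬝ᵥ ((aeval W p).mulVec b) = 0 := by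
    rw [Matrix.star_mulVec, hherm, ← Matrix.dotProduct_mulVec, Matrix.mulVec_mulVec,
      ← _root_.map_mul, mom_poly W b T' i0 hmom', _root_.map_mul, hCH, Matrix.zero_mul, Matrix.zero_apply]
  exact dotProduct_star_self_eq_zero.mp h0

lemma solve_from_poly {m : ℕ} (A : Matrix (Fin m) (Fin m) ℂ) (v : Fin m → ℂ) (p : ℂ[X])
    (hp : (aeval A p).mulVec v = 0) (h0 : p.coeff 0 ≠ 0) :
    A.mulVec ((aeval A (C (-(p.coeff 0)⁻¹) * p.divX)).mulVec v) = v := by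
  rw [Matrix.mulVec_mulVec]
  have h1 : A * aeval A (C (-(p.coeff 0)⁻¹) * p.divX)
      = (-(p.coeff 0)⁻¹) • (aeval A p - (p.coeff 0) • 1) := by
    have : A * aeval A (C (-(p.coeff 0)⁻¹) * p.divX)
        = aeval A (X * (C (-(p.coeff 0)⁻¹) * p.divX)) := by
      rw [_root_.map_mul (aeval A) X (C (-(p.coeff 0)⁻¹) * p.divX), aeval_X]
    rw [this]
    have h2 : X * (C (-(p.coeff 0)⁻¹) * p.divX) = C (-(p.coeff 0)⁻¹) * (p - C (p.coeff 0)) := by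
      linear_combination (C (-(p.coeff 0)⁻¹)) * (X_mul_divX_add (p := p))
    rw [h2, _root_.map_mul, aeval_C, map_sub, aeval_C]
    rw [Algebra.algebraMap_eq_smul_one, Algebra.algebraMap_eq_smul_one]
    rw [smul_mul_assoc, one_mul]
  rw [h1, Matrix.smul_mulVec, Matrix.sub_mulVec, hp, Matrix.smul_mulVec,
    Matrix.one_mulVec, zero_sub, smul_neg, smul_smul]
  field_simp
  simp




lemma krylov_support {m : ℕ} (A : Matrix (Fin (m+1)) (Fin (m+1)) ℂ)
    (hA : ∀ a c : Fin (m+1), (c:ℕ)+1 < (a:ℕ) → A a c = 0) :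
    ∀ (i : ℕ) (j : Fin (m+1)), (i:ℕ) < (j:ℕ) →
      ((A^i).mulVec (Pi.single 0 1)) j = 0 := by
  intro i
  induction i with
  | zero =>
    intro j hj
    simp only [pow_zero, Matrix.one_mulVec]
    have : j ≠ 0 := by
      intro h; rw [h] at hj; simp at hj
    simp [Pi.single_apply, this]
  | succ i ih =>
    intro j hj
    rw [pow_succ', ← Matrix.mulVec_mulVec]
    set w := (A^i).mulVec (Pi.single 0 1) with hw
    show (A.mulVec w) j = 0
    rw [Matrix.mulVec, dotProduct]
    refine Finset.sum_eq_zero fun l _ => ?_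
    rcases lt_or_ge ((l:ℕ)+1) (j:ℕ) with h | h
    · rw [hA j l h, zero_mul]
    · have : (i:ℕ) < (l:ℕ) := by omega
      rw [ih l this, mul_zero]

lemma krylov_lead {m : ℕ} (A : Matrix (Fin (m+1)) (Fin (m+1)) ℂ)
    (hA : ∀ a c : Fin (m+1), (c:ℕ)+1 < (a:ℕ) → A a c = 0)
    (hsub : ∀ a c : Fin (m+1), (c:ℕ)+1 = (a:ℕ) → A a c ≠ 0) :
    ∀ (i : ℕ) (hi : i < m+1), ((A^i).mulVec (Pi.single 0 1)) ⟨i, hi⟩ ≠ 0 := by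
  intro i
  induction i with
  | zero => intro hi; simp
  | succ i ih =>
    intro hi
    rw [pow_succ', ← Matrix.mulVec_mulVec]
    set w := (A^i).mulVec (Pi.single 0 1) with hw
    show (A.mulVec w) ⟨i+1, hi⟩ ≠ 0
    rw [Matrix.mulVec, dotProduct]
    have hi' : i < m + 1 := by omega
    rw [Finset.sum_eq_single (⟨i, hi'⟩ : Fin (m+1))]
    · exact mul_ne_zero (hsub _ _ rfl) (ih hi')
    · intro l _ hl
      rcases lt_or_ge ((l:ℕ)+1) (i+1:ℕ) with h | h
      · rw [hA _ l h, zero_mul]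
      · have : (i:ℕ) < (l:ℕ) := by
          rcases Nat.lt_or_ge (i:ℕ) (l:ℕ) with h' | h'
          · exact h'
          · exfalso; apply hl; apply Fin.ext; simp; omega
        have hz : w l = 0 := by rw [hw]; exact krylov_support A hA i l this
        rw [hz, mul_zero]
    · intro h; exact absurd (Finset.mem_univ _) h

lemma ortho_coords {m : ℕ} (A : Matrix (Fin (m+1)) (Fin (m+1)) ℂ)
    (hA : ∀ a c : Fin (m+1), (c:ℕ)+1 < (a:ℕ) → A a c = 0)
    (hsub : ∀ a c : Fin (m+1), (c:ℕ)+1 = (a:ℕ) → A a c ≠ 0)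
    (r : Fin (m+1) → ℂ) (k : ℕ) (hk : k ≤ m+1)
    (h : ∀ i : ℕ, i < k → star ((A^i).mulVec (Pi.single 0 1)) ⬝ᵥ r = 0) :
    ∀ j : Fin (m+1), (j:ℕ) < k → r j = 0 := by
  suffices H : ∀ jn : ℕ, ∀ (hj : jn < k), r ⟨jn, lt_of_lt_of_le hj hk⟩ = 0 by
    intro j hj
    have := H (j:ℕ) hj
    rwa [Fin.eta] at this
  intro jn
  induction jn using Nat.strong_induction_on with
  | _ jn ih =>
    intro hj
    have h0 := h jn hj
    set v := (A^jn).mulVec (Pi.single 0 1) with hv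
    have hjm : jn < m + 1 := lt_of_lt_of_le hj hk
    have hsum : star v ⬝ᵥ r = star (v ⟨jn, hjm⟩) * r ⟨jn, hjm⟩ := by
      rw [dotProduct]
      rw [Finset.sum_eq_single (⟨jn, hjm⟩ : Fin (m+1))]
      · rfl
      · intro l _ hl
        rcases Nat.lt_or_ge (jn:ℕ) (l:ℕ) with h' | h'
        · have : v l = 0 := krylov_support A hA jn l h'
          simp [this]
        · have hlj : (l:ℕ) < jn := by
            rcases Nat.lt_or_ge (l:ℕ) jn with h'' | h''
            · exact h''
            · exfalso; apply hl; apply Fin.ext; simp; omega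
          have hthis := ih (l:ℕ) hlj (lt_trans hlj hj)
          have hle : r l = 0 := by rwa [Fin.eta] at hthis
          rw [hle, mul_zero]
      · intro hmem; exact absurd (Finset.mem_univ _) hmem
    rw [hsum] at h0
    rcases mul_eq_zero.mp h0 with h1 | h1
    · exact absurd (star_eq_zero.mp h1) (krylov_lead A hA hsub jn hjm)
    · exact h1

lemma mulVec_map_ofReal {m m' : ℕ} (M : Matrix (Fin m) (Fin m') ℝ) (v : Fin m' → ℝ) :
    (M.map (fun x : ℝ => (x : ℂ))).mulVec (fun i => (v i : ℂ))
      = fun i => ((M.mulVec v i : ℝ) : ℂ) := by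
  funext i
  simp [Matrix.mulVec, dotProduct, Matrix.map_apply]




noncomputable def vrec (α β : ℕ → ℝ) (k : ℕ) : ℕ → ℝ
  | 0 => (α k)⁻¹
  | (j+1) => -(β (k+j)) * vrec α β k j / α (k+j+1)

lemma bidiag_mulVec {m : ℕ} (d s : ℕ → ℝ) (M : Matrix (Fin m) (Fin m) ℝ)
    (hM : ∀ i j : Fin m, M i j =
      if (i:ℕ) = (j:ℕ) then d i else if (i:ℕ) = (j:ℕ)+1 then s j else 0)
    (u : Fin m → ℝ) (i : Fin m) :
    M.mulVec u i = d i * u i +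
      (if hi : 0 < (i:ℕ) then s ((i:ℕ)-1) * u ⟨(i:ℕ)-1, by omega⟩ else 0) := by
  rw [Matrix.mulVec, dotProduct]
  have key : ∀ j : Fin m, M i j * u j =
      (if i = j then d i * u j else 0) + (if (i:ℕ) = (j:ℕ)+1 then s j * u j else 0) := by
    intro j
    rw [hM i j, ite_mul, ite_mul, zero_mul]
    rcases eq_or_ne ((i:ℕ)) ((j:ℕ)) with h1 | h1
    · rw [if_pos h1, if_pos (Fin.ext h1), if_neg (show ¬((i:ℕ) = (j:ℕ)+1) by omega), add_zero]
    · rw [if_neg h1, if_neg (show ¬(i = j) from fun hc => h1 (congrArg Fin.val hc)), zero_add]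
  rw [Finset.sum_congr rfl fun j _ => key j, Finset.sum_add_distrib]
  congr 1
  · rw [Finset.sum_ite_eq Finset.univ i (fun j => d i * u j)]
    simp
  · rcases Nat.eq_zero_or_pos (i:ℕ) with h0 | h0
    · rw [dif_neg (by omega)]
      refine Finset.sum_eq_zero fun j _ => ?_
      rw [if_neg (by omega)]
    · rw [dif_pos h0]
      have hlt : (i:ℕ)-1 < m := by have := i.isLt; omega
      rw [Finset.sum_eq_single (⟨(i:ℕ)-1, hlt⟩ : Fin m)]
      · rw [if_pos (by simp; omega)]
      · intro j _ hj
        rw [if_neg]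
        intro hc
        apply hj; apply Fin.ext; simp; omega
      · intro hmem; exact absurd (Finset.mem_univ _) hmem

section chol
variable (n k : ℕ) (hk : 1 ≤ k) (hkn : k < n + 1)
    (α β : ℕ → ℝ) (hα : ∀ i, i < n + 1 → 0 < α i) (hβ : ∀ i, i < n → 0 < β i)
    (H : Matrix (Fin (n + 1)) (Fin (n + 1)) ℝ)
    (hH : ∀ i j : Fin (n + 1), H i j =
      if (i : ℕ) = (j : ℕ) then α i
      else if (i : ℕ) = (j : ℕ) + 1 then β j else 0)
    (L : Matrix (Fin (n + 1 - k)) (Fin (n + 1 - k)) ℝ)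
    (hL : ∀ i j : Fin (n + 1 - k),
      L i j = H ⟨k + i, by have := i.isLt; omega⟩ ⟨k + j, by have := j.isLt; omega⟩)

include hH hL in
lemma L_entry : ∀ i j : Fin (n+1-k), L i j =
    if (i:ℕ) = (j:ℕ) then α (k+(i:ℕ)) else if (i:ℕ) = (j:ℕ)+1 then β (k+(j:ℕ)) else 0 := by
  intro i j
  rw [hL i j, hH]
  show (if k+(i:ℕ) = k+(j:ℕ) then α (k+(i:ℕ)) else if k+(i:ℕ) = (k+(j:ℕ))+1 then β (k+(j:ℕ)) else 0)
      = if (i:ℕ) = (j:ℕ) then α (k+(i:ℕ)) else if (i:ℕ) = (j:ℕ)+1 then β (k+(j:ℕ)) else 0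
  rcases eq_or_ne ((i:ℕ)) ((j:ℕ)) with h | h
  · rw [if_pos (show k+(i:ℕ) = k+(j:ℕ) by omega), if_pos h]
  · rw [if_neg (show ¬(k+(i:ℕ) = k+(j:ℕ)) by omega), if_neg h]
    rcases eq_or_ne ((i:ℕ)) ((j:ℕ)+1) with h2 | h2
    · rw [if_pos (show k+(i:ℕ) = (k+(j:ℕ))+1 by omega), if_pos h2]
    · rw [if_neg (show ¬(k+(i:ℕ) = (k+(j:ℕ))+1) by omega), if_neg h2]

include hk hkn hα hβ hH hL in
lemma L_solve : L.mulVec (fun j => vrec α β k (j:ℕ)) = Pi.single ⟨0, by omega⟩ 1 := by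
  funext i
  rw [bidiag_mulVec (fun t => α (k+t)) (fun t => β (k+t)) L (L_entry n k hkn α β H hH L hL) _ i]
  rcases Nat.eq_zero_or_pos (i:ℕ) with h0 | h0
  · rw [dif_neg (by omega)]
    have hieq : i = ⟨0, by omega⟩ := Fin.ext (by simp [h0])
    rw [hieq]
    simp only [Pi.single_apply, if_pos rfl]
    show α (k+0) * vrec α β k 0 + 0 = 1
    rw [vrec]
    have := hα k (by omega)
    rw [add_zero, Nat.add_zero]
    field_simp
  · rw [dif_pos h0]
    have hi1 : (i:ℕ) = ((i:ℕ)-1)+1 := by omega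
    have hrec : vrec α β k (i:ℕ) = -(β (k+((i:ℕ)-1))) * vrec α β k ((i:ℕ)-1) / α (k+((i:ℕ)-1)+1) := by
      conv_lhs => rw [hi1]
      rw [vrec]
    have hii : i ≠ (⟨0, by omega⟩ : Fin (n+1-k)) := by
      intro h; rw [h] at h0; simp at h0
    have hαπ : α (k+((i:ℕ)-1)+1) ≠ 0 := by
      have := i.isLt
      have := hα (k+((i:ℕ)-1)+1) (by omega)
      positivity
    rw [hrec, Pi.single_apply, if_neg hii]
    have hk1 : k + (i:ℕ) = k+((i:ℕ)-1)+1 := by omega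
    rw [hk1]
    field_simp
    ring

include hk hkn hα hβ hH in
lemma H_solve : H.mulVec (fun i : Fin (n+1) =>
      if k ≤ (i:ℕ) then vrec α β k ((i:ℕ)-k) else 0) = Pi.single ⟨k, hkn⟩ 1 := by
  funext i
  rw [bidiag_mulVec α β H hH _ i]
  have hsing : (Pi.single (⟨k, hkn⟩ : Fin (n+1)) (1:ℝ) : Fin (n+1) → ℝ) i = if (i:ℕ) = k then (1:ℝ) else 0 := by
    rw [Pi.single_apply]
    rcases eq_or_ne (i:ℕ) k with h | h
    · rw [if_pos (Fin.ext h), if_pos h]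
    · rw [if_neg (fun hc => h (congrArg Fin.val hc)), if_neg h]
  rw [hsing]
  simp only [Fin.val_mk]
  rcases Nat.lt_trichotomy (i:ℕ) k with hik | hik | hik
  · rw [if_neg (show ¬((i:ℕ) = k) by omega), if_neg (show ¬(k ≤ (i:ℕ)) by omega), mul_zero, zero_add]
    rcases Nat.eq_zero_or_pos (i:ℕ) with h0 | h0
    · rw [dif_neg (show ¬(0 < (i:ℕ)) by omega)]
    · rw [dif_pos h0, if_neg (show ¬(k ≤ (i:ℕ)-1) by omega), mul_zero]
  · rw [if_pos (show (i:ℕ) = k from hik), if_pos (show k ≤ (i:ℕ) by omega),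
      dif_pos (show 0 < (i:ℕ) by omega), if_neg (show ¬(k ≤ (i:ℕ)-1) by omega), mul_zero, add_zero]
    have h5 : (i:ℕ) - k = 0 := by omega
    rw [h5, vrec, hik]
    have := hα k (by omega)
    field_simp
  · rw [if_neg (show ¬((i:ℕ) = k) by omega), if_pos (show k ≤ (i:ℕ) by omega),
      dif_pos (show 0 < (i:ℕ) by omega), if_pos (show k ≤ (i:ℕ)-1 by omega)]
    have hlt := i.isLt
    have hrec : vrec α β k ((i:ℕ)-k) = -(β (k+((i:ℕ)-k-1))) * vrec α β k ((i:ℕ)-k-1) / α (k+((i:ℕ)-k-1)+1) := by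
      have hi1 : (i:ℕ)-k = ((i:ℕ)-k-1)+1 := by omega
      conv_lhs => rw [hi1]
      rw [vrec]
    have e1 : k + ((i:ℕ)-k-1) = (i:ℕ)-1 := by omega
    have e2 : k + ((i:ℕ)-k-1) + 1 = (i:ℕ) := by omega
    have e3 : (i:ℕ)-1-k = (i:ℕ)-k-1 := by omega
    rw [hrec, e2, e1, e3]
    have hαπ : α (i:ℕ) ≠ 0 := by have := hα (i:ℕ) (by omega); positivity
    field_simp
    ring

include hα hH in
lemma H_det_isUnit : IsUnit H.det := by
  have htri : H.BlockTriangular OrderDual.toDual := by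
    intro a c h
    have : (a:ℕ) < (c:ℕ) := h
    rw [hH a c, if_neg (by omega), if_neg (by omega)]
  rw [Matrix.det_of_lowerTriangular H htri]
  rw [isUnit_iff_ne_zero]
  apply Finset.prod_ne_zero_iff.mpr
  intro a _
  rw [hH a a, if_pos rfl]
  have := hα (a:ℕ) a.isLt
  positivity

include hkn hα hH hL in
lemma L_det_isUnit : IsUnit L.det := by
  have hE := L_entry n k hkn α β H hH L hL
  have htri : L.BlockTriangular OrderDual.toDual := by
    intro a c h
    have : (a:ℕ) < (c:ℕ) := h
    rw [hE a c, if_neg (by omega), if_neg (by omega)]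
  rw [Matrix.det_of_lowerTriangular L htri]
  rw [isUnit_iff_ne_zero]
  apply Finset.prod_ne_zero_iff.mpr
  intro a _
  rw [hE a a, if_pos rfl]
  have hlt := a.isLt
  have := hα (k+(a:ℕ)) (by omega)
  positivity

include hk hkn hα hβ hH hL in
lemma LLt_inv_entry :
    (L * Lᵀ)⁻¹ ⟨0, by omega⟩ ⟨0, by omega⟩ = ∑ j : Fin (n+1-k), (vrec α β k (j:ℕ))^2 := by
  have hdet := L_det_isUnit n k hkn α β hα H hH L hL
  have hv := L_solve n k hk hkn α β hα hβ H hH L hL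
  have hvinv : (fun j : Fin (n+1-k) => vrec α β k (j:ℕ))
      = L⁻¹.mulVec (Pi.single ⟨0, by omega⟩ 1) := by
    rw [← hv, Matrix.mulVec_mulVec, Matrix.nonsing_inv_mul L hdet, Matrix.one_mulVec]
  rw [Matrix.mul_inv_rev, Matrix.mul_apply]
  have htr : (Lᵀ)⁻¹ = (L⁻¹)ᵀ := (Matrix.transpose_nonsing_inv L).symm
  rw [htr]
  refine Finset.sum_congr rfl fun l _ => ?_
  have hentry : L⁻¹ l ⟨0, by omega⟩ = vrec α β k (l:ℕ) := by
    have h2 := congrFun hvinv l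
    rw [h2, Matrix.mulVec_single]
    simp
  rw [Matrix.transpose_apply, hentry]
  ring

end chol



lemma sum_sq_pad (m k : ℕ) (hkm : k ≤ m) (f : ℕ → ℝ) :
    ∑ i : Fin m, (if k ≤ (i:ℕ) then f ((i:ℕ)-k) else 0)^2 = ∑ j : Fin (m-k), (f (j:ℕ))^2 := by
  rw [Fin.sum_univ_eq_sum_range (fun t => (if k ≤ t then f (t-k) else 0)^2) m,
      Fin.sum_univ_eq_sum_range (fun t => (f t)^2) (m-k)]
  conv_lhs => rw [Finset.range_eq_Ico]
  rw [← Finset.sum_Ico_consecutive _ (Nat.zero_le k) hkm]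
  have h1 : ∑ i ∈ Finset.Ico 0 k, (if k ≤ i then f (i-k) else 0)^2 = 0 := by
    refine Finset.sum_eq_zero fun i hi => ?_
    rw [if_neg (by have := (Finset.mem_Ico.mp hi).2; omega)]
    ring
  rw [h1, zero_add, Finset.sum_Ico_eq_sum_range]
  refine Finset.sum_congr rfl fun i _ => ?_
  rw [if_pos (by omega)]
  congr 2
  omega

section tband
variable (n : ℕ) (α β : ℕ → ℝ)
    (H : Matrix (Fin (n + 1)) (Fin (n + 1)) ℝ)
    (hH : ∀ i j : Fin (n + 1), H i j =
      if (i : ℕ) = (j : ℕ) then α i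
      else if (i : ℕ) = (j : ℕ) + 1 then β j else 0)
    (T : Matrix (Fin (n + 1)) (Fin (n + 1)) ℝ) (hT : T = H * Hᵀ)

include hH in
lemma H_upper_zero : ∀ i j : Fin (n+1), (i:ℕ) < (j:ℕ) → H i j = 0 := by
  intro i j h
  rw [hH, if_neg (by omega), if_neg (by omega)]

include hH hT in
lemma T_band : ∀ i j : Fin (n+1), (j:ℕ)+1 < (i:ℕ) → T i j = 0 := by
  intro i j h
  rw [hT, Matrix.mul_apply]
  refine Finset.sum_eq_zero fun s _ => ?_
  rcases Nat.lt_or_ge (s:ℕ) ((i:ℕ)-1) with hs | hs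
  · have : H i s = 0 := by rw [hH, if_neg (by omega), if_neg (by omega)]
    rw [this, zero_mul]
  · have : Hᵀ s j = 0 := by
      rw [Matrix.transpose_apply]
      exact H_upper_zero n α β H hH j s (by omega)
    rw [this, mul_zero]

include hH hT in
lemma T_sub : ∀ i j : Fin (n+1), (j:ℕ)+1 = (i:ℕ) → T i j = β j * α j := by
  intro i j h
  rw [hT, Matrix.mul_apply]
  rw [Finset.sum_eq_single j]
  · rw [Matrix.transpose_apply, hH i j, hH j j, if_neg (by omega), if_pos h.symm, if_pos rfl]
  · intro s _ hs
    rcases Nat.lt_or_ge (s:ℕ) (j:ℕ) with h1 | h1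
    · have hz : H i s = 0 := by
        rw [hH, if_neg (by omega), if_neg (by omega)]
      rw [hz, zero_mul]
    · have hgt : (j:ℕ) < (s:ℕ) := by
        rcases Nat.eq_or_lt_of_le h1 with h2 | h2
        · exact absurd (Fin.ext h2.symm) hs
        · exact h2
      have hz : Hᵀ s j = 0 := by
        rw [Matrix.transpose_apply]
        exact H_upper_zero n α β H hH j s hgt
      rw [hz, mul_zero]
  · intro hmem; exact absurd (Finset.mem_univ _) hmem

include hT in
lemma T_symm : Tᵀ = T := by
  rw [hT, Matrix.transpose_mul, Matrix.transpose_transpose]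

end tband

lemma posdef_re_nonneg {N : ℕ} (W : Matrix (Fin N) (Fin N) ℂ) (hW : W.PosDef)
    (v : Fin N → ℂ) : 0 ≤ (star v ⬝ᵥ W.mulVec v).re := by
  rcases eq_or_ne v 0 with h | h
  · simp [h]
  · have := hW.dotProduct_mulVec_pos h
    rw [Complex.lt_def] at this
    exact le_of_lt this.1

lemma conj_dot {N : ℕ} (W : Matrix (Fin N) (Fin N) ℂ) (hW' : Wᴴ = W) (a c : Fin N → ℂ) :
    star (star a ⬝ᵥ W.mulVec c) = star c ⬝ᵥ W.mulVec a := by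
  rw [Matrix.star_dotProduct, star_star, Matrix.star_mulVec, hW',
    ← Matrix.dotProduct_mulVec]

lemma normal_eq {N : ℕ} (W : Matrix (Fin N) (Fin N) ℂ) (hW : W.PosDef)
    (x xk : Fin N → ℂ) (S : Submodule ℂ (Fin N → ℂ)) (hxk : xk ∈ S)
    (hmin : ∀ y ∈ S, (star (x - xk) ⬝ᵥ W.mulVec (x - xk)).re ≤
      (star (x - y) ⬝ᵥ W.mulVec (x - y)).re) :
    ∀ v ∈ S, star v ⬝ᵥ W.mulVec (x - xk) = 0 := by
  intro v hv
  have hW' : Wᴴ = W := hW.isHermitian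
  set u := x - xk with hu
  set γ := star v ⬝ᵥ W.mulVec u with hγ
  by_contra hne
  set Bvv := star v ⬝ᵥ W.mulVec v with hB
  set ε : ℝ := (Bvv.re + 1)⁻¹ with hε
  have hBnn : 0 ≤ Bvv.re := posdef_re_nonneg W hW v
  have hεpos : 0 < ε := by rw [hε]; positivity
  set t : ℂ := (ε:ℂ) * γ with ht
  have hy : xk + t • v ∈ S := S.add_mem hxk (S.smul_mem t hv)
  have hid : x - (xk + t • v) = u - t • v := by rw [hu]; abel
  have hexp : star (u - t • v) ⬝ᵥ W.mulVec (u - t • v)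
      = star u ⬝ᵥ W.mulVec u - star t * γ - t * star γ + t * star t * Bvv := by
    rw [star_sub, sub_dotProduct, Matrix.mulVec_sub, dotProduct_sub,
      dotProduct_sub]
    rw [star_smul, smul_dotProduct, Matrix.mulVec_smul, dotProduct_smul,
      dotProduct_smul, smul_dotProduct]
    have h1 : star u ⬝ᵥ W.mulVec v = star γ := by
      rw [hγ, conj_dot W hW' v u]
    rw [h1]
    simp only [smul_eq_mul, star_trivial]
    ring
  have hle := hmin (xk + t • v) hy
  rw [hid, hexp] at hle
  have hstart : star t = (ε:ℂ) * star γ := by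
    rw [ht, star_mul']
    congr 1
    simp [Complex.star_def, Complex.conj_ofReal]
  have e1 : star t * γ = ((ε * Complex.normSq γ : ℝ):ℂ) := by
    rw [hstart, mul_assoc]
    rw [show star γ * γ = ((Complex.normSq γ : ℝ):ℂ) by
      rw [Complex.star_def, Complex.normSq_eq_conj_mul_self]]
    push_cast
    ring
  have e2 : t * star γ = ((ε * Complex.normSq γ : ℝ):ℂ) := by
    rw [ht, mul_assoc]
    rw [show γ * star γ = ((Complex.normSq γ : ℝ):ℂ) by
      rw [Complex.star_def, Complex.mul_conj]]
    push_cast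
    ring
  have e3 : t * star t = ((ε^2 * Complex.normSq γ : ℝ):ℂ) := by
    rw [ht, hstart]
    rw [show (ε:ℂ) * γ * ((ε:ℂ) * star γ) = (ε:ℂ) * (ε:ℂ) * (γ * star γ) by ring]
    rw [show γ * star γ = ((Complex.normSq γ : ℝ):ℂ) by
      rw [Complex.star_def, Complex.mul_conj]]
    push_cast
    ring
  have hre : (star u ⬝ᵥ W.mulVec u - star t * γ - t * star γ + t * star t * Bvv).re
      = (star u ⬝ᵥ W.mulVec u).re - 2 * (ε * Complex.normSq γ)
        + (ε^2 * Complex.normSq γ) * Bvv.re := by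
    rw [e1, e2, e3]
    rw [Complex.add_re, Complex.sub_re, Complex.sub_re, Complex.ofReal_re,
      Complex.re_ofReal_mul]
    ring
  rw [hre] at hle
  have hγpos : 0 < Complex.normSq γ := Complex.normSq_pos.mpr hne
  have hfac : 0 ≤ ε * Complex.normSq γ * (ε * Bvv.re - 2) := by nlinarith
  have hεB : ε * Bvv.re < 1 := by
    rw [hε, inv_mul_lt_iff₀ (by positivity)]
    linarith
  have h7 : ε * Bvv.re - 2 < 0 := by linarith
  exact absurd hfac (not_le.mpr (mul_neg_of_pos_of_neg (mul_pos hεpos hγpos) h7))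


end Stmt12
open Stmt12

/-- In the setting of the Lanczos tridiagonalization `T = H Hᵀ` of a Hermitian
positive definite pair `(W, b)`, with `L` the trailing principal submatrix of `H` on rows
and columns `k+1, …, n+1`, the `k`-th conjugate gradient error `e_k = W⁻¹ b - x_k` and
residual `r_k = b - W x_k` satisfy `‖e_k‖_W = ‖r_k‖₂ · √(((L Lᵀ)⁻¹)_{11})`. -/
theorem stmt_12 (N n k : ℕ) (hk : 1 ≤ k) (hkn : k < n + 1) (hn : n + 1 ≤ N)
    (W : Matrix (Fin N) (Fin N) ℂ) (hW : W.PosDef)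
    (b : Fin N → ℂ) (hb : ∑ j, ‖b j‖ ^ 2 = 1)
    (α β : ℕ → ℝ) (hα : ∀ i, i < n + 1 → 0 < α i) (hβ : ∀ i, i < n → 0 < β i)
    (H : Matrix (Fin (n + 1)) (Fin (n + 1)) ℝ)
    (hH : ∀ i j : Fin (n + 1), H i j =
      if (i : ℕ) = (j : ℕ) then α i
      else if (i : ℕ) = (j : ℕ) + 1 then β j else 0)
    (T : Matrix (Fin (n + 1)) (Fin (n + 1)) ℝ) (hT : T = H * Hᵀ)
    (hmom : ∀ m : ℕ, ((T ^ m) 0 0 : ℂ) = star b ⬝ᵥ (W ^ m).mulVec b)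
    (x xk : Fin N → ℂ) (hx : W.mulVec x = b)
    (hxk : xk ∈ Submodule.span ℂ (Set.range fun i : Fin k => (W ^ (i : ℕ)).mulVec b))
    (hmin : ∀ y ∈ Submodule.span ℂ (Set.range fun i : Fin k => (W ^ (i : ℕ)).mulVec b),
      (star (x - xk) ⬝ᵥ W.mulVec (x - xk)).re ≤
        (star (x - y) ⬝ᵥ W.mulVec (x - y)).re)
    (L : Matrix (Fin (n + 1 - k)) (Fin (n + 1 - k)) ℝ)
    (hL : ∀ i j : Fin (n + 1 - k),
      L i j = H ⟨k + i, by have := i.isLt; omega⟩ ⟨k + j, by have := j.isLt; omega⟩) :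
    Real.sqrt ((star (x - xk) ⬝ᵥ W.mulVec (x - xk)).re) =
      Real.sqrt (∑ j, ‖(b - W.mulVec xk) j‖ ^ 2) *
        Real.sqrt ((L * Lᵀ)⁻¹ ⟨0, by omega⟩ ⟨0, by omega⟩) := by
  classical
  have hW' : Wᴴ = W := hW.isHermitian
  -- the complexified tridiagonal matrix
  set T' : Matrix (Fin (n+1)) (Fin (n+1)) ℂ := T.map (fun x : ℝ => (x : ℂ)) with hT'def
  have hcoe : ⇑Complex.ofRealHom = (fun x : ℝ => (x : ℂ)) := rfl
  have hpow : ∀ m : ℕ, T'^m = (T^m).map (fun x : ℝ => (x:ℂ)) := by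
    intro m
    rw [hT'def, ← hcoe, ← RingHom.mapMatrix_apply, ← map_pow, RingHom.mapMatrix_apply]
  have hmom' : ∀ m : ℕ, (T'^m) 0 0 = star b ⬝ᵥ (W^m).mulVec b := by
    intro m
    rw [hpow m, Matrix.map_apply]
    exact hmom m
  have hTsymm : Tᵀ = T := T_symm n H T hT
  have hT'h : T'ᴴ = T' := by
    ext i j
    rw [Matrix.conjTranspose_apply, hT'def, Matrix.map_apply, Matrix.map_apply,
      Complex.star_def, Complex.conj_ofReal]
    have hsym2 : T j i = T i j := by
      have h5 := congrFun (congrFun hTsymm i) j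
      rwa [Matrix.transpose_apply] at h5
    rw [hsym2]
  have hband : ∀ a c : Fin (n+1), (c:ℕ)+1 < (a:ℕ) → T' a c = 0 := by
    intro a c h
    rw [hT'def, Matrix.map_apply, T_band n α β H hH T hT a c h, Complex.ofReal_zero]
  have hsubnz : ∀ a c : Fin (n+1), (c:ℕ)+1 = (a:ℕ) → T' a c ≠ 0 := by
    intro a c h
    rw [hT'def, Matrix.map_apply, T_sub n α β H hH T hT a c h]
    have ha := a.isLt
    have hβc := hβ (c:ℕ) (by omega)
    have hαc := hα (c:ℕ) (by have := c.isLt; omega)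
    simp only [ne_eq, Complex.ofReal_eq_zero]
    positivity
  -- charpoly
  set p : Polynomial ℂ := T'.charpoly with hpdef
  have hpmap : p = (T.charpoly).map Complex.ofRealHom := by
    rw [hpdef, hT'def, ← hcoe, Matrix.charpoly_map]
  have hpreal : ∀ i, star (p.coeff i) = p.coeff i := by
    intro i
    rw [hpmap, Polynomial.coeff_map, Complex.star_def]
    exact Complex.conj_ofReal _
  have hCH : aeval T' p = 0 := Matrix.aeval_self_charpoly T'
  have hHdet : IsUnit H.det := H_det_isUnit n α β hα H hH
  have hTdet : T.det ≠ 0 := by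
    rw [hT, Matrix.det_mul, Matrix.det_transpose]
    exact mul_ne_zero (isUnit_iff_ne_zero.mp hHdet) (isUnit_iff_ne_zero.mp hHdet)
  have hp0 : p.coeff 0 ≠ 0 := by
    rw [hpmap, Polynomial.coeff_map]
    simp only [ne_eq, Complex.ofRealHom_eq_coe, Complex.ofReal_eq_zero]
    intro h0
    have hds := Matrix.det_eq_sign_charpoly_coeff T
    rw [h0, mul_zero] at hds
    exact hTdet hds
  set q : Polynomial ℂ := Polynomial.C (-(p.coeff 0)⁻¹) * p.divX with hqdef
  have hqdeg : q.natDegree < n+1 := by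
    have h1 : q.natDegree ≤ p.divX.natDegree := Polynomial.natDegree_C_mul_le _ _
    have h2 : p.divX.natDegree = p.natDegree - 1 :=
      Polynomial.natDegree_divX_eq_natDegree_tsub_one (p := p)
    have h3 : p.natDegree = n+1 := by
      rw [hpdef, Matrix.charpoly_natDegree_eq_dim]
      simp
    omega
  -- kill polynomial on b
  have hkill : (aeval W p).mulVec b = 0 :=
    poly_kills_b W hW' b T' 0 hmom' p hpreal hCH
  have hxw : W.mulVec ((aeval W q).mulVec b) = b := by
    rw [hqdef]
    exact solve_from_poly W b p hkill hp0
  have hxeq : x = (aeval W q).mulVec b := by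
    by_contra hne
    have hd : x - (aeval W q).mulVec b ≠ 0 := sub_ne_zero.mpr hne
    have h0 := hW.dotProduct_mulVec_pos hd
    rw [Matrix.mulVec_sub, hx, hxw, sub_self, dotProduct_zero] at h0
    exact lt_irrefl 0 h0
  set e0 : Fin (n+1) → ℂ := Pi.single 0 1 with he0def
  have hkillT : (aeval T' p).mulVec e0 = 0 := by rw [hCH, Matrix.zero_mulVec]
  have hxT : T'.mulVec ((aeval T' q).mulVec e0) = e0 := by
    rw [hqdef]
    exact solve_from_poly T' e0 p hkillT hp0
  -- coefficient expansions
  set vW : ℕ → Fin N → ℂ := fun i => (W^i).mulVec b with hvW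
  set vT : ℕ → Fin (n+1) → ℂ := fun i => (T'^i).mulVec e0 with hvT
  set cx : ℕ → ℂ := fun i => q.coeff i with hcx
  have haev : ∀ {m : ℕ} (A : Matrix (Fin m) (Fin m) ℂ) (v : Fin m → ℂ),
      (aeval A q).mulVec v = ∑ i ∈ Finset.range (n+1), cx i • (A^i).mulVec v := by
    intro m A v
    rw [aeval_eq_sum_range' hqdeg, sum_mulVec']
    exact Finset.sum_congr rfl fun i _ => Matrix.smul_mulVec _ _ _
  have hxsum : x = ∑ i ∈ Finset.range (n+1), cx i • vW i := by
    rw [hxeq, haev W b]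
  obtain ⟨cc, hcc⟩ := (Submodule.mem_span_range_iff_exists_fun ℂ).mp hxk
  set cy : ℕ → ℂ := fun i => if h : i < k then cc ⟨i, h⟩ else 0 with hcy
  have hxk1 : xk = ∑ i ∈ Finset.range k, cy i • vW i := by
    rw [← hcc, ← Fin.sum_univ_eq_sum_range (fun i => cy i • vW i) k]
    refine Finset.sum_congr rfl fun i _ => ?_
    have hcyi : cy (i:ℕ) = cc i := by
      show (if h : (i:ℕ) < k then cc ⟨(i:ℕ), h⟩ else 0) = cc i
      rw [dif_pos i.isLt, Fin.eta]
    rw [hcyi]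
  have hxk2 : xk = ∑ i ∈ Finset.range (n+1), cy i • vW i := by
    rw [hxk1]
    refine Finset.sum_subset (Finset.range_subset_range.mpr (by omega)) ?_
    intro i _ hik
    simp only [Finset.mem_range] at hik
    have hcyi : cy i = 0 := by
      show (if h : i < k then cc ⟨i, h⟩ else 0) = 0
      rw [dif_neg (by omega)]
    rw [hcyi, zero_smul]
  set c : ℕ → ℂ := fun i => cx i - cy i with hc
  have hu : x - xk = ∑ i ∈ Finset.range (n+1), c i • vW i := by
    rw [hxsum, hxk2, ← Finset.sum_sub_distrib]
    exact Finset.sum_congr rfl fun i _ => (sub_smul _ _ _).symm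
  set uh : Fin (n+1) → ℂ := ∑ i ∈ Finset.range (n+1), c i • vT i with huh
  set yh : Fin (n+1) → ℂ := ∑ i ∈ Finset.range (n+1), cy i • vT i with hyh
  have huh2 : uh = (∑ i ∈ Finset.range (n+1), cx i • vT i) - yh := by
    rw [huh, hyh, ← Finset.sum_sub_distrib]
    exact Finset.sum_congr rfl fun i _ => (sub_smul _ _ _)
  have hT'uh : T'.mulVec uh = e0 - T'.mulVec yh := by
    rw [huh2, Matrix.mulVec_sub]
    congr 1
    rw [← haev T' e0]
    exact hxT
  -- key transfer
  have hkey : ∀ (s : ℕ) (cl cr : ℕ → ℂ),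
      star (∑ i ∈ Finset.range (n+1), cl i • vW i) ⬝ᵥ (W^s).mulVec (∑ j ∈ Finset.range (n+1), cr j • vW j)
      = star (∑ i ∈ Finset.range (n+1), cl i • vT i) ⬝ᵥ (T'^s).mulVec (∑ j ∈ Finset.range (n+1), cr j • vT j) := by
    intro s cl cr
    rw [quad_expand, quad_expand]
    refine Finset.sum_congr rfl fun i _ => Finset.sum_congr rfl fun j _ => ?_
    congr 1
    simp only [hvW, hvT]
    rw [quad_form_pow W hW' b, quad_form_pow T' hT'h e0, he0def, dot_single_mulVec, hmom']
  have hkey1 : ∀ (s i0 : ℕ) (cr : ℕ → ℂ),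
      star (vW i0) ⬝ᵥ (W^s).mulVec (∑ j ∈ Finset.range (n+1), cr j • vW j)
      = star (vT i0) ⬝ᵥ (T'^s).mulVec (∑ j ∈ Finset.range (n+1), cr j • vT j) := by
    intro s i0 cr
    rw [lin_expand, lin_expand]
    refine Finset.sum_congr rfl fun j _ => ?_
    congr 1
    simp only [hvW, hvT]
    rw [quad_form_pow W hW' b, quad_form_pow T' hT'h e0, he0def, dot_single_mulVec, hmom']
  -- normal equations
  have hNE := normal_eq W hW x xk _ hxk hmin
  have hortho : ∀ i : ℕ, i < k → star (vT i) ⬝ᵥ T'.mulVec uh = 0 := by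
    intro i hik
    have hmem : vW i ∈ Submodule.span ℂ (Set.range fun i : Fin k => (W ^ (i : ℕ)).mulVec b) :=
      Submodule.subset_span ⟨⟨i, hik⟩, rfl⟩
    have h1 := hNE (vW i) hmem
    rw [hu] at h1
    have h2 := hkey1 1 i c
    rw [pow_one, pow_one] at h2
    rw [huh, ← h2]
    exact h1
  set rh : Fin (n+1) → ℂ := T'.mulVec uh with hrh
  have hrlow : ∀ j : Fin (n+1), (j:ℕ) < k → rh j = 0 := by
    refine ortho_coords T' hband hsubnz rh k (by omega) ?_
    intro i hik
    have h6 := hortho i hik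
    simpa only [hvT, he0def] using h6
  have hysupp : ∀ j : Fin (n+1), k ≤ (j:ℕ) → yh j = 0 := by
    intro j hj
    rw [hyh, Finset.sum_apply]
    refine Finset.sum_eq_zero fun i hi => ?_
    rcases Nat.lt_or_ge i k with hik | hik
    · rw [Pi.smul_apply]
      simp only [hvT]
      rw [krylov_support T' hband i j (by omega), smul_zero]
    · have hcyi : cy i = 0 := by
        show (if h : i < k then cc ⟨i, h⟩ else 0) = 0
        rw [dif_neg (by omega)]
      rw [hcyi, zero_smul, Pi.zero_apply]
  have hrhigh : ∀ j : Fin (n+1), k < (j:ℕ) → rh j = 0 := by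
    intro j hj
    rw [hT'uh, Pi.sub_apply]
    have he0j : e0 j = 0 := by
      rw [he0def, Pi.single_apply, if_neg (by intro hc; rw [hc] at hj; simp at hj)]
    have hTy : T'.mulVec yh j = 0 := by
      rw [Matrix.mulVec, dotProduct]
      refine Finset.sum_eq_zero fun l _ => ?_
      rcases Nat.lt_or_ge ((l:ℕ)+1) (j:ℕ) with hl | hl
      · rw [hband j l hl, zero_mul]
      · rw [hysupp l (by omega), mul_zero]
    rw [he0j, hTy, sub_zero]
  set ρ : ℂ := rh ⟨k, hkn⟩ with hρ
  set ek : Fin (n+1) → ℂ := Pi.single ⟨k, hkn⟩ 1 with hek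
  have hreq : rh = ρ • ek := by
    funext j
    rcases Nat.lt_trichotomy (j:ℕ) k with hjk | hjk | hjk
    · rw [hrlow j hjk, Pi.smul_apply]
      simp only [hek]
      rw [Pi.single_apply, if_neg (by intro hc; rw [hc] at hjk; simp at hjk), smul_zero]
    · have hjeq : j = ⟨k, hkn⟩ := Fin.ext (by simp [hjk])
      rw [hjeq, Pi.smul_apply]
      simp only [hek]
      rw [Pi.single_apply, if_pos rfl, smul_eq_mul, mul_one, hρ]
    · rw [hrhigh j hjk, Pi.smul_apply]
      simp only [hek]
      rw [Pi.single_apply, if_neg (by intro hc; rw [hc] at hjk; simp at hjk), smul_zero]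
  -- Cholesky side
  set H' : Matrix (Fin (n+1)) (Fin (n+1)) ℂ := H.map (fun x : ℝ => (x:ℂ)) with hH'def
  have hT'HH : T' = H' * H'ᵀ := by
    rw [hT'def, hT, hH'def, ← hcoe, ← Matrix.transpose_map]
    exact Matrix.map_mul
  set sh : Fin (n+1) → ℂ := H'ᵀ.mulVec uh with hsh
  have hH'sh : H'.mulVec sh = rh := by
    rw [hsh, Matrix.mulVec_mulVec, ← hT'HH, hrh]
  set w : Fin (n+1) → ℝ := fun i => if k ≤ (i:ℕ) then vrec α β k ((i:ℕ)-k) else 0 with hwdef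
  have hHw : H.mulVec w = Pi.single ⟨k, hkn⟩ 1 := H_solve n k hk hkn α β hα hβ H hH
  have hH'w : H'.mulVec (fun i => (w i : ℂ)) = ek := by
    rw [hH'def, mulVec_map_ofReal H w, hHw, hek]
    funext i
    rcases eq_or_ne i (⟨k, hkn⟩ : Fin (n+1)) with h | h
    · rw [h]; simp
    · rw [Pi.single_apply, Pi.single_apply, if_neg h, if_neg h, Complex.ofReal_zero]
  have hH'det : IsUnit H'.det := by
    rw [hH'def, ← hcoe, ← RingHom.mapMatrix_apply, ← RingHom.map_det]
    simp only [isUnit_iff_ne_zero, ne_eq, Complex.ofRealHom_eq_coe, Complex.ofReal_eq_zero]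
    exact isUnit_iff_ne_zero.mp hHdet
  have hshρ : sh = ρ • (fun i => (w i : ℂ)) := by
    have h2 : H'.mulVec (ρ • fun i => (w i:ℂ)) = rh := by
      rw [Matrix.mulVec_smul, hH'w, ← hreq]
    have h3 := hH'sh.trans h2.symm
    have h4 := congrArg (fun z => (H')⁻¹.mulVec z) h3
    simpa [Matrix.mulVec_mulVec, Matrix.nonsing_inv_mul H' hH'det, Matrix.one_mulVec] using h4
  -- quadratic form chain
  have hQ1 : star (x - xk) ⬝ᵥ W.mulVec (x - xk) = star uh ⬝ᵥ T'.mulVec uh := by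
    rw [hu]
    have h2 := hkey 1 c c
    rw [pow_one, pow_one] at h2
    rw [huh]
    exact h2
  have hQ2 : star uh ⬝ᵥ T'.mulVec uh = star sh ⬝ᵥ sh := by
    have hconj : (H'ᵀ)ᴴ = H' := by
      ext i j
      rw [Matrix.conjTranspose_apply, Matrix.transpose_apply, hH'def, Matrix.map_apply,
        Complex.star_def, Complex.conj_ofReal]
    rw [hsh, Matrix.star_mulVec, hconj, ← Matrix.dotProduct_mulVec, Matrix.mulVec_mulVec, ← hT'HH]
  have hwC : star (fun i => (w i : ℂ)) = (fun i => (w i : ℂ)) := by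
    funext i
    rw [Pi.star_apply, Complex.star_def, Complex.conj_ofReal]
  have hQ3 : star sh ⬝ᵥ sh = ((Complex.normSq ρ : ℝ) : ℂ) * ((∑ l, (w l)^2 : ℝ) : ℂ) := by
    rw [hshρ, star_smul, smul_dotProduct, dotProduct_smul, hwC]
    rw [show (fun i => (w i : ℂ)) ⬝ᵥ (fun i => (w i : ℂ)) = ((∑ l, (w l)^2 : ℝ) : ℂ) by
      rw [dotProduct]; push_cast; exact Finset.sum_congr rfl fun l _ => by ring]
    rw [smul_eq_mul, smul_eq_mul, ← mul_assoc]
    congr 1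
    rw [Complex.star_def, ← Complex.normSq_eq_conj_mul_self]
  -- residual
  have hekek : star ek ⬝ᵥ ek = 1 := by
    simp only [hek]
    rw [star_single0, single_dotProduct]
    simp [Pi.single_apply]
  have hrres : b - W.mulVec xk = W.mulVec (x - xk) := by
    rw [Matrix.mulVec_sub, hx]
  have hrr : star (b - W.mulVec xk) ⬝ᵥ (b - W.mulVec xk) = ((Complex.normSq ρ : ℝ) : ℂ) := by
    rw [hrres]
    have h1 : star (W.mulVec (x-xk)) ⬝ᵥ (W.mulVec (x-xk))
        = star (x-xk) ⬝ᵥ (W^2).mulVec (x-xk) := by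
      rw [Matrix.star_mulVec, hW', ← Matrix.dotProduct_mulVec, Matrix.mulVec_mulVec, ← pow_two]
    rw [h1, hu, hkey 2 c c, ← huh]
    have h2 : star uh ⬝ᵥ (T'^2).mulVec uh = star rh ⬝ᵥ rh := by
      conv_rhs => rw [hrh]
      rw [Matrix.star_mulVec, hT'h, ← Matrix.dotProduct_mulVec, Matrix.mulVec_mulVec, ← pow_two]
    rw [h2, hreq, star_smul, smul_dotProduct, dotProduct_smul, hekek]
    rw [smul_eq_mul, smul_eq_mul, mul_one, Complex.star_def, ← Complex.normSq_eq_conj_mul_self]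
  have hsum_norm : ∑ j, ‖(b - W.mulVec xk) j‖^2 = Complex.normSq ρ := by
    have h3 : (star (b - W.mulVec xk) ⬝ᵥ (b - W.mulVec xk)).re = Complex.normSq ρ := by
      rw [hrr, Complex.ofReal_re]
    rw [← h3, dotProduct, Complex.re_sum]
    refine Finset.sum_congr rfl fun j _ => ?_
    rw [Pi.star_apply, Complex.star_def, ← Complex.normSq_eq_conj_mul_self, Complex.ofReal_re,
      Complex.sq_norm]
  have hQre : (star (x - xk) ⬝ᵥ W.mulVec (x - xk)).re
      = Complex.normSq ρ * ∑ l, (w l)^2 := by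
    rw [hQ1, hQ2, hQ3, ← Complex.ofReal_mul, Complex.ofReal_re]
  have hwpad : ∑ l, (w l)^2 = ∑ j : Fin (n+1-k), (vrec α β k (j:ℕ))^2 := by
    simp only [hwdef]
    exact sum_sq_pad (n+1) k (by omega) (vrec α β k)
  have hS : (L * Lᵀ)⁻¹ ⟨0, by omega⟩ ⟨0, by omega⟩ = ∑ l, (w l)^2 := by
    rw [LLt_inv_entry n k hk hkn α β hα hβ H hH L hL, hwpad]
  calc Real.sqrt ((star (x - xk) ⬝ᵥ W.mulVec (x - xk)).re)
      = Real.sqrt (Complex.normSq ρ * ∑ l, (w l)^2) := by rw [hQre]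
    _ = Real.sqrt (Complex.normSq ρ) * Real.sqrt (∑ l, (w l)^2) :=
        Real.sqrt_mul (Complex.normSq_nonneg ρ) _
    _ = Real.sqrt (∑ j, ‖(b - W.mulVec xk) j‖ ^ 2) *
        Real.sqrt ((L * Lᵀ)⁻¹ ⟨0, by omega⟩ ⟨0, by omega⟩) := by
        rw [hsum_norm, hS]
end

section
/- Let W ∈ ℂ^{N×N} be Hermitian positive definite and b ∈ ℂ^N a unit vector, and let T be an n×n Jacobi matrix (n ≤ N) with (T^m)_{11} = b*W^m b for all integers m ≥ 0 (the Lanczos tridiagonalization of (W,b)). Let T = HHᵀ be its Cholesky factorization with H lower bidiagonal with positive diagonal entries α_0,…,α_{n−1} and subdiagonal entries β_0,…,β_{n−2}. For 1 ≤ k < n, let x_k be the minimizer of ‖b − Wy‖₂ over the Krylov subspace K_k (the k-th MINRES iterate). Then the residual r_k = b − Wx_k satisfies ‖r_k‖₂ = (Σ_{j=0}^{k} ∏_{ℓ=0}^{j−1} α_ℓ²/β_ℓ²)^{−1/2}, where the empty product (j = 0) equals 1. -/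
open MeasureTheory Matrix
open scoped ComplexOrder

namespace Stmt13

def ext {n : ℕ} (w : Fin (n+1) → ℝ) : ℕ → ℝ := fun s => if h : s < n+1 then w ⟨s,h⟩ else 0

lemma ext_coe {n : ℕ} (w : Fin (n+1) → ℝ) (s : Fin (n+1)) : ext w (s:ℕ) = w s := by
  simp [ext, s.isLt]

lemma ext_eq {n : ℕ} (w : Fin (n+1) → ℝ) : (fun s : Fin (n+1) => ext w (s:ℕ)) = w :=
  funext (ext_coe w)

lemma entry {n : ℕ} (α β : ℕ → ℝ) (H T : Matrix (Fin (n+1)) (Fin (n+1)) ℝ)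
    (hH : ∀ i j : Fin (n + 1), H i j =
      if (i : ℕ) = (j : ℕ) then α i
      else if (i : ℕ) = (j : ℕ) + 1 then β j else 0)
    (hT : T = H * Hᵀ) (i j : Fin (n+1)) :
    T i j = if (i:ℕ) = (j:ℕ) then α i ^ 2 + (if (i:ℕ) = 0 then 0 else β ((i:ℕ)-1) ^ 2)
      else if (i:ℕ) = (j:ℕ) + 1 then α j * β j
      else if (j:ℕ) = (i:ℕ) + 1 then α i * β i else 0 := by
  subst hT
  rw [Matrix.mul_apply]
  have key : ∀ m : Fin (n+1), H i m * Hᵀ m j =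
      (if m = i then α i * H j i else 0) +
      (if (m:ℕ) + 1 = (i:ℕ) then β m * H j m else 0) := by
    intro m
    rw [Matrix.transpose_apply, hH i m]
    by_cases h1 : (i:ℕ) = (m:ℕ)
    · rw [show m = i from Fin.ext h1.symm]
      rw [if_pos rfl, if_pos rfl, if_neg (by omega : ¬ ((i:ℕ) + 1 = (i:ℕ)))]
      ring
    · have hmi : ¬ m = i := fun h => h1 (by rw [h])
      by_cases h2 : (i:ℕ) = (m:ℕ) + 1
      · rw [if_neg h1, if_pos h2, if_neg hmi, if_pos h2.symm]; ring
      · have : ¬ ((m:ℕ) + 1 = (i:ℕ)) := fun h => h2 h.symm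
        rw [if_neg h1, if_neg h2, if_neg hmi, if_neg this]; ring
  rw [Finset.sum_congr rfl (fun m _ => key m), Finset.sum_add_distrib]
  rw [Finset.sum_ite_eq' Finset.univ i (fun _ => α i * H j i)]
  simp only [Finset.mem_univ, if_true]
  by_cases hi0 : (i:ℕ) = 0
  · have : ∀ m : Fin (n+1), (if (m:ℕ) + 1 = (i:ℕ) then β m * H j m else 0) = 0 := by
      intro m; rw [if_neg]; omega
    rw [Finset.sum_congr rfl (fun m _ => this m), Finset.sum_const_zero, add_zero]
    rw [hH j i]
    by_cases h1 : (i:ℕ) = (j:ℕ)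
    · rw [if_pos h1.symm, if_pos h1, if_pos hi0, h1]; ring
    · have h1' : ¬ (j:ℕ) = (i:ℕ) := fun h => h1 h.symm
      rw [if_neg h1', if_neg h1]
      by_cases h2 : (i:ℕ) = (j:ℕ) + 1
      · omega
      · rw [if_neg h2]
        split_ifs <;> (try ring) <;> (exfalso; omega)
  · -- i ≥ 1; the second sum picks m = i-1
    have hlt : (i:ℕ) - 1 < n + 1 := by omega
    set m0 : Fin (n+1) := ⟨(i:ℕ)-1, hlt⟩ with hm0
    have : ∀ m : Fin (n+1), (if (m:ℕ) + 1 = (i:ℕ) then β m * H j m else 0)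
        = (if m = m0 then β m0 * H j m0 else 0) := by
      intro m
      by_cases h : (m:ℕ) + 1 = (i:ℕ)
      · have : m = m0 := Fin.ext (by simp [hm0]; omega)
        subst this; simp [h]
      · have : ¬ m = m0 := by
          intro hh; apply h; subst hh; simp [hm0]; omega
        simp [h, this]
    rw [Finset.sum_congr rfl (fun m _ => this m),
      Finset.sum_ite_eq' Finset.univ m0 (fun _ => β m0 * H j m0)]
    simp only [Finset.mem_univ, if_true]
    rw [hH j i, hH j m0]
    simp only [hm0]
    by_cases h1 : (i:ℕ) = (j:ℕ)
    · rw [if_pos h1.symm, if_pos h1, if_neg hi0]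
      rw [if_neg (by omega : ¬ (j:ℕ) = (i:ℕ)-1), if_pos (by omega : (j:ℕ) = ((i:ℕ)-1) + 1)]
      rw [h1]; ring
    · have h1' : ¬ (j:ℕ) = (i:ℕ) := fun h => h1 h.symm
      rw [if_neg h1', if_neg h1]
      by_cases h2 : (i:ℕ) = (j:ℕ) + 1
      · rw [if_pos h2, if_pos (by omega : (j:ℕ) = (i:ℕ)-1)]
        rw [if_neg (by omega : ¬ (j:ℕ) = (i:ℕ) + 1)]
        have : ((i:ℕ) - 1) = (j:ℕ) := by omega
        rw [this]; ring
      · rw [if_neg h2]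
        split_ifs <;> (try ring) <;> (exfalso; omega)


lemma tri_mulVec {n : ℕ} (α β : ℕ → ℝ) (T : Matrix (Fin (n+1)) (Fin (n+1)) ℝ)
    (hTe : ∀ i j : Fin (n+1), T i j =
      if (i:ℕ) = (j:ℕ) then α i ^ 2 + (if (i:ℕ) = 0 then 0 else β ((i:ℕ)-1) ^ 2)
      else if (i:ℕ) = (j:ℕ) + 1 then α j * β j
      else if (j:ℕ) = (i:ℕ) + 1 then α i * β i else 0)
    (w : ℕ → ℝ) (hw : w (n+1) = 0) (j : Fin (n+1)) :
    T.mulVec (fun s : Fin (n+1) => w s) j =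
      (if (j:ℕ) = 0 then 0 else α ((j:ℕ)-1) * β ((j:ℕ)-1) * w ((j:ℕ)-1))
      + (α (j:ℕ) ^ 2 + (if (j:ℕ) = 0 then 0 else β ((j:ℕ)-1) ^ 2)) * w (j:ℕ)
      + α (j:ℕ) * β (j:ℕ) * w ((j:ℕ)+1) := by
  set F : ℕ → ℝ := fun s =>
    (if s = (j:ℕ) then (α (j:ℕ) ^ 2 + (if (j:ℕ) = 0 then 0 else β ((j:ℕ)-1) ^ 2)) * w s else 0)
    + (if (j:ℕ) = s + 1 then α s * β s * w s else 0)
    + (if s = (j:ℕ) + 1 then α (j:ℕ) * β (j:ℕ) * w s else 0) with hF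
  have hsummand : ∀ s : Fin (n+1), T j s * w (s:ℕ) = F (s:ℕ) := by
    intro s
    rw [hTe j s, hF]
    simp only []
    split_ifs <;> (try ring) <;> (exfalso; omega)
  have h1 : T.mulVec (fun s : Fin (n+1) => w s) j = ∑ s : Fin (n+1), T j s * w (s:ℕ) := by
    simp [Matrix.mulVec, dotProduct]
  rw [h1, Finset.sum_congr rfl (fun s _ => hsummand s),
    Fin.sum_univ_eq_sum_range F (n+1)]
  have hFtop : F (n+1) = 0 := by
    rw [hF]
    simp only []
    rw [hw]
    split_ifs <;> ring
  have h2 : ∑ s ∈ Finset.range (n+2), F s = ∑ s ∈ Finset.range (n+1), F s := by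
    rw [Finset.sum_range_succ, hFtop, add_zero]
  rw [← h2, hF]
  rw [Finset.sum_add_distrib, Finset.sum_add_distrib]
  have e1 : ∑ s ∈ Finset.range (n+2), (if s = (j:ℕ) then (α (j:ℕ) ^ 2 + (if (j:ℕ) = 0 then 0 else β ((j:ℕ)-1) ^ 2)) * w s else 0) = (α (j:ℕ) ^ 2 + (if (j:ℕ) = 0 then 0 else β ((j:ℕ)-1) ^ 2)) * w (j:ℕ) := by
    rw [Finset.sum_ite_eq' (Finset.range (n+2)) ((j:ℕ)) (fun s => (α (j:ℕ) ^ 2 + (if (j:ℕ) = 0 then 0 else β ((j:ℕ)-1) ^ 2)) * w s)]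
    rw [if_pos (Finset.mem_range.mpr (by omega))]
  have e3 : ∑ s ∈ Finset.range (n+2), (if s = (j:ℕ)+1 then α (j:ℕ) * β (j:ℕ) * w s else 0)
      = α (j:ℕ) * β (j:ℕ) * w ((j:ℕ)+1) := by
    rw [Finset.sum_ite_eq' (Finset.range (n+2)) ((j:ℕ)+1) (fun s => α (j:ℕ) * β (j:ℕ) * w s)]
    rw [if_pos (Finset.mem_range.mpr (by omega))]
  have e2 : ∑ s ∈ Finset.range (n+2), (if (j:ℕ) = s + 1 then α s * β s * w s else 0)
      = (if (j:ℕ) = 0 then 0 else α ((j:ℕ)-1) * β ((j:ℕ)-1) * w ((j:ℕ)-1)) := by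
    by_cases hj0 : (j:ℕ) = 0
    · rw [if_pos hj0]
      apply Finset.sum_eq_zero
      intro s _
      rw [if_neg (by omega)]
    · rw [if_neg hj0]
      have : ∀ s ∈ Finset.range (n+2), (if (j:ℕ) = s + 1 then α s * β s * w s else 0)
          = (if s = (j:ℕ)-1 then α s * β s * w s else 0) := by
        intro s _
        by_cases h : (j:ℕ) = s + 1
        · rw [if_pos h, if_pos (by omega)]
        · rw [if_neg h, if_neg (by omega)]
      rw [Finset.sum_congr rfl this,
        Finset.sum_ite_eq' (Finset.range (n+2)) ((j:ℕ)-1) (fun s => α s * β s * w s)]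
      rw [if_pos (Finset.mem_range.mpr (by omega))]
  rw [e1, e2, e3]
  ring


lemma ext_lt {n : ℕ} (w : Fin (n+1) → ℝ) (s : ℕ) (hs : s < n+1) : ext w s = w ⟨s, hs⟩ :=
  dif_pos hs

lemma ext_ge {n : ℕ} (w : Fin (n+1) → ℝ) (s : ℕ) (hs : ¬ s < n+1) : ext w s = 0 :=
  dif_neg hs

section T
variable {n : ℕ} (α β : ℕ → ℝ) (T : Matrix (Fin (n+1)) (Fin (n+1)) ℝ)
    (hTe : ∀ i j : Fin (n+1), T i j =
      if (i:ℕ) = (j:ℕ) then α i ^ 2 + (if (i:ℕ) = 0 then 0 else β ((i:ℕ)-1) ^ 2)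
      else if (i:ℕ) = (j:ℕ) + 1 then α j * β j
      else if (j:ℕ) = (i:ℕ) + 1 then α i * β i else 0)

lemma pow_col_succ (m : ℕ) (i : Fin (n+1)) :
    (T^(m+1)) i 0 = T.mulVec (fun s : Fin (n+1) => ext (fun t : Fin (n+1) => (T^m) t 0) (s:ℕ)) i := by
  rw [ext_eq, pow_succ']
  simp [Matrix.mul_apply, Matrix.mulVec, dotProduct]

include hTe in
lemma supp : ∀ m : ℕ, ∀ i : Fin (n+1), m < (i:ℕ) → (T^m) i 0 = 0 := by
  intro m
  induction m with
  | zero =>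
    intro i hi
    rw [pow_zero]
    exact Matrix.one_apply_ne (by intro h; rw [h] at hi; simp at hi)
  | succ m ih =>
    intro i hi
    rw [pow_col_succ T m i,
      tri_mulVec α β T hTe _ (ext_ge _ _ (by omega)) i]
    have z : ∀ s : ℕ, m < s → ext (fun t : Fin (n+1) => (T^m) t 0) s = 0 := by
      intro s hs
      by_cases h : s < n+1
      · rw [ext_lt _ _ h]; exact ih ⟨s, h⟩ hs
      · exact ext_ge _ _ h
    rw [z ((i:ℕ)-1) (by omega), z (i:ℕ) (by omega), z ((i:ℕ)+1) (by omega)]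
    split_ifs <;> ring

include hTe in
lemma diag : ∀ m : ℕ, ∀ hm : m < n+1,
    (T^m) ⟨m, hm⟩ 0 = ∏ ℓ ∈ Finset.range m, (α ℓ * β ℓ) := by
  intro m
  induction m with
  | zero =>
    intro hm
    rw [pow_zero, Finset.range_zero, Finset.prod_empty]
    exact Matrix.one_apply_eq _
  | succ m ih =>
    intro hm
    rw [pow_col_succ T m ⟨m+1, hm⟩,
      tri_mulVec α β T hTe _ (ext_ge _ _ (by omega)) ⟨m+1, hm⟩]
    have z : ∀ s : ℕ, m < s → ext (fun t : Fin (n+1) => (T^m) t 0) s = 0 := by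
      intro s hs
      by_cases h : s < n+1
      · rw [ext_lt _ _ h]; exact supp α β T hTe m ⟨s, h⟩ hs
      · exact ext_ge _ _ h
    simp only [Fin.val_mk]
    rw [if_neg (by omega : ¬ m + 1 = 0)]
    rw [z (m+1) (by omega), z (m+1+1) (by omega)]
    have : m + 1 - 1 = m := by omega
    rw [this, ext_lt _ _ (by omega : m < n+1), ih (by omega)]
    rw [Finset.prod_range_succ]
    ring

end T

noncomputable def rho (k : ℕ) (α β : ℕ → ℝ) (S : ℝ) : ℕ → ℝ := fun j =>
  if j ≤ k then (-1:ℝ)^j * (∏ ℓ ∈ Finset.range j, α ℓ / β ℓ) / S else 0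

lemma rho_succ (k : ℕ) (α β : ℕ → ℝ) (S : ℝ) (j : ℕ) (hj : j < k) :
    rho k α β S (j+1) = -(α j / β j) * rho k α β S j := by
  rw [rho, rho, if_pos (by omega : j ≤ k), if_pos (by omega : j + 1 ≤ k),
    Finset.prod_range_succ, pow_succ]
  ring

section T2
variable {n : ℕ} (k : ℕ) (α β : ℕ → ℝ) (S : ℝ) (T : Matrix (Fin (n+1)) (Fin (n+1)) ℝ)
    (hTe : ∀ i j : Fin (n+1), T i j =
      if (i:ℕ) = (j:ℕ) then α i ^ 2 + (if (i:ℕ) = 0 then 0 else β ((i:ℕ)-1) ^ 2)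
      else if (i:ℕ) = (j:ℕ) + 1 then α j * β j
      else if (j:ℕ) = (i:ℕ) + 1 then α i * β i else 0)
    (hk : 1 ≤ k) (hkn : k ≤ n)
    (hβ : ∀ i, i < n → 0 < β i)

include hTe hk hkn hβ in
lemma Tr_zero : ∀ j : Fin (n+1), (j:ℕ) < k →
    T.mulVec (fun s : Fin (n+1) => rho k α β S (s:ℕ)) j = 0 := by
  intro j hj
  have hrtop : rho k α β S (n+1) = 0 := by rw [rho, if_neg (by omega)]
  rw [tri_mulVec α β T hTe _ hrtop j]
  by_cases hj0 : (j:ℕ) = 0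
  · rw [if_pos hj0, if_pos hj0, hj0]
    have h1 : rho k α β S (0+1) = -(α 0 / β 0) * rho k α β S 0 :=
      rho_succ k α β S 0 (by omega)
    simp only [Nat.zero_add] at h1
    rw [h1]
    have hb : β 0 ≠ 0 := ne_of_gt (hβ 0 (by omega))
    field_simp
    ring
  · rw [if_neg hj0, if_neg hj0]
    have e1 : (j:ℕ) - 1 + 1 = (j:ℕ) := by omega
    have h1 : rho k α β S ((j:ℕ)) = -(α ((j:ℕ)-1) / β ((j:ℕ)-1)) * rho k α β S ((j:ℕ)-1) := by
      have := rho_succ k α β S ((j:ℕ)-1) (by omega)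
      rw [e1] at this
      exact this
    have h2 : rho k α β S ((j:ℕ)+1) = -(α (j:ℕ) / β (j:ℕ)) * rho k α β S (j:ℕ) :=
      rho_succ k α β S (j:ℕ) (by omega)
    rw [h2, h1]
    have hb1 : β ((j:ℕ)-1) ≠ 0 := ne_of_gt (hβ _ (by omega))
    have hb2 : β (j:ℕ) ≠ 0 := ne_of_gt (hβ _ (by omega))
    field_simp
    ring

end T2

lemma rho_sq_sum {n : ℕ} (k : ℕ) (α β : ℕ → ℝ) (S : ℝ) (hkn : k ≤ n)
    (hS : S = ∑ j ∈ Finset.range (k+1), ∏ ℓ ∈ Finset.range j, α ℓ ^ 2 / β ℓ ^ 2)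
    (hS0 : S ≠ 0) :
    ∑ j : Fin (n+1), rho k α β S (j:ℕ) ^ 2 = 1 / S := by
  rw [Fin.sum_univ_eq_sum_range (fun j => rho k α β S j ^ 2) (n+1)]
  have h1 : ∑ j ∈ Finset.range (n+1), rho k α β S j ^ 2
      = ∑ j ∈ Finset.range (k+1), rho k α β S j ^ 2 := by
    rw [Finset.sum_subset (Finset.range_subset_range.mpr (by omega : k + 1 ≤ n + 1))]
    intro x _ hx
    rw [rho, if_neg (by simp at hx; omega)]
    ring
  rw [h1]
  have h2 : ∀ j ∈ Finset.range (k+1), rho k α β S j ^ 2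
      = (∏ ℓ ∈ Finset.range j, α ℓ ^ 2 / β ℓ ^ 2) * (1 / S ^ 2) := by
    intro j hj
    simp only [Finset.mem_range] at hj
    rw [rho, if_pos (by omega : j ≤ k)]
    have : ∏ ℓ ∈ Finset.range j, α ℓ ^ 2 / β ℓ ^ 2
        = (∏ ℓ ∈ Finset.range j, α ℓ / β ℓ) ^ 2 := by
      rw [← Finset.prod_pow]
      exact Finset.prod_congr rfl (fun ℓ _ => by rw [div_pow])
    rw [this, div_pow, mul_pow]
    have hsq : ((-1:ℝ)^j)^2 = 1 := by
      rw [← pow_mul, mul_comm, pow_mul]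
      norm_num
    rw [hsq]
    ring
  rw [Finset.sum_congr rfl h2, ← Finset.sum_mul, ← hS]
  field_simp

section T3
variable {n : ℕ} (k : ℕ) (α β : ℕ → ℝ) (T : Matrix (Fin (n+1)) (Fin (n+1)) ℝ)
    (hTe : ∀ i j : Fin (n+1), T i j =
      if (i:ℕ) = (j:ℕ) then α i ^ 2 + (if (i:ℕ) = 0 then 0 else β ((i:ℕ)-1) ^ 2)
      else if (i:ℕ) = (j:ℕ) + 1 then α j * β j
      else if (j:ℕ) = (i:ℕ) + 1 then α i * β i else 0)
    (hα : ∀ i, i < n + 1 → 0 < α i) (hβ : ∀ i, i < n → 0 < β i)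
    (hkn : k ≤ n)

include hTe hα hβ hkn in
lemma unit_mem : ∀ j : ℕ, j < k →
    (fun s : Fin (n+1) => if (s:ℕ) = j then (1:ℝ) else 0) ∈
      Submodule.span ℝ (Set.range fun i : Fin k => fun s : Fin (n+1) => (T^(i:ℕ)) s 0) := by
  intro j
  induction j using Nat.strong_induction_on with
  | _ j IH =>
    intro hjk
    have hjn : j < n + 1 := by omega
    have hc0 : (∏ ℓ ∈ Finset.range j, α ℓ * β ℓ) ≠ 0 := by
      apply Finset.prod_ne_zero_iff.mpr
      intro ℓ hℓ
      simp only [Finset.mem_range] at hℓ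
      exact mul_ne_zero (ne_of_gt (hα ℓ (by omega))) (ne_of_gt (hβ ℓ (by omega)))
    have key : (fun s : Fin (n+1) => if (s:ℕ) = j then (1:ℝ) else 0)
        = (∏ ℓ ∈ Finset.range j, α ℓ * β ℓ)⁻¹ •
          ((fun s : Fin (n+1) => (T^j) s 0)
            - ∑ i ∈ Finset.range j, ext (fun t : Fin (n+1) => (T^j) t 0) i •
                (fun s : Fin (n+1) => if (s:ℕ) = i then (1:ℝ) else 0)) := by
      funext s
      have hsum : (∑ i ∈ Finset.range j, ext (fun t : Fin (n+1) => (T^j) t 0) i •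
          (fun s : Fin (n+1) => if (s:ℕ) = i then (1:ℝ) else 0)) s
          = if (s:ℕ) ∈ Finset.range j then ext (fun t : Fin (n+1) => (T^j) t 0) (s:ℕ) else 0 := by
        rw [Finset.sum_apply]
        rw [← Finset.sum_ite_eq (Finset.range j) ((s:ℕ))
          (fun i => ext (fun t : Fin (n+1) => (T^j) t 0) i)]
        apply Finset.sum_congr rfl
        intro i _
        simp only [Pi.smul_apply, smul_eq_mul]
        split_ifs <;> ring
      simp only [Pi.smul_apply, Pi.sub_apply, smul_eq_mul]
      rw [hsum]
      rcases lt_trichotomy ((s:ℕ)) j with h | h | h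
      · rw [if_neg (by omega), if_pos (Finset.mem_range.mpr h), ext_coe]
        ring
      · rw [if_pos h, if_neg (by simp; omega)]
        have : s = ⟨j, hjn⟩ := Fin.ext (by simpa using h)
        rw [this, diag α β T hTe j hjn]
        rw [sub_zero]
        field_simp
      · rw [if_neg (by omega), if_neg (by simp; omega)]
        rw [supp α β T hTe j s h, sub_zero, mul_zero]
    rw [key]
    apply Submodule.smul_mem
    apply Submodule.sub_mem
    · exact Submodule.subset_span ⟨⟨j, hjk⟩, rfl⟩
    · apply Submodule.sum_mem
      intro i hi
      simp only [Finset.mem_range] at hi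
      exact Submodule.smul_mem _ _ (IH i hi (by omega))

include hTe hα hβ hkn in
lemma support_mem (v : Fin (n+1) → ℝ) (hv : ∀ i : Fin (n+1), k ≤ (i:ℕ) → v i = 0) :
    v ∈ Submodule.span ℝ (Set.range fun i : Fin k => fun s : Fin (n+1) => (T^(i:ℕ)) s 0) := by
  have key : v = ∑ j ∈ Finset.range k, ext v j •
      (fun s : Fin (n+1) => if (s:ℕ) = j then (1:ℝ) else 0) := by
    funext s
    rw [Finset.sum_apply]
    have : ∀ j ∈ Finset.range k, (ext v j • (fun s : Fin (n+1) => if (s:ℕ) = j then (1:ℝ) else 0)) s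
        = if (s:ℕ) = j then ext v j else 0 := by
      intro j _
      simp only [Pi.smul_apply, smul_eq_mul]
      split_ifs <;> ring
    rw [Finset.sum_congr rfl this,
      Finset.sum_ite_eq (Finset.range k) ((s:ℕ)) (fun j => ext v j)]
    by_cases h : (s:ℕ) < k
    · rw [if_pos (Finset.mem_range.mpr h), ext_coe]
    · rw [if_neg (by simp; omega), hv s (by omega)]
  rw [key]
  exact Submodule.sum_mem _ (fun j hj => Submodule.smul_mem _ _
    (unit_mem k α β T hTe hα hβ hkn j (Finset.mem_range.mp hj)))

end T3
noncomputable def Gv (k : ℕ) (α β : ℕ → ℝ) (S : ℝ) : ℕ → ℝ × ℝ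
  | 0 => (0, 0)
  | (m+1) =>
    ((rho k α β S (k-m) - (α (k-m)^2 + β (k-m-1)^2) * (Gv k α β S m).1
        - α (k-m) * β (k-m) * (Gv k α β S m).2) / (α (k-m-1) * β (k-m-1)),
      (Gv k α β S m).1)

noncomputable def vnat (k : ℕ) (α β : ℕ → ℝ) (S : ℝ) : ℕ → ℝ := fun j =>
  if j < k then (Gv k α β S (k-j)).1 else 0

lemma Gv_fst' (k : ℕ) (α β : ℕ → ℝ) (S : ℝ) (hk : 1 ≤ k) :
    ∀ m, m ≤ k → (Gv k α β S m).1 = vnat k α β S (k-m) := by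
  intro m hm
  match m with
  | 0 => rw [vnat]; simp [Gv]
  | (m+1) =>
    rw [vnat, if_pos (by omega)]
    have : k - (k - (m+1)) = m+1 := by omega
    rw [this]

lemma Gv_snd (k : ℕ) (α β : ℕ → ℝ) (S : ℝ) (hk : 1 ≤ k) :
    ∀ m, m ≤ k → (Gv k α β S m).2 = vnat k α β S (k-m+1) := by
  intro m
  induction m with
  | zero =>
    intro _
    rw [vnat, if_neg (by omega)]
    simp [Gv]
  | succ m ih =>
    intro hm
    show (Gv k α β S (m+1)).2 = _
    have h1 : (Gv k α β S (m+1)).2 = (Gv k α β S m).1 := by rw [Gv]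
    rw [h1, Gv_fst' k α β S hk m (by omega)]
    congr 1
    omega

section T4
variable {n : ℕ} (k : ℕ) (α β : ℕ → ℝ) (S : ℝ) (T : Matrix (Fin (n+1)) (Fin (n+1)) ℝ)
    (hTe : ∀ i j : Fin (n+1), T i j =
      if (i:ℕ) = (j:ℕ) then α i ^ 2 + (if (i:ℕ) = 0 then 0 else β ((i:ℕ)-1) ^ 2)
      else if (i:ℕ) = (j:ℕ) + 1 then α j * β j
      else if (j:ℕ) = (i:ℕ) + 1 then α i * β i else 0)
    (hk : 1 ≤ k) (hkn : k ≤ n)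
    (hα : ∀ i, i < n + 1 → 0 < α i) (hβ : ∀ i, i < n → 0 < β i)

include hTe hk hkn hα hβ in
lemma row_ge_one : ∀ j : Fin (n+1), 1 ≤ (j:ℕ) →
    T.mulVec (fun s : Fin (n+1) => vnat k α β S (s:ℕ)) j = rho k α β S (j:ℕ) := by
  intro j hj1
  have hvtop : vnat k α β S (n+1) = 0 := by rw [vnat, if_neg (by omega)]
  rw [tri_mulVec α β T hTe _ hvtop j]
  rw [if_neg (by omega), if_neg (by omega)]
  by_cases hjk : (j:ℕ) ≤ k
  · have hv1 : vnat k α β S ((j:ℕ)-1) = (Gv k α β S ((k - (j:ℕ))+1)).1 := by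
      rw [vnat, if_pos (by omega)]
      rw [show k - ((j:ℕ)-1) = k - (j:ℕ) + 1 from by omega]
    have e1 : k - (k - (j:ℕ)) = (j:ℕ) := by omega
    have e2 : k - (k - (j:ℕ)) - 1 = (j:ℕ) - 1 := by omega
    have hGv1 : (Gv k α β S (k - (j:ℕ))).1 = vnat k α β S (j:ℕ) := by
      rw [Gv_fst' k α β S hk (k - (j:ℕ)) (by omega), e1]
    have hGv2 : (Gv k α β S (k - (j:ℕ))).2 = vnat k α β S ((j:ℕ)+1) := by
      rw [Gv_snd k α β S hk (k - (j:ℕ)) (by omega), e1]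
    rw [hv1]
    show α ((j:ℕ)-1) * β ((j:ℕ)-1) * (Gv k α β S ((k - (j:ℕ))+1)).1 + _ + _ = _
    have hunf : (Gv k α β S ((k - (j:ℕ))+1)).1 =
        (rho k α β S (j:ℕ) - (α (j:ℕ)^2 + β ((j:ℕ)-1)^2) * vnat k α β S (j:ℕ)
          - α (j:ℕ) * β (j:ℕ) * vnat k α β S ((j:ℕ)+1)) / (α ((j:ℕ)-1) * β ((j:ℕ)-1)) := by
      rw [Gv]
      rw [hGv1, hGv2, e1]
    rw [hunf]
    have ha : α ((j:ℕ)-1) ≠ 0 := ne_of_gt (hα _ (by omega))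
    have hb : β ((j:ℕ)-1) ≠ 0 := ne_of_gt (hβ _ (by omega))
    field_simp
    ring
  · have z : ∀ s : ℕ, k ≤ s → vnat k α β S s = 0 := by
      intro s hs; rw [vnat, if_neg (by omega)]
    rw [z ((j:ℕ)-1) (by omega), z (j:ℕ) (by omega), z ((j:ℕ)+1) (by omega),
      rho, if_neg (by omega)]
    ring

include hTe hk hkn hα hβ in
lemma Tv_full (hTsym : Tᵀ = T)
    (hS : S = ∑ j ∈ Finset.range (k+1), ∏ ℓ ∈ Finset.range j, α ℓ ^ 2 / β ℓ ^ 2)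
    (hS0 : S ≠ 0) :
    T.mulVec (fun s : Fin (n+1) => vnat k α β S (s:ℕ))
      = (fun s : Fin (n+1) => rho k α β S (s:ℕ))
        - (fun s : Fin (n+1) => if (s:ℕ) = 0 then (1:ℝ) else 0) := by
  set r : Fin (n+1) → ℝ := fun s => rho k α β S (s:ℕ) with hr
  set v : Fin (n+1) → ℝ := fun s => vnat k α β S (s:ℕ) with hv
  set e0 : Fin (n+1) → ℝ := fun s => if (s:ℕ) = 0 then (1:ℝ) else 0 with he0
  have hswap : ∀ (u w : Fin (n+1) → ℝ), u ⬝ᵥ (T.mulVec w) = (T.mulVec u) ⬝ᵥ w := by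
    intro u w
    rw [Matrix.dotProduct_mulVec, ← Matrix.mulVec_transpose, hTsym]
  have hrho0 : rho k α β S 0 = 1 / S := by
    rw [rho, if_pos (by omega)]
    simp
  have hrr : r ⬝ᵥ r = 1 / S := by
    rw [hr, dotProduct, ← rho_sq_sum k α β S hkn hS hS0]
    exact Finset.sum_congr rfl (fun j _ => (pow_two _).symm)
  have hre0 : r ⬝ᵥ e0 = 1 / S := by
    rw [dotProduct]
    have : ∀ s : Fin (n+1), r s * e0 s = if s = (0 : Fin (n+1)) then r 0 else 0 := by
      intro s
      by_cases h : s = (0 : Fin (n+1))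
      · rw [if_pos h, h, he0]
        simp
      · rw [if_neg h, he0]
        simp only []
        rw [if_neg (by rw [Fin.ext_iff] at h; simpa using h)]
        ring
    rw [Finset.sum_congr rfl (fun s _ => this s),
      Finset.sum_ite_eq' Finset.univ (0 : Fin (n+1)) (fun _ => r 0)]
    rw [if_pos (Finset.mem_univ _), hr]
    simpa using hrho0
  have hrTv : r ⬝ᵥ (T.mulVec v) = 0 := by
    rw [hswap, dotProduct]
    apply Finset.sum_eq_zero
    intro j _
    by_cases h : (j:ℕ) < k
    · rw [Tr_zero k α β S T hTe hk hkn hβ j h]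
      ring
    · rw [hv]
      simp only []
      rw [vnat, if_neg h]
      ring
  have hu : T.mulVec v - (r - e0) = ((T.mulVec v - (r - e0)) (0 : Fin (n+1))) • e0 := by
    funext j
    by_cases h : (j:ℕ) = 0
    · have : j = (0 : Fin (n+1)) := Fin.ext (by simpa using h)
      rw [this]
      simp only [Pi.smul_apply, he0, smul_eq_mul]
      rw [if_pos (by simp)]
      ring
    · have hrow := row_ge_one k α β S T hTe hk hkn hα hβ j (by omega)
      simp only [Pi.sub_apply, Pi.smul_apply, smul_eq_mul, he0, hr, hv]
      rw [if_neg h, hrow]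
      ring
  have hdot : r ⬝ᵥ (T.mulVec v - (r - e0)) = 0 := by
    have expand : r ⬝ᵥ (T.mulVec v - (r - e0))
        = r ⬝ᵥ (T.mulVec v) - (r ⬝ᵥ r - r ⬝ᵥ e0) := by
      rw [dotProduct_sub, dotProduct_sub]
    rw [expand, hrTv, hrr, hre0]
    ring
  rw [hu] at hdot
  rw [dotProduct_smul, hre0, smul_eq_mul] at hdot
  have hc0 : (T.mulVec v - (r - e0)) (0 : Fin (n+1)) = 0 := by
    rcases mul_eq_zero.mp hdot with h | h
    · exact h
    · exact absurd h (one_div_ne_zero hS0)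
  have := hu
  rw [hc0, zero_smul] at this
  exact sub_eq_zero.mp this

end T4
lemma sum_dotProduct' {ι κ : Type*} [Fintype κ] {R : Type*} [NonUnitalNonAssocSemiring R]
    (s : Finset ι) (f : ι → κ → R) (w : κ → R) :
    (∑ i ∈ s, f i) ⬝ᵥ w = ∑ i ∈ s, (f i ⬝ᵥ w) := by
  simp only [dotProduct, Finset.sum_apply, Finset.sum_mul]
  exact Finset.sum_comm

lemma dotProduct_sum' {ι κ : Type*} [Fintype κ] {R : Type*} [NonUnitalNonAssocSemiring R]
    (s : Finset ι) (w : κ → R) (f : ι → κ → R) :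
    w ⬝ᵥ (∑ i ∈ s, f i) = ∑ i ∈ s, (w ⬝ᵥ f i) := by
  simp only [dotProduct, Finset.sum_apply, Finset.mul_sum]
  exact Finset.sum_comm

lemma complex_norm {N n : ℕ} (W : Matrix (Fin N) (Fin N) ℂ) (hWh : Wᴴ = W)
    (b : Fin N → ℂ) (T : Matrix (Fin (n+1)) (Fin (n+1)) ℝ) (hTsym : Tᵀ = T)
    (hmom : ∀ m : ℕ, ((T ^ m) 0 0 : ℂ) = star b ⬝ᵥ (W ^ m).mulVec b)
    (M : ℕ) (d : ℕ → ℂ) :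
    ∑ j, ‖(∑ m ∈ Finset.range M, d m • (W^m).mulVec b) j‖^2
    = (∑ m ∈ Finset.range M, (d m).re • (fun s : Fin (n+1) => (T^m) s 0)) ⬝ᵥ
        (∑ m ∈ Finset.range M, (d m).re • (fun s : Fin (n+1) => (T^m) s 0))
      + (∑ m ∈ Finset.range M, (d m).im • (fun s : Fin (n+1) => (T^m) s 0)) ⬝ᵥ
        (∑ m ∈ Finset.range M, (d m).im • (fun s : Fin (n+1) => (T^m) s 0)) := by
  set x : Fin N → ℂ := ∑ m ∈ Finset.range M, d m • (W^m).mulVec b with hxdef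
  have hphi : ∀ m m' : ℕ, ((T^(m+m')) 0 0 : ℝ)
      = (fun s : Fin (n+1) => (T^m) s 0) ⬝ᵥ (fun s : Fin (n+1) => (T^(m')) s 0) := by
    intro m m'
    rw [pow_add, Matrix.mul_apply, dotProduct]
    apply Finset.sum_congr rfl
    intro s _
    have : (T^m) 0 s = (T^m) s 0 := by
      conv_lhs => rw [← hTsym, ← Matrix.transpose_pow, Matrix.transpose_apply]
    rw [this]
  have hinner : ∀ m m' : ℕ, star ((W^m).mulVec b) ⬝ᵥ ((W^(m')).mulVec b)
      = (((T^(m+m')) 0 0 : ℝ) : ℂ) := by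
    intro m m'
    rw [Matrix.star_mulVec, ← Matrix.dotProduct_mulVec, Matrix.mulVec_mulVec,
      Matrix.conjTranspose_pow, hWh, ← pow_add]
    exact (hmom (m+m')).symm
  have hx : star x ⬝ᵥ x = ∑ m ∈ Finset.range M, ∑ m' ∈ Finset.range M,
      (starRingEnd ℂ) (d m) * d m' * (((T^(m+m')) 0 0 : ℝ) : ℂ) := by
    rw [hxdef, star_sum]
    rw [sum_dotProduct']
    apply Finset.sum_congr rfl
    intro m _
    rw [star_smul, smul_dotProduct, dotProduct_sum', Finset.smul_sum]
    apply Finset.sum_congr rfl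
    intro m' _
    rw [dotProduct_smul, hinner m m']
    simp only [smul_eq_mul, Complex.star_def]
    ring
  have hnorm : (∑ j, ‖x j‖^2 : ℝ) = (star x ⬝ᵥ x).re := by
    rw [dotProduct, Complex.re_sum]
    apply Finset.sum_congr rfl
    intro j _
    rw [Pi.star_apply, Complex.star_def, mul_comm, Complex.mul_conj]
    rw [Complex.ofReal_re, Complex.normSq_eq_norm_sq]
  rw [hnorm, hx, Complex.re_sum]
  have hterm : ∀ m ∈ Finset.range M, (∑ m' ∈ Finset.range M,
      (starRingEnd ℂ) (d m) * d m' * (((T^(m+m')) 0 0 : ℝ) : ℂ)).re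
      = ∑ m' ∈ Finset.range M,
        ((d m).re * (d m').re + (d m).im * (d m').im) * ((T^(m+m')) 0 0 : ℝ) := by
    intro m _
    rw [Complex.re_sum]
    apply Finset.sum_congr rfl
    intro m' _
    rw [Complex.mul_re, Complex.ofReal_re, Complex.ofReal_im, mul_zero, sub_zero,
      Complex.mul_re, Complex.conj_re, Complex.conj_im]
    ring
  rw [Finset.sum_congr rfl hterm]
  have hRHS : ∀ (f : ℕ → ℝ),
      (∑ m ∈ Finset.range M, f m • (fun s : Fin (n+1) => (T^m) s 0)) ⬝ᵥ
        (∑ m ∈ Finset.range M, f m • (fun s : Fin (n+1) => (T^m) s 0))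
      = ∑ m ∈ Finset.range M, ∑ m' ∈ Finset.range M,
          f m * f m' * ((T^(m+m')) 0 0 : ℝ) := by
    intro f
    rw [sum_dotProduct']
    apply Finset.sum_congr rfl
    intro m _
    rw [smul_dotProduct, dotProduct_sum', Finset.smul_sum]
    apply Finset.sum_congr rfl
    intro m' _
    rw [dotProduct_smul, hphi m m']
    simp only [smul_eq_mul]
    ring
  rw [hRHS, hRHS, ← Finset.sum_add_distrib]
  apply Finset.sum_congr rfl
  intro m _
  rw [← Finset.sum_add_distrib]
  apply Finset.sum_congr rfl
  intro m' _
  ring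

lemma phi0 {n : ℕ} (T : Matrix (Fin (n+1)) (Fin (n+1)) ℝ) :
    (fun s : Fin (n+1) => (T^0) s 0) = (fun s : Fin (n+1) => if (s:ℕ) = 0 then (1:ℝ) else 0) := by
  funext s
  rw [pow_zero, Matrix.one_apply]
  by_cases h : s = (0 : Fin (n+1))
  · rw [if_pos h, if_pos (by rw [h]; simp)]
  · rw [if_neg h, if_neg (by rw [Fin.ext_iff] at h; simpa using h)]

section T5
variable {n : ℕ} (k : ℕ) (α β : ℕ → ℝ) (S : ℝ) (T : Matrix (Fin (n+1)) (Fin (n+1)) ℝ)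
    (hTe : ∀ i j : Fin (n+1), T i j =
      if (i:ℕ) = (j:ℕ) then α i ^ 2 + (if (i:ℕ) = 0 then 0 else β ((i:ℕ)-1) ^ 2)
      else if (i:ℕ) = (j:ℕ) + 1 then α j * β j
      else if (j:ℕ) = (i:ℕ) + 1 then α i * β i else 0)
    (hk : 1 ≤ k) (hkn : k ≤ n)
    (hα : ∀ i, i < n + 1 → 0 < α i) (hβ : ∀ i, i < n → 0 < β i)
    (hTsym : Tᵀ = T)
    (hS : S = ∑ j ∈ Finset.range (k+1), ∏ ℓ ∈ Finset.range j, α ℓ ^ 2 / β ℓ ^ 2)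
    (hS0 : S ≠ 0)

include hTe hk hkn hβ hTsym in
lemma r_dot_phi : ∀ m : ℕ, 1 ≤ m → m ≤ k →
    (fun s : Fin (n+1) => rho k α β S (s:ℕ)) ⬝ᵥ (fun s : Fin (n+1) => (T^m) s 0) = 0 := by
  intro m h1 h2
  obtain ⟨m', rfl⟩ : ∃ m', m = m'+1 := ⟨m-1, by omega⟩
  have hphi : (fun s : Fin (n+1) => (T^(m'+1)) s 0)
      = T.mulVec (fun s : Fin (n+1) => ext (fun t : Fin (n+1) => (T^m') t 0) (s:ℕ)) :=
    funext (pow_col_succ T m')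
  rw [hphi, Matrix.dotProduct_mulVec, ← Matrix.mulVec_transpose, hTsym, dotProduct]
  apply Finset.sum_eq_zero
  intro j _
  by_cases h : (j:ℕ) < k
  · rw [Tr_zero k α β S T hTe hk hkn hβ j h]
    ring
  · rw [ext_coe, supp α β T hTe m' j (by omega)]
    ring

include hTe hk hkn hα hβ hTsym hS hS0 in
lemma lb (a : ℕ → ℝ) (ha0 : a 0 = 1) :
    1/S ≤ (∑ m ∈ Finset.range (k+1), a m • (fun s : Fin (n+1) => (T^m) s 0)) ⬝ᵥ
      (∑ m ∈ Finset.range (k+1), a m • (fun s : Fin (n+1) => (T^m) s 0)) := by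
  set r : Fin (n+1) → ℝ := fun s => rho k α β S (s:ℕ) with hr
  set u : Fin (n+1) → ℝ := ∑ m ∈ Finset.range (k+1), a m • (fun s : Fin (n+1) => (T^m) s 0)
    with hu
  have hrr : r ⬝ᵥ r = 1 / S := by
    rw [hr, dotProduct, ← rho_sq_sum k α β S hkn hS hS0]
    exact Finset.sum_congr rfl (fun j _ => (pow_two _).symm)
  have hru : r ⬝ᵥ u = 1 / S := by
    rw [hu, dotProduct_sum']
    have hterm : ∀ m ∈ Finset.range (k+1),
        r ⬝ᵥ (a m • (fun s : Fin (n+1) => (T^m) s 0))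
        = if m = 0 then 1/S else 0 := by
      intro m hm
      simp only [Finset.mem_range] at hm
      rw [dotProduct_smul]
      by_cases h : m = 0
      · rw [if_pos h, h, phi0 T]
        have : r ⬝ᵥ (fun s : Fin (n+1) => if (s:ℕ) = 0 then (1:ℝ) else 0) = r 0 := by
          rw [dotProduct]
          have e : ∀ s : Fin (n+1), r s * (if (s:ℕ) = 0 then (1:ℝ) else 0)
              = if s = (0 : Fin (n+1)) then r 0 else 0 := by
            intro s
            by_cases hs : s = (0 : Fin (n+1))
            · rw [if_pos hs, hs]
              simp
            · rw [if_neg hs, if_neg (by rw [Fin.ext_iff] at hs; simpa using hs)]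
              ring
          rw [Finset.sum_congr rfl (fun s _ => e s),
            Finset.sum_ite_eq' Finset.univ (0 : Fin (n+1)) (fun _ => r 0),
            if_pos (Finset.mem_univ _)]
        rw [this, smul_eq_mul, ha0, one_mul, hr]
        show rho k α β S ((0 : Fin (n+1)):ℕ) = 1/S
        rw [show (((0 : Fin (n+1)):ℕ)) = 0 from rfl, rho, if_pos (by omega)]
        simp
      · rw [if_neg h, r_dot_phi k α β S T hTe hk hkn hβ hTsym m (by omega) (by omega),
          smul_zero]
    rw [Finset.sum_congr rfl hterm, Finset.sum_ite_eq' (Finset.range (k+1)) 0 (fun _ => 1/S),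
      if_pos (by simp)]
  have hsplit : u ⬝ᵥ u = r ⬝ᵥ r + (r ⬝ᵥ (u - r) + ((u - r) ⬝ᵥ r + (u - r) ⬝ᵥ (u - r))) := by
    have : u = r + (u - r) := by ring
    conv_lhs => rw [this]
    rw [add_dotProduct, dotProduct_add, dotProduct_add]
    ring
  have hz : r ⬝ᵥ (u - r) = 0 := by rw [dotProduct_sub, hru, hrr]; ring
  have hz' : (u - r) ⬝ᵥ r = 0 := by rw [dotProduct_comm]; exact hz
  have hnn : 0 ≤ (u - r) ⬝ᵥ (u - r) :=
    Finset.sum_nonneg (fun i _ => mul_self_nonneg _)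
  rw [hsplit, hrr, hz, hz']
  linarith

end T5
lemma phi_succ {n : ℕ} (T : Matrix (Fin (n+1)) (Fin (n+1)) ℝ) (m : ℕ) :
    (fun s : Fin (n+1) => (T^(m+1)) s 0) = T.mulVec (fun s : Fin (n+1) => (T^m) s 0) := by
  have h := funext (pow_col_succ T m)
  rw [h, ext_eq]

lemma resid {N k : ℕ} (W : Matrix (Fin N) (Fin N) ℂ) (b : Fin N → ℂ)
    (c : Fin k → ℂ) (d : ℕ → ℂ) (hd0 : d 0 = 1) (hd : ∀ i : Fin k, d ((i:ℕ)+1) = -(c i)) :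
    b - W.mulVec (∑ i : Fin k, c i • (W^(i:ℕ)).mulVec b)
      = ∑ m ∈ Finset.range (k+1), d m • (W^m).mulVec b := by
  have hWy : W.mulVec (∑ i : Fin k, c i • (W^(i:ℕ)).mulVec b)
      = ∑ i : Fin k, c i • (W^((i:ℕ)+1)).mulVec b := by
    have h := map_sum (Matrix.mulVecLin W) (fun i : Fin k => c i • (W^(i:ℕ)).mulVec b)
      Finset.univ
    simp only [_root_.map_smul, Matrix.mulVecLin_apply] at h
    rw [h]
    apply Finset.sum_congr rfl
    intro i _
    rw [Matrix.mulVec_mulVec, ← pow_succ']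
  rw [hWy, Finset.sum_range_succ']
  have h0 : d 0 • (W^0).mulVec b = b := by
    rw [hd0, pow_zero, Matrix.one_mulVec, one_smul]
  have hsum : ∑ i ∈ Finset.range k, d (i+1) • (W^(i+1)).mulVec b
      = ∑ i : Fin k, -(c i • (W^((i:ℕ)+1)).mulVec b) := by
    rw [← Fin.sum_univ_eq_sum_range (fun i => d (i+1) • (W^(i+1)).mulVec b) k]
    apply Finset.sum_congr rfl
    intro i _
    rw [hd i, neg_smul]
  rw [hsum, h0, Finset.sum_neg_distrib]
  abel

end Stmt13

/-- In the setting of the Lanczos tridiagonalization `T = H Hᵀ` of a Hermitian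
positive definite pair `(W, b)`, the residual `r_k = b - W x_k` of the `k`-th MINRES
iterate (the minimizer of `‖b - W y‖₂` over the Krylov subspace `K_k`) satisfies
`‖r_k‖₂ = (∑_{j=0}^{k} ∏_{ℓ<j} α ℓ ^ 2 / β ℓ ^ 2)^{-1/2}`. -/
theorem stmt_13 (N n k : ℕ) (hk : 1 ≤ k) (hkn : k < n + 1) (hn : n + 1 ≤ N)
    (W : Matrix (Fin N) (Fin N) ℂ) (hW : W.PosDef)
    (b : Fin N → ℂ) (hb : ∑ j, ‖b j‖ ^ 2 = 1)
    (α β : ℕ → ℝ) (hα : ∀ i, i < n + 1 → 0 < α i) (hβ : ∀ i, i < n → 0 < β i)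
    (H : Matrix (Fin (n + 1)) (Fin (n + 1)) ℝ)
    (hH : ∀ i j : Fin (n + 1), H i j =
      if (i : ℕ) = (j : ℕ) then α i
      else if (i : ℕ) = (j : ℕ) + 1 then β j else 0)
    (T : Matrix (Fin (n + 1)) (Fin (n + 1)) ℝ) (hT : T = H * Hᵀ)
    (hmom : ∀ m : ℕ, ((T ^ m) 0 0 : ℂ) = star b ⬝ᵥ (W ^ m).mulVec b)
    (xk : Fin N → ℂ)
    (hxk : xk ∈ Submodule.span ℂ (Set.range fun i : Fin k => (W ^ (i : ℕ)).mulVec b))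
    (hmin : ∀ y ∈ Submodule.span ℂ (Set.range fun i : Fin k => (W ^ (i : ℕ)).mulVec b),
      ∑ j, ‖(b - W.mulVec xk) j‖ ^ 2 ≤ ∑ j, ‖(b - W.mulVec y) j‖ ^ 2) :
    Real.sqrt (∑ j, ‖(b - W.mulVec xk) j‖ ^ 2) =
      1 / Real.sqrt (∑ j ∈ Finset.range (k + 1),
        ∏ ℓ ∈ Finset.range j, α ℓ ^ 2 / β ℓ ^ 2) := by
  have hkn' : k ≤ n := by omega
  have hTe := Stmt13.entry α β H T hH hT
  have hTsym : Tᵀ = T := by rw [hT, Matrix.transpose_mul, Matrix.transpose_transpose]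
  have hWh : Wᴴ = W := hW.1
  set S : ℝ := ∑ j ∈ Finset.range (k + 1), ∏ ℓ ∈ Finset.range j, α ℓ ^ 2 / β ℓ ^ 2
    with hSdef
  have hSpos : 0 < S := by
    rw [hSdef]
    apply Finset.sum_pos
    · intro j hj
      simp only [Finset.mem_range] at hj
      apply Finset.prod_pos
      intro ℓ hℓ
      simp only [Finset.mem_range] at hℓ
      exact div_pos (pow_pos (hα ℓ (by omega)) 2) (pow_pos (hβ ℓ (by omega)) 2)
    · exact ⟨0, Finset.mem_range.mpr (by omega)⟩
  have hS0 : S ≠ 0 := ne_of_gt hSpos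
  set r : Fin (n+1) → ℝ := fun s => Stmt13.rho k α β S (s:ℕ) with hr
  have hrr : r ⬝ᵥ r = 1 / S := by
    rw [hr, dotProduct, ← Stmt13.rho_sq_sum k α β S hkn' hSdef hS0]
    exact Finset.sum_congr rfl (fun j _ => (pow_two _).symm)
  -- lower bound
  have lower : ∀ y ∈ Submodule.span ℂ (Set.range fun i : Fin k => (W ^ (i : ℕ)).mulVec b),
      1/S ≤ ∑ j, ‖(b - W.mulVec y) j‖^2 := by
    intro y hy
    obtain ⟨c, hc⟩ := (Submodule.mem_span_range_iff_exists_fun ℂ).mp hy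
    set d : ℕ → ℂ := fun m => if m = 0 then 1 else if h : m - 1 < k then -(c ⟨m-1, h⟩) else 0
      with hd
    have hd0 : d 0 = 1 := by rw [hd]; norm_num
    have hdi : ∀ i : Fin k, d ((i:ℕ)+1) = -(c i) := by
      intro i
      rw [hd]
      simp only []
      rw [if_neg (by omega), dif_pos (by omega : (i:ℕ)+1-1 < k)]
      congr 2
    have hres : b - W.mulVec y = ∑ m ∈ Finset.range (k+1), d m • (W^m).mulVec b := by
      rw [← hc]
      exact Stmt13.resid W b c d hd0 hdi
    rw [hres, Stmt13.complex_norm W hWh b T hTsym hmom (k+1) d]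
    have hre : (fun m => (d m).re) 0 = 1 := by show (d 0).re = 1; rw [hd0]; simp
    have h1 := Stmt13.lb k α β S T hTe hk hkn' hα hβ hTsym hSdef hS0 (fun m => (d m).re) hre
    have h2 : (0:ℝ) ≤ (∑ m ∈ Finset.range (k+1), (d m).im • (fun s : Fin (n+1) => (T^m) s 0)) ⬝ᵥ
        (∑ m ∈ Finset.range (k+1), (d m).im • (fun s : Fin (n+1) => (T^m) s 0)) :=
      Finset.sum_nonneg (fun i _ => mul_self_nonneg _)
    linarith
  -- upper bound: candidate y0
  have hvmem := Stmt13.support_mem k α β T hTe hα hβ hkn'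
    (fun s : Fin (n+1) => Stmt13.vnat k α β S (s:ℕ))
    (fun i hi => by
      show Stmt13.vnat k α β S (i:ℕ) = 0
      rw [Stmt13.vnat, if_neg (by omega)])
  obtain ⟨cr, hcr⟩ := (Submodule.mem_span_range_iff_exists_fun ℝ).mp hvmem
  set y0 : Fin N → ℂ := ∑ i : Fin k, (-((cr i : ℝ) : ℂ)) • (W^(i:ℕ)).mulVec b with hy0
  have hy0mem : y0 ∈ Submodule.span ℂ (Set.range fun i : Fin k => (W ^ (i : ℕ)).mulVec b) := by
    rw [hy0]
    exact Submodule.sum_mem _ (fun i _ => Submodule.smul_mem _ _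
      (Submodule.subset_span ⟨i, rfl⟩))
  set d2 : ℕ → ℂ := fun m => if m = 0 then 1 else if h : m - 1 < k then ((cr ⟨m-1, h⟩ : ℝ) : ℂ) else 0
    with hd2
  have hd20 : d2 0 = 1 := by rw [hd2]; norm_num
  have hd2i : ∀ i : Fin k, d2 ((i:ℕ)+1) = -(-((cr i : ℝ) : ℂ)) := by
    intro i
    rw [hd2]
    simp only []
    rw [if_neg (by omega), dif_pos (by omega : (i:ℕ)+1-1 < k), neg_neg]
    congr 2
  have hres2 : b - W.mulVec y0 = ∑ m ∈ Finset.range (k+1), d2 m • (W^m).mulVec b := by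
    rw [hy0]
    exact Stmt13.resid W b (fun i => -((cr i : ℝ) : ℂ)) d2 hd20 hd2i
  have hIm : ∀ m, (d2 m).im = 0 := by
    intro m
    rw [hd2]
    simp only []
    split_ifs <;> simp
  have hI0 : (∑ m ∈ Finset.range (k+1), (d2 m).im • (fun s : Fin (n+1) => (T^m) s 0))
      = (0 : Fin (n+1) → ℝ) :=
    Finset.sum_eq_zero (fun m _ => by rw [hIm m, zero_smul])
  have hU : (∑ m ∈ Finset.range (k+1), (d2 m).re • (fun s : Fin (n+1) => (T^m) s 0)) = r := by
    rw [Finset.sum_range_succ']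
    have hstep : ∑ i ∈ Finset.range k, (d2 (i+1)).re • (fun s : Fin (n+1) => (T^(i+1)) s 0)
        = T.mulVec (fun s : Fin (n+1) => Stmt13.vnat k α β S (s:ℕ)) := by
      rw [← Fin.sum_univ_eq_sum_range
        (fun i => (d2 (i+1)).re • (fun s : Fin (n+1) => (T^(i+1)) s 0)) k]
      have hterm : ∀ i : Fin k, (d2 ((i:ℕ)+1)).re • (fun s : Fin (n+1) => (T^((i:ℕ)+1)) s 0)
          = cr i • T.mulVec (fun s : Fin (n+1) => (T^(i:ℕ)) s 0) := by
        intro i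
        rw [hd2i i, Stmt13.phi_succ T (i:ℕ)]
        simp
      rw [Finset.sum_congr rfl (fun i _ => hterm i)]
      have h := map_sum (Matrix.mulVecLin T)
        (fun i : Fin k => cr i • (fun s : Fin (n+1) => (T^(i:ℕ)) s 0)) Finset.univ
      simp only [_root_.map_smul, Matrix.mulVecLin_apply] at h
      rw [← h, hcr]
    rw [hstep, Stmt13.Tv_full k α β S T hTe hk hkn' hα hβ hTsym hSdef hS0]
    have h00 : (d2 0).re = 1 := by rw [hd20]; simp
    rw [h00, one_smul, Stmt13.phi0 T, hr]
    funext s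
    simp only [Pi.add_apply, Pi.sub_apply]
    ring
  have hupper : ∑ j, ‖(b - W.mulVec y0) j‖^2 = 1/S := by
    rw [hres2, Stmt13.complex_norm W hWh b T hTsym hmom (k+1) d2, hU, hI0,
      zero_dotProduct, add_zero, hrr]
  have hhigh : ∑ j, ‖(b - W.mulVec xk) j‖^2 ≤ 1/S := hupper ▸ hmin y0 hy0mem
  have hfx : ∑ j, ‖(b - W.mulVec xk) j‖^2 = 1/S := le_antisymm hhigh (lower xk hxk)
  rw [hfx, one_div, Real.sqrt_inv, one_div]
end
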